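/- arXiv:0706.2910 — 3 statements merged into one kernel-verified Lean document; each statement's English description precedes it below -/
import Mathlib

section
/- If J, K ⊆ S are conjugate subsets (σ⁻¹Jσ = K for some σ ∈ D_n), then the compositions κ and ν corresponding under the natural correspondence to J^c and K^c respectively have the same components: the components of κ can be reordered to give the components of ν. -/
/-- The Coxeter generators of type `D` as permutations of `ℤ`: `genD 0` is
`s_{1'} = (-2,1)(-1,2)` and, for `i ≥ 1`, `genD i` is `s_i = (-i-1,-i)(i,i+1)`. -/
def genD (i : ℕ) : Equiv.Perm ℤ :=
  if i = 0 then Equiv.swap (-2 : ℤ) 1 * Equiv.swap (-1 : ℤ) 2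
  else Equiv.swap (-(i : ℤ) - 1) (-(i : ℤ)) * Equiv.swap (i : ℤ) ((i : ℤ) + 1)

/-- The Coxeter generating set `S = {s_{1'}, s_1, …, s_{n-1}}` of `D_n`. -/
def genSetD (n : ℕ) : Set (Equiv.Perm ℤ) := {g | ∃ i < n, g = genD i}

/-- Membership in `D_n`, realized as the permutations `σ` of `ℤ` fixing everything
outside `{-n,…,-1,1,…,n}`, satisfying `σ(-i) = -σ(i)` for all `i`, and having an
even number of `i ∈ {1,…,n}` with `σ i < 0`. -/
def IsDn (n : ℕ) (σ : Equiv.Perm ℤ) : Prop :=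
  (∀ i : ℤ, σ (-i) = -σ i) ∧ (∀ i : ℤ, (n : ℤ) < |i| → σ i = i) ∧
    Even (((Finset.Icc (1 : ℤ) (n : ℤ)).filter fun i => σ i < 0).card)

/-- `J` and `K` are conjugate subsets of `S`: `σ⁻¹ J σ = K` for some `σ ∈ D_n`. -/
def ConjugateIn (n : ℕ) (J K : Set (Equiv.Perm ℤ)) : Prop :=
  ∃ σ : Equiv.Perm ℤ, IsDn n σ ∧ (fun s => σ⁻¹ * s * σ) '' J = K

/-- Tags for the four classes making up the multiset `C(n)`:
`C_{<n}`, `C_1`, `C_n` and `C_n'`. -/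
inductive CTag | lt | one | cn | cn'
  deriving DecidableEq

/-- An element of the multiset `C(n)`: a composition (list of positive integers)
together with the tag of the class it lies in, subject to the defining conditions
of that class. -/
structure CompD (n : ℕ) where
  tag : CTag
  parts : List ℕ
  pos : ∀ x ∈ parts, 0 < x
  valid : match tag with
    | CTag.lt => parts.sum + 2 ≤ n
    | CTag.one => parts.sum = n ∧ parts.headI = 1
    | CTag.cn => parts.sum = n ∧ 2 ≤ parts.headI
    | CTag.cn' => parts.sum = n ∧ 2 ≤ parts.headI

/-- The natural correspondence sending `κ ∈ C(n)` to a subset of `S`. -/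
def corrD (n : ℕ) (c : CompD n) : Set (Equiv.Perm ℤ) :=
  match c.tag with
  | CTag.lt => {g | ∃ j < c.parts.length, g = genD (n - c.parts.sum + (c.parts.take j).sum)}
  | CTag.one => {genD 0} ∪ {g | ∃ j, 1 ≤ j ∧ j < c.parts.length ∧ g = genD ((c.parts.take j).sum)}
  | CTag.cn => {genD 0} ∪ {g | ∃ j, 1 ≤ j ∧ j < c.parts.length ∧ g = genD ((c.parts.take j).sum)}
  | CTag.cn' => {genD 1} ∪ {g | ∃ j, 1 ≤ j ∧ j < c.parts.length ∧ g = genD ((c.parts.take j).sum)}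

/-- The equivalence `κ ≈ ν` on `C(n)`: the components of `κ` are a reordering of
those of `ν`, except that this fails when all components are even and one of
`κ, ν` lies in `C_n` while the other lies in `C_n'`. -/
def approxD {n : ℕ} (c d : CompD n) : Prop :=
  c.parts.Perm d.parts ∧
    ¬ ((∀ x ∈ c.parts, Even x) ∧
      ((c.tag = CTag.cn ∧ d.tag = CTag.cn') ∨ (c.tag = CTag.cn' ∧ d.tag = CTag.cn)))

namespace StmtAux
open Finset
attribute [local instance] Classical.propDecidable

def ff (i : ℕ) : ℕ := max i 1

lemma ff_pos (i : ℕ) : 1 ≤ ff i := le_max_right _ _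
lemma ff_zero : ff 0 = 1 := rfl
lemma ff_of_pos {i : ℕ} (h : 1 ≤ i) : ff i = i := max_eq_left h

def SDs (i : ℕ) : Set ℤ := {x | genD i x ≠ x}

lemma genD_fix {i : ℕ} {x : ℤ} (h1 : x ≠ (ff i : ℤ)) (h2 : x ≠ (ff i : ℤ) + 1)
    (h3 : x ≠ -(ff i : ℤ)) (h4 : x ≠ -(ff i : ℤ) - 1) : genD i x = x := by
  rcases Nat.eq_zero_or_pos i with h | h
  · subst h
    have hg : genD 0 = Equiv.swap (-2 : ℤ) 1 * Equiv.swap (-1 : ℤ) 2 := by simp [genD]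
    rw [hg, Equiv.Perm.mul_apply]
    rw [ff_zero] at h1 h2 h3 h4
    push_cast at h1 h2 h3 h4
    rw [Equiv.swap_apply_of_ne_of_ne (a := (-1:ℤ)) (b := (2:ℤ)) (by omega) (by omega),
      Equiv.swap_apply_of_ne_of_ne (by omega) (by omega)]
  · have hne : i ≠ 0 := by omega
    have hg : genD i = Equiv.swap (-(i : ℤ) - 1) (-(i : ℤ)) * Equiv.swap (i : ℤ) ((i : ℤ) + 1) := by
      simp [genD, hne]
    rw [ff_of_pos h] at h1 h2 h3 h4
    rw [hg, Equiv.Perm.mul_apply,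
      Equiv.swap_apply_of_ne_of_ne (a := ((i:ℕ):ℤ)) (b := ((i:ℕ):ℤ)+1) h1 h2,
      Equiv.swap_apply_of_ne_of_ne h4 h3]

lemma genD_move (i : ℕ) :
    genD i (ff i : ℤ) ≠ (ff i : ℤ) ∧ genD i ((ff i : ℤ) + 1) ≠ (ff i : ℤ) + 1 ∧
    genD i (-(ff i : ℤ)) ≠ -(ff i : ℤ) ∧ genD i (-(ff i : ℤ) - 1) ≠ -(ff i : ℤ) - 1 := by
  rcases Nat.eq_zero_or_pos i with h | h
  · subst h
    refine ⟨?_, ?_, ?_, ?_⟩ <;> · show (Equiv.swap (-2 : ℤ) 1 * Equiv.swap (-1 : ℤ) 2) _ ≠ _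
                                  decide
  · have hne : i ≠ 0 := by omega
    have hg : genD i = Equiv.swap (-(i : ℤ) - 1) (-(i : ℤ)) * Equiv.swap (i : ℤ) ((i : ℤ) + 1) := by
      simp [genD, hne]
    have hc : (1:ℤ) ≤ (i:ℤ) := by exact_mod_cast h
    rw [ff_of_pos h, hg]
    refine ⟨?_, ?_, ?_, ?_⟩ <;> rw [Equiv.Perm.mul_apply]
    · rw [Equiv.swap_apply_left, Equiv.swap_apply_of_ne_of_ne (by omega) (by omega)]; omega
    · rw [Equiv.swap_apply_right, Equiv.swap_apply_of_ne_of_ne (by omega) (by omega)]; omega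
    · rw [Equiv.swap_apply_of_ne_of_ne (a := ((i:ℕ):ℤ)) (b := ((i:ℕ):ℤ)+1) (by omega) (by omega),
        Equiv.swap_apply_right]; omega
    · rw [Equiv.swap_apply_of_ne_of_ne (a := ((i:ℕ):ℤ)) (b := ((i:ℕ):ℤ)+1) (by omega) (by omega),
        Equiv.swap_apply_left]; omega

lemma SDs_eq (i : ℕ) :
    SDs i = {(ff i : ℤ), (ff i : ℤ) + 1, -(ff i : ℤ), -(ff i : ℤ) - 1} := by
  obtain ⟨m1, m2, m3, m4⟩ := genD_move i
  have hc : (1:ℤ) ≤ (ff i : ℤ) := by exact_mod_cast ff_pos i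
  ext x
  simp only [SDs, Set.mem_setOf_eq, Set.mem_insert_iff, Set.mem_singleton_iff]
  constructor
  · intro hx
    by_contra hmem
    push_neg at hmem
    obtain ⟨h1, h2, h3, h4⟩ := hmem
    exact hx (genD_fix h1 h2 h3 h4)
  · rintro (rfl | rfl | rfl | rfl)
    · exact m1
    · exact m2
    · exact m3
    · exact m4


lemma mem_SDs_pos {i : ℕ} {x : ℤ} (hx : x ∈ SDs i) (hpos : 0 < x) :
    x = (ff i : ℤ) ∨ x = (ff i : ℤ) + 1 := by
  rw [SDs_eq] at hx
  have := ff_pos i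
  have : (1:ℤ) ≤ (ff i : ℤ) := by exact_mod_cast this
  rcases hx with rfl | rfl | rfl | rfl <;> omega

lemma SDs_eq_iff {i j : ℕ} : SDs i = SDs j ↔ ff i = ff j := by
  have hi : (1:ℤ) ≤ (ff i : ℤ) := by exact_mod_cast ff_pos i
  have hj : (1:ℤ) ≤ (ff j : ℤ) := by exact_mod_cast ff_pos j
  constructor
  · intro h
    have h1 : ((ff i : ℤ)) ∈ SDs j := by rw [← h, SDs_eq]; left; rfl
    have h2 : ((ff j : ℤ)) ∈ SDs i := by rw [h, SDs_eq]; left; rfl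
    have c1 := mem_SDs_pos h1 (by omega)
    have c2 := mem_SDs_pos h2 (by omega)
    have : (ff i : ℤ) = (ff j : ℤ) := by omega
    exact_mod_cast this
  · intro h; rw [SDs_eq, SDs_eq, h]

lemma SDs_inter_iff {i j : ℕ} :
    (SDs i ∩ SDs j).Nonempty ↔ (ff i ≤ ff j + 1 ∧ ff j ≤ ff i + 1) := by
  have hi : (1:ℤ) ≤ (ff i : ℤ) := by exact_mod_cast ff_pos i
  have hj : (1:ℤ) ≤ (ff j : ℤ) := by exact_mod_cast ff_pos j
  constructor
  · rintro ⟨x, hxi, hxj⟩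
    rw [SDs_eq] at hxi hxj
    simp only [Set.mem_insert_iff, Set.mem_singleton_iff] at hxi hxj
    constructor
    · have : (ff i : ℤ) ≤ (ff j : ℤ) + 1 := by rcases hxi with rfl|rfl|rfl|rfl <;> omega
      exact_mod_cast this
    · have : (ff j : ℤ) ≤ (ff i : ℤ) + 1 := by rcases hxj with rfl|rfl|rfl|rfl <;> omega
      exact_mod_cast this
  · rintro ⟨h1, h2⟩
    rcases Nat.lt_trichotomy (ff i) (ff j) with h | h | h
    · exact ⟨(ff j : ℤ), by rw [SDs_eq]; right; left; have : ff j = ff i + 1 := by omega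
                            rw [this]; push_cast; ring, by rw [SDs_eq]; left; rfl⟩
    · exact ⟨(ff i : ℤ), by rw [SDs_eq]; left; rfl, by rw [SDs_eq]; left; rw [h]⟩
    · refine ⟨(ff i : ℤ), by rw [SDs_eq]; left; rfl, ?_⟩
      rw [SDs_eq]; right; left
      have : ff i = ff j + 1 := by omega
      rw [this]; push_cast; ring

lemma ff_eq_cases {i j : ℕ} (h : ff i = ff j) :
    i = j ∨ (i = 0 ∧ j = 1) ∨ (i = 1 ∧ j = 0) := by
  rcases Nat.eq_zero_or_pos i with hi | hi <;> rcases Nat.eq_zero_or_pos j with hj | hj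
  · left; omega
  · subst hi; rw [ff_of_pos hj] at h; simp only [ff] at h; omega
  · subst hj; rw [ff_of_pos hi] at h; simp only [ff] at h; omega
  · rw [ff_of_pos hi, ff_of_pos hj] at h; left; exact h

lemma genD_zero_one : genD 0 (1:ℤ) = -2 := by
  show (Equiv.swap (-2 : ℤ) 1 * Equiv.swap (-1 : ℤ) 2) 1 = -2
  decide

lemma genD_one_one : genD 1 (1:ℤ) = 2 := by
  have : genD 1 = Equiv.swap (-(1 : ℤ) - 1) (-(1 : ℤ)) * Equiv.swap (1 : ℤ) ((1 : ℤ) + 1) := by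
    simp [genD]
  rw [this]; decide

lemma genD_ff_eq {i j : ℕ} (h : genD i = genD j) : ff i = ff j :=
  SDs_eq_iff.1 (by unfold SDs; rw [h])

lemma genD_injective : Function.Injective genD := by
  intro i j h
  rcases ff_eq_cases (genD_ff_eq h) with h1 | ⟨rfl, rfl⟩ | ⟨rfl, rfl⟩
  · exact h1
  · exfalso
    have : genD 0 (1:ℤ) = genD 1 (1:ℤ) := by rw [h]
    rw [genD_zero_one, genD_one_one] at this; omega
  · exfalso
    have : genD 1 (1:ℤ) = genD 0 (1:ℤ) := by rw [h]
    rw [genD_zero_one, genD_one_one] at this; omega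

def adj (i j : ℕ) : Prop := i ≠ j ∧ ff i ≤ ff j + 1 ∧ ff j ≤ ff i + 1

lemma adj_symm {i j : ℕ} (h : adj i j) : adj j i := ⟨h.1.symm, h.2.2, h.2.1⟩

def step (A : Finset ℕ) (u v : ℕ) : Prop := v ∈ A ∧ adj u v
def conn (A : Finset ℕ) (x y : ℕ) : Prop := Relation.ReflTransGen (step A) x y

lemma conn_mem {A : Finset ℕ} {x y : ℕ} (hx : x ∈ A) (h : conn A x y) : y ∈ A := by
  induction h with
  | refl => exact hx
  | tail _ h2 _ => exact h2.1

lemma conn_symm {A : Finset ℕ} {x y : ℕ} (hx : x ∈ A) (h : conn A x y) : conn A y x := by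
  induction h with
  | refl => exact .refl
  | tail h1 h2 ih => exact Relation.ReflTransGen.head ⟨conn_mem hx h1, adj_symm h2.2⟩ ih

lemma conn_trans {A : Finset ℕ} {x y z : ℕ} (h1 : conn A x y) (h2 : conn A y z) :
    conn A x z := Relation.ReflTransGen.trans h1 h2

noncomputable def comp (A : Finset ℕ) (x : ℕ) : Finset ℕ :=
  A.filter (fun y => conn A x y)

lemma mem_comp {A : Finset ℕ} {x y : ℕ} : y ∈ comp A x ↔ y ∈ A ∧ conn A x y := by
  simp [comp, Finset.mem_filter]

lemma comp_subset {A : Finset ℕ} {x : ℕ} : comp A x ⊆ A := Finset.filter_subset _ _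

lemma self_mem_comp {A : Finset ℕ} {x : ℕ} (hx : x ∈ A) : x ∈ comp A x :=
  mem_comp.2 ⟨hx, .refl⟩

noncomputable def comps (A : Finset ℕ) : Finset (Finset ℕ) := A.image (comp A)

def noTwin (C : Finset ℕ) : Prop := ∀ x ∈ C, ∀ y ∈ C, x ≠ y → ff x ≠ ff y

noncomputable def inv (A : Finset ℕ) : Multiset ℕ :=
  ((comps A).filter noTwin).val.map Finset.card

/-- Partition lemma: components from explicit pieces. -/
lemma comp_eq_piece {A : Finset ℕ} {P : Finset (Finset ℕ)}
    (hcover : ∀ x, x ∈ A ↔ ∃ C ∈ P, x ∈ C)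
    (hconn : ∀ C ∈ P, ∀ x ∈ C, ∀ y ∈ C, conn A x y)
    (hsep : ∀ C ∈ P, ∀ D ∈ P, ∀ x ∈ C, ∀ y ∈ D, adj x y → x ∈ D)
    {C : Finset ℕ} (hC : C ∈ P) {x : ℕ} (hx : x ∈ C) : comp A x = C := by
  apply Finset.Subset.antisymm
  · intro y hy
    obtain ⟨hyA, hcxy⟩ := mem_comp.1 hy
    clear hy
    induction hcxy with
    | refl => exact hx
    | tail h1 h2 ih =>
      obtain ⟨hbA, hadj⟩ := h2
      obtain ⟨D, hD, hbD⟩ := (hcover _).1 hbA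
      have hbC := ih (conn_mem ((hcover x).2 ⟨C, hC, hx⟩) h1)
      exact hsep D hD C hC _ hbD _ hbC (adj_symm hadj)
  · intro y hy
    exact mem_comp.2 ⟨(hcover y).2 ⟨C, hC, hy⟩, hconn C hC x hx y hy⟩

lemma comps_eq_pieces {A : Finset ℕ} {P : Finset (Finset ℕ)}
    (hcover : ∀ x, x ∈ A ↔ ∃ C ∈ P, x ∈ C)
    (hne : ∀ C ∈ P, C.Nonempty)
    (hconn : ∀ C ∈ P, ∀ x ∈ C, ∀ y ∈ C, conn A x y)
    (hsep : ∀ C ∈ P, ∀ D ∈ P, ∀ x ∈ C, ∀ y ∈ D, adj x y → x ∈ D) :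
    comps A = P := by
  apply Finset.Subset.antisymm
  · intro C hC
    obtain ⟨x, hxA, rfl⟩ := Finset.mem_image.1 hC
    obtain ⟨D, hD, hxD⟩ := (hcover x).1 hxA
    rw [comp_eq_piece hcover hconn hsep hD hxD]; exact hD
  · intro C hC
    obtain ⟨x, hx⟩ := hne C hC
    have := comp_eq_piece hcover hconn hsep hC hx
    exact Finset.mem_image.2 ⟨x, (hcover x).2 ⟨C, hC, hx⟩, this⟩

section Transport
variable {A B : Finset ℕ} {e e' : ℕ → ℕ}
variable (hAB : ∀ i ∈ A, e i ∈ B) (hBA : ∀ j ∈ B, e' j ∈ A)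
variable (h1 : ∀ i ∈ A, e' (e i) = i) (h2 : ∀ j ∈ B, e (e' j) = j)
variable (hadj : ∀ i ∈ A, ∀ i' ∈ A, (adj i i' ↔ adj (e i) (e i')))
variable (hff : ∀ i ∈ A, ∀ i' ∈ A, (ff i = ff i' ↔ ff (e i) = ff (e i')))

include hAB h1 hadj in
lemma conn_transport {x y : ℕ} (hx : x ∈ A) (h : conn A x y) :
    conn B (e x) (e y) := by
  induction h with
  | refl => exact .refl
  | @tail b c hc hs ih =>
    have hbA : b ∈ A := conn_mem hx hc
    exact Relation.ReflTransGen.tail ih ⟨hAB _ hs.1, (hadj b hbA c hs.1).1 hs.2⟩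

include hAB hBA h1 h2 hadj in
lemma comp_transport {x : ℕ} (hx : x ∈ A) :
    comp B (e x) = (comp A x).image e := by
  have hadj' : ∀ j ∈ B, ∀ j' ∈ B, (adj j j' ↔ adj (e' j) (e' j')) := by
    intro j hj j' hj'
    have := hadj (e' j) (hBA j hj) (e' j') (hBA j' hj')
    rw [h2 j hj, h2 j' hj'] at this
    exact this.symm
  apply Finset.Subset.antisymm
  · intro y hy
    obtain ⟨hyB, hc⟩ := mem_comp.1 hy
    have := conn_transport hBA h2 hadj' (hAB x hx) hc
    rw [h1 x hx] at this
    refine Finset.mem_image.2 ⟨e' y, mem_comp.2 ⟨hBA y hyB, this⟩, h2 y hyB⟩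
  · intro y hy
    obtain ⟨z, hz, rfl⟩ := Finset.mem_image.1 hy
    obtain ⟨hzA, hc⟩ := mem_comp.1 hz
    exact mem_comp.2 ⟨hAB z hzA, conn_transport hAB h1 hadj hx hc⟩

include hAB hBA h1 h2 hadj hff in
lemma inv_transport : inv A = inv B := by
  classical
  have hinj : Set.InjOn e A := by
    intro u hu v hv huv
    have := congrArg e' huv; rwa [h1 u hu, h1 v hv] at this
  have hcompsB : comps B = (comps A).image (Finset.image e) := by
    apply Finset.Subset.antisymm
    · intro C hC
      obtain ⟨j, hj, rfl⟩ := Finset.mem_image.1 hC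
      refine Finset.mem_image.2 ⟨comp A (e' j), Finset.mem_image.2 ⟨e' j, hBA j hj, rfl⟩, ?_⟩
      rw [← comp_transport hAB hBA h1 h2 hadj (hBA j hj), h2 j hj]
    · intro C hC
      obtain ⟨D, hD, rfl⟩ := Finset.mem_image.1 hC
      obtain ⟨x, hx, rfl⟩ := Finset.mem_image.1 hD
      rw [← comp_transport hAB hBA h1 h2 hadj hx]
      exact Finset.mem_image.2 ⟨e x, hAB x hx, rfl⟩
  have hinjP : Set.InjOn (Finset.image e) (comps A) := by
    intro C hC D hD hCD
    obtain ⟨xc, hxc, rfl⟩ := Finset.mem_image.1 hC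
    obtain ⟨xd, hxd, rfl⟩ := Finset.mem_image.1 hD
    apply Finset.Subset.antisymm <;> intro y hy
    · have : e y ∈ (comp A xd).image e := by
        rw [← hCD]; exact Finset.mem_image.2 ⟨y, hy, rfl⟩
      obtain ⟨z, hz, hez⟩ := Finset.mem_image.1 this
      have : z = y := hinj (comp_subset hz) (comp_subset hy) hez
      rwa [← this]
    · have : e y ∈ (comp A xc).image e := by
        rw [hCD]; exact Finset.mem_image.2 ⟨y, hy, rfl⟩
      obtain ⟨z, hz, hez⟩ := Finset.mem_image.1 this
      have : z = y := hinj (comp_subset hz) (comp_subset hy) hez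
      rwa [← this]
  have hNT : ∀ C ∈ comps A, (noTwin (Finset.image e C) ↔ noTwin C) := by
    intro C hC
    obtain ⟨x, hx, rfl⟩ := Finset.mem_image.1 hC
    constructor
    · intro hnt u hu v hv huv hffuv
      have huA := comp_subset hu; have hvA := comp_subset hv
      exact hnt (e u) (Finset.mem_image.2 ⟨u, hu, rfl⟩) (e v) (Finset.mem_image.2 ⟨v, hv, rfl⟩)
        (fun hh => huv (hinj huA hvA hh)) ((hff u huA v hvA).1 hffuv)
    · intro hnt u hu v hv huv hffuv
      obtain ⟨u0, hu0, rfl⟩ := Finset.mem_image.1 hu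
      obtain ⟨v0, hv0, rfl⟩ := Finset.mem_image.1 hv
      have hu0A := comp_subset hu0; have hv0A := comp_subset hv0
      exact hnt u0 hu0 v0 hv0 (fun hh => huv (hh ▸ rfl))
        ((hff u0 hu0A v0 hv0A).2 hffuv)
  unfold inv
  rw [hcompsB]
  have hfilter : (((comps A).image (Finset.image e)).filter noTwin)
      = (((comps A).filter noTwin).image (Finset.image e)) := by
    rw [Finset.filter_image]
    congr 1
    apply Finset.filter_congr
    intro C hC
    exact hNT C hC
  rw [hfilter]
  have hinjP' : Set.InjOn (Finset.image e) ((comps A).filter noTwin) := by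
    intro C hC D hD
    exact hinjP (Finset.mem_filter.1 hC).1 (Finset.mem_filter.1 hD).1
  rw [Finset.image_val_of_injOn hinjP']
  rw [Multiset.map_map]
  apply Multiset.map_congr rfl
  intro C hC
  have hCc : C ∈ (comps A).filter noTwin := hC
  have hCA : C ⊆ A := by
    have := (Finset.mem_filter.1 hCc).1
    obtain ⟨x, hx, rfl⟩ := Finset.mem_image.1 this
    exact comp_subset
  simp only [Function.comp_apply]
  exact (Finset.card_image_of_injOn (fun u hu v hv => hinj (hCA hu) (hCA hv))).symm

end Transport

lemma noTwin_of_zero_notMem {C : Finset ℕ} (h : 0 ∉ C) : noTwin C := by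
  intro x hx y hy hxy hffxy
  rcases ff_eq_cases hffxy with h1 | ⟨rfl, rfl⟩ | ⟨rfl, rfl⟩
  · exact hxy h1
  · exact h hx
  · exact h hy

lemma not_noTwin_of_01 {C : Finset ℕ} (h0 : 0 ∈ C) (h1 : 1 ∈ C) : ¬ noTwin C := by
  intro h
  exact h 0 h0 1 h1 (by omega) rfl

lemma adj_succ (u : ℕ) : adj u (u + 1) := by
  rcases Nat.eq_zero_or_pos u with h | h
  · subst h; exact ⟨by omega, by decide⟩
  · refine ⟨by omega, ?_⟩
    rw [ff_of_pos h, ff_of_pos (by omega)]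
    omega

lemma adj_02 : adj 0 2 := ⟨by omega, by decide⟩

lemma conn_Ico {A : Finset ℕ} {l r : ℕ} (hsub : ∀ z, l ≤ z → z < r → z ∈ A)
    {x y : ℕ} (hx1 : l ≤ x) (hx2 : x < r) (hy1 : l ≤ y) (hy2 : y < r) : conn A x y := by
  have aux : ∀ d u, l ≤ u → u + d < r → conn A u (u + d) := by
    intro d
    induction d with
    | zero => intro u _ _; exact .refl
    | succ d ih =>
      intro u hu hud
      have h1 : conn A u (u + d) := ih u hu (by omega)
      have h2 : step A (u + d) (u + d + 1) := ⟨hsub _ (by omega) (by omega), adj_succ _⟩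
      have hres := Relation.ReflTransGen.tail h1 h2
      have heq : u + d + 1 = u + (d + 1) := by omega
      rwa [heq] at hres
  rcases le_total x y with h | h
  · have hres := aux (y - x) x hx1 (by omega)
    have heq : x + (y - x) = y := by omega
    rwa [heq] at hres
  · have hres := aux (x - y) y hy1 (by omega)
    have heq : y + (x - y) = x := by omega
    rw [heq] at hres
    exact conn_symm (hsub y hy1 hy2) hres

/-! ### Markers and gaps -/

def ms : ℕ → List ℕ → Finset ℕ
  | _, [] => ∅
  | a, x :: t => insert a (ms (a + x) t)

lemma mem_ms {L : List ℕ} {a y : ℕ} :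
    y ∈ ms a L ↔ ∃ j < L.length, y = a + (L.take j).sum := by
  induction L generalizing a with
  | nil => simp [ms]
  | cons x t ih =>
    simp only [ms, Finset.mem_insert, ih]
    constructor
    · rintro (rfl | ⟨j, hj, rfl⟩)
      · exact ⟨0, by simp⟩
      · exact ⟨j + 1, by simpa using hj, by simp [List.take_succ_cons]; omega⟩
    · rintro ⟨j, hj, rfl⟩
      match j with
      | 0 => left; simp
      | j + 1 =>
        right
        refine ⟨j, by simpa using hj, ?_⟩
        simp [List.take_succ_cons]; omega

lemma ms_lb {L : List ℕ} {a y : ℕ} (h : y ∈ ms a L) : a ≤ y := by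
  rw [mem_ms] at h
  obtain ⟨j, _, rfl⟩ := h
  omega

lemma ms_ub {L : List ℕ} {a y : ℕ} (hpos : ∀ x ∈ L, 0 < x) (h : y ∈ ms a L) :
    y < a + L.sum := by
  induction L generalizing a with
  | nil => simp [ms] at h
  | cons x t ih =>
    simp only [ms, Finset.mem_insert] at h
    have hx : 0 < x := hpos x (by simp)
    rcases h with rfl | h
    · simp; omega
    · have := ih (fun z hz => hpos z (by simp [hz])) h
      simp; omega

lemma card_ms {L : List ℕ} (hpos : ∀ x ∈ L, 0 < x) (a : ℕ) :
    (ms a L).card = L.length := by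
  induction L generalizing a with
  | nil => simp [ms]
  | cons x t ih =>
    have hx : 0 < x := hpos x (by simp)
    have hnot : a ∉ ms (a + x) t := fun h => by have := ms_lb h; omega
    simp only [ms, Finset.card_insert_of_notMem hnot, List.length_cons,
      ih (fun z hz => hpos z (by simp [hz]))]

def gp : ℕ → List ℕ → Finset (Finset ℕ)
  | _, [] => ∅
  | a, x :: t => (if 2 ≤ x then {Finset.Ico (a + 1) (a + x)} else ∅) ∪ gp (a + x) t

lemma gp_mem {L : List ℕ} {a : ℕ} {C : Finset ℕ} (hC : C ∈ gp a L) :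
    ∃ l r, C = Finset.Ico l r ∧ a < l ∧ l < r ∧ r ≤ a + L.sum ∧
      ∀ y, l ≤ y → y < r → y ∉ ms a L := by
  induction L generalizing a with
  | nil => simp [gp] at hC
  | cons x t ih =>
    simp only [gp, Finset.mem_union] at hC
    rcases hC with hC | hC
    · by_cases h2x : 2 ≤ x
      · rw [if_pos h2x, Finset.mem_singleton] at hC
        refine ⟨a + 1, a + x, hC, by omega, by omega, by simp only [List.sum_cons]; omega, ?_⟩
        intro y hy1 hy2
        simp only [ms, Finset.mem_insert]
        push_neg
        exact ⟨by omega, fun h => by have := ms_lb h; omega⟩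
      · rw [if_neg h2x] at hC; simp at hC
    · obtain ⟨l, r, heq, hl, hlr, hr, hms⟩ := ih hC
      refine ⟨l, r, heq, by omega, hlr, by simp only [List.sum_cons]; omega, ?_⟩
      intro y hy1 hy2
      simp only [ms, Finset.mem_insert]
      push_neg
      exact ⟨by omega, hms y hy1 hy2⟩

lemma gp_cover {L : List ℕ} (hpos : ∀ x ∈ L, 0 < x) {a y : ℕ} (h1 : a ≤ y)
    (h2 : y < a + L.sum) (h3 : y ∉ ms a L) : ∃ C ∈ gp a L, y ∈ C := by
  induction L generalizing a with
  | nil => simp at h2; omega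
  | cons x t ih =>
    have hx : 0 < x := hpos x (by simp)
    simp only [ms, Finset.mem_insert] at h3
    push_neg at h3
    obtain ⟨hya, hyt⟩ := h3
    by_cases hcase : y < a + x
    · have h2x : 2 ≤ x := by omega
      refine ⟨Finset.Ico (a + 1) (a + x), ?_, ?_⟩
      · simp only [gp, Finset.mem_union]; left; rw [if_pos h2x]; simp
      · simp only [Finset.mem_Ico]; omega
    · obtain ⟨C, hC, hyC⟩ := ih (fun z hz => hpos z (by simp [hz])) (by omega)
        (by simp at h2 ⊢; omega) hyt
      exact ⟨C, by simp only [gp, Finset.mem_union]; right; exact hC, hyC⟩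

def nont (L : List ℕ) : Multiset ℕ := ((L.filter (fun x => 2 ≤ x)).map (fun x => x - 1) : List ℕ)

lemma gp_cards {L : List ℕ} (a : ℕ) :
    (gp a L).val.map Finset.card = nont L := by
  induction L generalizing a with
  | nil => simp [gp, nont]
  | cons x t ih =>
    by_cases h2x : 2 ≤ x
    · have hne : Finset.Ico (a + 1) (a + x) ∉ gp (a + x) t := by
        intro hmem
        obtain ⟨l, r, heq, hl, hlr, _, _⟩ := gp_mem hmem
        have hmem1 : a + 1 ∈ Finset.Ico (a + 1) (a + x) := by simp; omega
        rw [heq] at hmem1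
        simp only [Finset.mem_Ico] at hmem1
        omega
      have hgp : gp a (x :: t) = insert (Finset.Ico (a + 1) (a + x)) (gp (a + x) t) := by
        simp only [gp, if_pos h2x]
        exact (Finset.insert_eq _ _).symm
      rw [hgp, Finset.insert_val, Multiset.ndinsert_of_notMem hne, Multiset.map_cons,
        ih (a + x)]
      have hcard : (Finset.Ico (a + 1) (a + x)).card = x - 1 := by
        rw [Nat.card_Ico]; omega
      rw [hcard]
      have : nont (x :: t) = (x - 1) ::ₘ nont t := by
        simp [nont, List.filter_cons, h2x]
      rw [this]
    · have hx1 : gp a (x :: t) = gp (a + x) t := by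
        simp only [gp, if_neg h2x, Finset.empty_union]
      rw [hx1, ih (a + x)]
      simp [nont, List.filter_cons, h2x]


lemma noTwin_of_one_notMem {C : Finset ℕ} (h : 1 ∉ C) : noTwin C := by
  intro x hx y hy hxy hffxy
  rcases ff_eq_cases hffxy with h1 | ⟨rfl, rfl⟩ | ⟨rfl, rfl⟩
  · exact hxy h1
  · exact h hy
  · exact h hx

lemma gp_sep {L : List ℕ} {a : ℕ} {C D : Finset ℕ} (hC : C ∈ gp a L) (hD : D ∈ gp a L)
    (hne : C ≠ D) {x y : ℕ} (hx : x ∈ C) (hy : y ∈ D) : x + 2 ≤ y ∨ y + 2 ≤ x := by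
  induction L generalizing a with
  | nil => simp [gp] at hC
  | cons p t ih =>
    simp only [gp, Finset.mem_union] at hC hD
    rcases hC with hC | hC <;> rcases hD with hD | hD
    · exfalso
      by_cases h2p : 2 ≤ p
      · rw [if_pos h2p, Finset.mem_singleton] at hC hD
        exact hne (hC.trans hD.symm)
      · rw [if_neg h2p] at hC; simp at hC
    · by_cases h2p : 2 ≤ p
      · rw [if_pos h2p, Finset.mem_singleton] at hC
        subst hC
        obtain ⟨l, r, rfl, hl, _, _, _⟩ := gp_mem hD
        simp only [Finset.mem_Ico] at hx hy
        omega
      · rw [if_neg h2p] at hC; simp at hC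
    · by_cases h2p : 2 ≤ p
      · rw [if_pos h2p, Finset.mem_singleton] at hD
        subst hD
        obtain ⟨l, r, rfl, hl, _, _, _⟩ := gp_mem hC
        simp only [Finset.mem_Ico] at hx hy
        omega
      · rw [if_neg h2p] at hD; simp at hD
    · exact ih hC hD

lemma adj_ge_one {x y : ℕ} (hx : 1 ≤ x) (hy : 1 ≤ y) (h : adj x y) :
    x ≤ y + 1 ∧ y ≤ x + 1 := by
  obtain ⟨_, h1, h2⟩ := h
  rw [ff_of_pos hx, ff_of_pos hy] at h1 h2
  exact ⟨h1, h2⟩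

lemma gp_conn {n a : ℕ} {L : List ℕ} (hsum : a + L.sum = n) {A : Finset ℕ}
    (hA : ∀ i, a < i → i < n → i ∉ ms a L → i ∈ A) {C : Finset ℕ} (hC : C ∈ gp a L) :
    ∀ x ∈ C, ∀ y ∈ C, conn A x y := by
  obtain ⟨l, r, rfl, hl, hlr, hr, hms⟩ := gp_mem hC
  intro x hx y hy
  simp only [Finset.mem_Ico] at hx hy
  exact conn_Ico (fun z hz1 hz2 => hA z (by omega) (by omega) (hms z hz1 hz2))
    hx.1 hx.2 hy.1 hy.2

lemma spec1 {n a : ℕ} {L : List ℕ} (hpos : ∀ x ∈ L, 0 < x) (hsum : a + L.sum = n)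
    (ha : a = 0 ∨ 2 ≤ a) {A : Finset ℕ} (hA : ∀ i, i ∈ A ↔ i < n ∧ i ∉ ms a L) :
    inv A = nont L ∧ A.card + L.length = n := by
  classical
  have hmssub : ms a L ⊆ Finset.range n := by
    intro y hy
    rw [Finset.mem_range]
    have := ms_ub hpos hy
    omega
  have hAeq : A = Finset.range n \ ms a L := by
    ext i
    simp only [Finset.mem_sdiff, Finset.mem_range, hA]
  have hcard : A.card + L.length = n := by
    rw [hAeq, Finset.card_sdiff_of_subset hmssub, Finset.card_range, card_ms hpos]
    have : (ms a L).card ≤ n := le_trans (Finset.card_le_card hmssub) (by simp)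
    rw [card_ms hpos] at this
    omega
  refine ⟨?_, hcard⟩
  rcases ha with rfl | ha2
  · -- a = 0
    have hcomps : comps A = gp 0 L := by
      apply comps_eq_pieces
      · intro x
        rw [hA]
        constructor
        · rintro ⟨hx1, hx2⟩
          exact gp_cover hpos (Nat.zero_le x) (by omega) hx2
        · rintro ⟨C, hC, hxC⟩
          obtain ⟨l, r, heq, hl, hlr, hr, hms⟩ := gp_mem hC
          rw [heq] at hxC
          simp only [Finset.mem_Ico] at hxC
          exact ⟨by omega, hms x hxC.1 hxC.2⟩
      · intro C hC
        obtain ⟨l, r, rfl, _, hlr, _, _⟩ := gp_mem hC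
        exact ⟨l, by simp; omega⟩
      · exact fun C hC => gp_conn hsum (fun i _ hin hims => (hA i).2 ⟨hin, hims⟩) hC
      · intro C hC D hD x hx y hy hadj
        by_cases hCD : C = D
        · rwa [← hCD]
        · exfalso
          obtain ⟨l, r, heqC, hl, _, _, _⟩ := gp_mem hC
          obtain ⟨l', r', heqD, hl', _, _, _⟩ := gp_mem hD
          have hx' := hx; have hy' := hy
          rw [heqC] at hx'; rw [heqD] at hy'
          simp only [Finset.mem_Ico] at hx' hy'
          have := adj_ge_one (by omega) (by omega) hadj
          have := gp_sep hC hD hCD hx hy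
          omega
    unfold inv
    rw [hcomps, Finset.filter_true_of_mem, gp_cards]
    intro C hC
    obtain ⟨l, r, rfl, hl, _, _, _⟩ := gp_mem hC
    apply noTwin_of_zero_notMem
    simp only [Finset.mem_Ico]
    omega
  · -- 2 ≤ a
    have hC0ne : Finset.Ico 0 a ∉ gp a L := by
      intro hmem
      obtain ⟨l, r, heq, hl, hlr, _, _⟩ := gp_mem hmem
      have h0 : 0 ∈ Finset.Ico 0 a := by simp; omega
      rw [heq] at h0
      simp only [Finset.mem_Ico] at h0
      omega
    have hcomps : comps A = insert (Finset.Ico 0 a) (gp a L) := by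
      apply comps_eq_pieces
      · intro x
        rw [hA]
        constructor
        · rintro ⟨hx1, hx2⟩
          by_cases hxa : x < a
          · exact ⟨Finset.Ico 0 a, Finset.mem_insert_self _ _, by simp; omega⟩
          · obtain ⟨C, hC, hxC⟩ := gp_cover hpos (by omega) (by omega) hx2
            exact ⟨C, Finset.mem_insert_of_mem hC, hxC⟩
        · rintro ⟨C, hC, hxC⟩
          rcases Finset.mem_insert.1 hC with rfl | hC
          · simp only [Finset.mem_Ico] at hxC
            refine ⟨by omega, fun hmem => ?_⟩
            have := ms_lb hmem
            omega
          · obtain ⟨l, r, heq, hl, hlr, hr, hms⟩ := gp_mem hC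
            rw [heq] at hxC
            simp only [Finset.mem_Ico] at hxC
            exact ⟨by omega, hms x hxC.1 hxC.2⟩
      · intro C hC
        rcases Finset.mem_insert.1 hC with rfl | hC
        · exact ⟨0, by simp; omega⟩
        · obtain ⟨l, r, rfl, _, hlr, _, _⟩ := gp_mem hC
          exact ⟨l, by simp; omega⟩
      · intro C hC
        rcases Finset.mem_insert.1 hC with rfl | hC
        · intro x hx y hy
          simp only [Finset.mem_Ico] at hx hy
          refine conn_Ico (fun z hz1 hz2 => (hA z).2 ⟨by omega, fun hmem => ?_⟩)
            hx.1 hx.2 hy.1 hy.2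
          have := ms_lb hmem
          omega
        · exact gp_conn hsum (fun i _ hin hims => (hA i).2 ⟨hin, hims⟩) hC
      · intro C hC D hD x hx y hy hadj
        rcases Finset.mem_insert.1 hC with rfl | hC <;> rcases Finset.mem_insert.1 hD with rfl | hD
        · exact hx
        · exfalso
          obtain ⟨l, r, rfl, hl, _, _, _⟩ := gp_mem hD
          simp only [Finset.mem_Ico] at hx hy
          obtain ⟨_, h1, h2⟩ := hadj
          have hffx : ff x ≤ a - 1 := by
            simp only [ff]
            omega
          rw [ff_of_pos (by omega : 1 ≤ y)] at h1 h2
          omega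
        · exfalso
          obtain ⟨l, r, rfl, hl, _, _, _⟩ := gp_mem hC
          simp only [Finset.mem_Ico] at hx hy
          obtain ⟨_, h1, h2⟩ := hadj
          have hffy : ff y ≤ a - 1 := by
            simp only [ff]
            omega
          rw [ff_of_pos (by omega : 1 ≤ x)] at h1 h2
          omega
        · by_cases hCD : C = D
          · rwa [← hCD]
          · exfalso
            obtain ⟨l, r, heqC, hl, _, _, _⟩ := gp_mem hC
            obtain ⟨l', r', heqD, hl', _, _, _⟩ := gp_mem hD
            have hx' := hx; have hy' := hy
            rw [heqC] at hx'; rw [heqD] at hy'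
            simp only [Finset.mem_Ico] at hx' hy'
            have := adj_ge_one (by omega) (by omega) hadj
            have := gp_sep hC hD hCD hx hy
            omega
    unfold inv
    rw [hcomps, Finset.filter_insert, if_neg (not_noTwin_of_01 (by simp; omega) (by simp; omega)),
      Finset.filter_true_of_mem, gp_cards]
    intro C hC
    obtain ⟨l, r, rfl, hl, _, _, _⟩ := gp_mem hC
    apply noTwin_of_zero_notMem
    simp only [Finset.mem_Ico]
    omega


lemma spec2 {n b : ℕ} {t : List ℕ} (hpos : ∀ x ∈ (b :: t), 0 < x) (hb : 2 ≤ b)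
    (hsum : b + t.sum = n) {A : Finset ℕ}
    (hA : ∀ i, i ∈ A ↔ i < n ∧ i ∉ insert 1 (ms b t)) :
    inv A = nont (b :: t) ∧ A.card + (b :: t).length = n := by
  classical
  have hpost : ∀ x ∈ t, 0 < x := fun z hz => hpos z (by simp [hz])
  have hA' : ∀ i, i ∈ A ↔ i < n ∧ i ≠ 1 ∧ i ∉ ms b t := by
    intro i
    rw [hA]
    simp only [Finset.mem_insert]
    tauto
  have hmssub : insert 1 (ms b t) ⊆ Finset.range n := by
    intro y hy
    rcases Finset.mem_insert.1 hy with rfl | hy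
    · simp; omega
    · rw [Finset.mem_range]
      have := ms_ub hpost hy
      omega
  have hAeq : A = Finset.range n \ insert 1 (ms b t) := by
    ext i
    simp only [Finset.mem_sdiff, Finset.mem_range, hA]
  have hone : (1 : ℕ) ∉ ms b t := fun h => by have := ms_lb h; omega
  have hcardM : (insert 1 (ms b t)).card = t.length + 1 := by
    rw [Finset.card_insert_of_notMem hone, card_ms hpost]
  have hcard : A.card + (b :: t).length = n := by
    rw [hAeq, Finset.card_sdiff_of_subset hmssub, Finset.card_range, hcardM]
    have : (insert 1 (ms b t)).card ≤ n := le_trans (Finset.card_le_card hmssub) (by simp)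
    rw [hcardM] at this
    simp only [List.length_cons]
    omega
  refine ⟨?_, hcard⟩
  set C0 : Finset ℕ := insert 0 (Finset.Ico 2 b) with hC0
  have hmemC0 : ∀ x, x ∈ C0 ↔ (x = 0 ∨ (2 ≤ x ∧ x < b)) := by
    intro x
    simp [hC0, Finset.mem_insert, Finset.mem_Ico]
  have hC0sub : ∀ x ∈ C0, x ∈ A := by
    intro x hx
    rcases (hmemC0 x).1 hx with rfl | hx2
    · exact (hA' 0).2 ⟨by omega, by omega, fun h => by have := ms_lb h; omega⟩
    · exact (hA' x).2 ⟨by omega, by omega, fun h => by have := ms_lb h; omega⟩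
  have hC0notgp : C0 ∉ gp b t := by
    intro hmem
    obtain ⟨l, r, heq, hl, hlr, _, _⟩ := gp_mem hmem
    have h0 : (0:ℕ) ∈ C0 := (hmemC0 0).2 (Or.inl rfl)
    rw [heq] at h0
    simp only [Finset.mem_Ico] at h0
    omega
  have hcomps : comps A = insert C0 (gp b t) := by
    apply comps_eq_pieces
    · intro x
      rw [hA']
      constructor
      · rintro ⟨hx1, hx2, hx3⟩
        by_cases hxb : x < b
        · exact ⟨C0, Finset.mem_insert_self _ _, (hmemC0 x).2 (by omega)⟩
        · obtain ⟨C, hC, hxC⟩ := gp_cover hpost (by omega) (by omega) hx3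
          exact ⟨C, Finset.mem_insert_of_mem hC, hxC⟩
      · rintro ⟨C, hC, hxC⟩
        rcases Finset.mem_insert.1 hC with rfl | hC
        · have := (hA' x).1 (hC0sub x hxC)
          exact this
        · obtain ⟨l, r, heq, hl, hlr, hr, hms⟩ := gp_mem hC
          rw [heq] at hxC
          simp only [Finset.mem_Ico] at hxC
          exact ⟨by omega, by omega, hms x hxC.1 hxC.2⟩
    · intro C hC
      rcases Finset.mem_insert.1 hC with rfl | hC
      · exact ⟨0, (hmemC0 0).2 (Or.inl rfl)⟩
      · obtain ⟨l, r, rfl, _, hlr, _, _⟩ := gp_mem hC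
        exact ⟨l, by simp; omega⟩
    · intro C hC
      rcases Finset.mem_insert.1 hC with rfl | hC
      · have hIcoA : ∀ z, 2 ≤ z → z < b → z ∈ A := by
          intro z hz1 hz2
          exact (hA' z).2 ⟨by omega, by omega, fun h => by have := ms_lb h; omega⟩
        have hconn0 : ∀ z ∈ C0, conn A 0 z := by
          intro z hz
          rcases (hmemC0 z).1 hz with rfl | hz2
          · exact .refl
          · have hstep : step A 0 2 := ⟨hIcoA 2 (by omega) (by omega), adj_02⟩
            have h2z : conn A 2 z := conn_Ico hIcoA (by omega) (by omega) hz2.1 hz2.2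
            exact Relation.ReflTransGen.head hstep h2z
        intro x hx y hy
        have h0A : (0:ℕ) ∈ A := hC0sub 0 ((hmemC0 0).2 (Or.inl rfl))
        exact conn_trans (conn_symm h0A (hconn0 x hx)) (hconn0 y hy)
      · exact gp_conn hsum (fun i hbi hin hims => (hA' i).2 ⟨hin, by omega, hims⟩) hC
    · intro C hC D hD x hx y hy hadj
      rcases Finset.mem_insert.1 hC with rfl | hC <;> rcases Finset.mem_insert.1 hD with rfl | hD
      · exact hx
      · exfalso
        obtain ⟨l, r, heq, hl, _, _, _⟩ := gp_mem hD
        have hy' := hy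
        rw [heq] at hy'
        simp only [Finset.mem_Ico] at hy'
        obtain ⟨_, h1, h2⟩ := hadj
        have hffx : ff x ≤ b - 1 := by
          rcases (hmemC0 x).1 hx with rfl | hx2
          · simp only [ff]; omega
          · simp only [ff]; omega
        rw [ff_of_pos (by omega : 1 ≤ y)] at h1 h2
        omega
      · exfalso
        obtain ⟨l, r, heq, hl, _, _, _⟩ := gp_mem hC
        have hx' := hx
        rw [heq] at hx'
        simp only [Finset.mem_Ico] at hx'
        obtain ⟨_, h1, h2⟩ := hadj
        have hffy : ff y ≤ b - 1 := by
          rcases (hmemC0 y).1 hy with rfl | hy2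
          · simp only [ff]; omega
          · simp only [ff]; omega
        rw [ff_of_pos (by omega : 1 ≤ x)] at h1 h2
        omega
      · by_cases hCD : C = D
        · rwa [← hCD]
        · exfalso
          obtain ⟨l, r, heqC, hl, _, _, _⟩ := gp_mem hC
          obtain ⟨l', r', heqD, hl', _, _, _⟩ := gp_mem hD
          have hx' := hx; have hy' := hy
          rw [heqC] at hx'; rw [heqD] at hy'
          simp only [Finset.mem_Ico] at hx' hy'
          have := adj_ge_one (by omega) (by omega) hadj
          have := gp_sep hC hD hCD hx hy
          omega
  have hfilter : (gp b t).filter noTwin = gp b t := by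
    apply Finset.filter_true_of_mem
    intro C hC
    obtain ⟨l, r, rfl, hl, _, _, _⟩ := gp_mem hC
    apply noTwin_of_zero_notMem
    simp only [Finset.mem_Ico]
    omega
  have hcardC0 : C0.card = b - 1 := by
    rw [hC0, Finset.card_insert_of_notMem (by simp), Nat.card_Ico]
    omega
  have hnontwinC0 : noTwin C0 := noTwin_of_one_notMem (by
    intro h
    rcases (hmemC0 1).1 h with h1 | h1 <;> omega)
  unfold inv
  rw [hcomps, Finset.filter_insert, if_pos hnontwinC0, hfilter, Finset.insert_val,
    Multiset.ndinsert_of_notMem (by simpa using hC0notgp), Multiset.map_cons, hcardC0,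
    gp_cards]
  have : nont (b :: t) = (b - 1) ::ₘ nont t := by
    simp [nont, List.filter_cons, hb]
  rw [this]


/-! ### Reconstruction -/

lemma nont_card_le (L : List ℕ) : Multiset.card (nont L) ≤ L.length := by
  simp only [nont, Multiset.coe_card, List.length_map]
  exact List.length_filter_le _ _

lemma reconstruct (L : List ℕ) (hpos : ∀ x ∈ L, 0 < x) :
    (L : Multiset ℕ) =
      (nont L).map (· + 1) + Multiset.replicate (L.length - Multiset.card (nont L)) 1 := by
  induction L with
  | nil => simp [nont]
  | cons x t ih =>
    have hx := hpos x (by simp)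
    have iht := ih (fun z hz => hpos z (by simp [hz]))
    have hcons : ((x :: t : List ℕ) : Multiset ℕ) = x ::ₘ (t : Multiset ℕ) := rfl
    by_cases h2x : 2 ≤ x
    · have hn : nont (x :: t) = (x - 1) ::ₘ nont t := by simp [nont, List.filter_cons, h2x]
      have hcount : (x :: t : List ℕ).length - Multiset.card ((x - 1) ::ₘ nont t)
          = t.length - Multiset.card (nont t) := by
        simp only [List.length_cons, Multiset.card_cons]
        omega
      rw [hn, hcount, hcons, iht, Multiset.map_cons,
        (by omega : x - 1 + 1 = x), Multiset.cons_add]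
    · have hx1 : x = 1 := by omega
      subst hx1
      have hn : nont (1 :: t) = nont t := by
        simp [nont, List.filter_cons]
      rw [hn, hcons, iht]
      have hrep : (1 :: t : List ℕ).length - Multiset.card (nont t)
          = (t.length - Multiset.card (nont t)) + 1 := by
        have := nont_card_le t
        simp only [List.length_cons]
        omega
      rw [hrep, Multiset.replicate_succ, Multiset.add_cons]

/-! ### Translation of `corrD` data -/

lemma master {n : ℕ} (hn : 2 ≤ n) (J : Set (Equiv.Perm ℤ)) (c : CompD n)
    (hc : corrD n c = genSetD n \ J) :
    inv ((Finset.range n).filter (fun i => genD i ∈ J)) = nont c.parts ∧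
      ((Finset.range n).filter (fun i => genD i ∈ J)).card + c.parts.length = n := by
  classical
  obtain ⟨tag, parts, hpos, hvalid⟩ := c
  have key : ∀ (M : Finset ℕ),
      (∀ i, genD i ∈ corrD n ⟨tag, parts, hpos, hvalid⟩ ↔ i ∈ M) →
      ∀ i, i ∈ (Finset.range n).filter (fun i => genD i ∈ J) ↔ i < n ∧ i ∉ M := by
    intro M hM i
    rw [Finset.mem_filter, Finset.mem_range]
    constructor
    · rintro ⟨hin, hiJ⟩
      refine ⟨hin, fun hiM => ?_⟩
      have h2 := (hM i).2 hiM
      rw [hc] at h2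
      exact h2.2 hiJ
    · rintro ⟨hin, hiM⟩
      refine ⟨hin, ?_⟩
      by_contra hiJ
      have h2 : genD i ∈ genSetD n \ J := ⟨⟨i, hin, rfl⟩, hiJ⟩
      rw [← hc] at h2
      exact hiM ((hM i).1 h2)
  cases tag
  case lt =>
    have hsle : parts.sum + 2 ≤ n := hvalid
    have hM : ∀ i, genD i ∈ corrD n ⟨CTag.lt, parts, hpos, hvalid⟩ ↔
        i ∈ ms (n - parts.sum) parts := by
      intro i
      show (∃ j < parts.length, genD i = genD (n - parts.sum + (parts.take j).sum)) ↔ _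
      rw [mem_ms]
      constructor
      · rintro ⟨j, hj, heq⟩
        exact ⟨j, hj, genD_injective heq⟩
      · rintro ⟨j, hj, heq⟩
        exact ⟨j, hj, by rw [heq]⟩
    exact spec1 hpos (by omega) (Or.inr (by omega)) (key _ hM)
  case one =>
    have hne : parts ≠ [] := by
      intro h
      rw [h] at hvalid
      simp only [List.sum_nil, List.headI_nil] at hvalid
      omega
    have hM : ∀ i, genD i ∈ corrD n ⟨CTag.one, parts, hpos, hvalid⟩ ↔ i ∈ ms 0 parts := by
      intro i
      show genD i ∈ {genD 0} ∪ {g | ∃ j, 1 ≤ j ∧ j < parts.length ∧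
        g = genD ((parts.take j).sum)} ↔ _
      rw [mem_ms]
      simp only [Set.mem_union, Set.mem_singleton_iff, Set.mem_setOf_eq]
      constructor
      · rintro (heq | ⟨j, hj1, hj2, heq⟩)
        · exact ⟨0, List.length_pos_iff.2 hne, by simp [genD_injective heq]⟩
        · refine ⟨j, hj2, ?_⟩
          have := genD_injective heq
          omega
      · rintro ⟨j, hj, rfl⟩
        match j with
        | 0 => left; simp
        | j + 1 =>
          right
          exact ⟨j + 1, by omega, hj, by rw [(by omega : 0 + (parts.take (j+1)).sum
            = (parts.take (j+1)).sum)]⟩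
    exact spec1 hpos (by omega) (Or.inl rfl) (key _ hM)
  case cn =>
    have hne : parts ≠ [] := by
      intro h
      rw [h] at hvalid
      simp only [List.sum_nil, List.headI_nil] at hvalid
      omega
    have hM : ∀ i, genD i ∈ corrD n ⟨CTag.cn, parts, hpos, hvalid⟩ ↔ i ∈ ms 0 parts := by
      intro i
      show genD i ∈ {genD 0} ∪ {g | ∃ j, 1 ≤ j ∧ j < parts.length ∧
        g = genD ((parts.take j).sum)} ↔ _
      rw [mem_ms]
      simp only [Set.mem_union, Set.mem_singleton_iff, Set.mem_setOf_eq]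
      constructor
      · rintro (heq | ⟨j, hj1, hj2, heq⟩)
        · exact ⟨0, List.length_pos_iff.2 hne, by simp [genD_injective heq]⟩
        · refine ⟨j, hj2, ?_⟩
          have := genD_injective heq
          omega
      · rintro ⟨j, hj, rfl⟩
        match j with
        | 0 => left; simp
        | j + 1 =>
          right
          exact ⟨j + 1, by omega, hj, by rw [(by omega : 0 + (parts.take (j+1)).sum
            = (parts.take (j+1)).sum)]⟩
    exact spec1 hpos (by omega) (Or.inl rfl) (key _ hM)
  case cn' =>
    match parts, hpos, hvalid with
    | [], hpos, hvalid =>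
      simp only [List.sum_nil, List.headI_nil] at hvalid
      omega
    | b :: t, hpos, hvalid =>
    have hb : 2 ≤ b := by simpa using hvalid.2
    have hsum : b + t.sum = n := by
      have := hvalid.1
      simpa using this
    have hM : ∀ i, genD i ∈ corrD n ⟨CTag.cn', b :: t, hpos, hvalid⟩ ↔
        i ∈ insert 1 (ms b t) := by
      intro i
      show genD i ∈ {genD 1} ∪ {g | ∃ j, 1 ≤ j ∧ j < (b :: t).length ∧
        g = genD (((b :: t).take j).sum)} ↔ _
      rw [Finset.mem_insert, mem_ms]
      simp only [Set.mem_union, Set.mem_singleton_iff, Set.mem_setOf_eq]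
      constructor
      · rintro (heq | ⟨j, hj1, hj2, heq⟩)
        · exact Or.inl (genD_injective heq)
        · right
          match j, hj1 with
          | j + 1, _ =>
            refine ⟨j, by simpa using hj2, ?_⟩
            have := genD_injective heq
            rw [this, List.take_succ_cons, List.sum_cons]
      · rintro (rfl | ⟨j, hj, rfl⟩)
        · exact Or.inl rfl
        · right
          exact ⟨j + 1, by omega, by simpa using hj,
            by rw [List.take_succ_cons, List.sum_cons]⟩
    exact spec2 hpos hb hsum (key _ hM)

/-! ### Conjugation invariance -/

lemma conj_SDs {σ : Equiv.Perm ℤ} {i j : ℕ} (h : σ⁻¹ * genD i * σ = genD j) :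
    SDs j = ⇑σ ⁻¹' SDs i := by
  ext x
  simp only [SDs, Set.mem_setOf_eq, Set.mem_preimage]
  rw [← h]
  simp only [Equiv.Perm.mul_apply]
  constructor
  · intro hx hgx
    apply hx
    rw [hgx]
    simp
  · intro hx hgx
    apply hx
    have := congrArg σ hgx
    simpa using this

lemma conj_invariants {n : ℕ} {J K : Set (Equiv.Perm ℤ)} (hJ : J ⊆ genSetD n)
    (hK : K ⊆ genSetD n) {σ : Equiv.Perm ℤ} (hσ : (fun s => σ⁻¹ * s * σ) '' J = K) :
    inv ((Finset.range n).filter fun i => genD i ∈ J) =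
      inv ((Finset.range n).filter fun i => genD i ∈ K) ∧
    ((Finset.range n).filter fun i => genD i ∈ J).card =
      ((Finset.range n).filter fun i => genD i ∈ K).card := by
  classical
  set A := (Finset.range n).filter fun i => genD i ∈ J with hA
  set B := (Finset.range n).filter fun i => genD i ∈ K with hB
  let e : ℕ → ℕ := fun i => if h : ∃ j, σ⁻¹ * genD i * σ = genD j ∧ j ∈ B then h.choose else 0
  let e' : ℕ → ℕ := fun j => if h : ∃ i, σ * genD j * σ⁻¹ = genD i ∧ i ∈ A then h.choose else 0
  have he : ∀ i ∈ A, σ⁻¹ * genD i * σ = genD (e i) ∧ e i ∈ B := by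
    intro i hi
    obtain ⟨hin, hiJ⟩ := Finset.mem_filter.1 hi
    have hmemK : σ⁻¹ * genD i * σ ∈ K := by
      rw [← hσ]
      exact ⟨genD i, hiJ, rfl⟩
    obtain ⟨j, hjn, hj⟩ := hK hmemK
    have hh : ∃ j, σ⁻¹ * genD i * σ = genD j ∧ j ∈ B :=
      ⟨j, hj, Finset.mem_filter.2 ⟨Finset.mem_range.2 hjn, by rw [← hj]; exact hmemK⟩⟩
    simp only [e, dif_pos hh]
    exact hh.choose_spec
  have he' : ∀ j ∈ B, σ * genD j * σ⁻¹ = genD (e' j) ∧ e' j ∈ A := by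
    intro j hj
    obtain ⟨hjn, hjK⟩ := Finset.mem_filter.1 hj
    rw [← hσ] at hjK
    obtain ⟨s, hsJ, hs⟩ := hjK
    obtain ⟨i, hin, rfl⟩ := hJ hsJ
    have hconj : σ * genD j * σ⁻¹ = genD i := by
      rw [← hs]
      group
    have hh : ∃ i, σ * genD j * σ⁻¹ = genD i ∧ i ∈ A :=
      ⟨i, hconj, Finset.mem_filter.2 ⟨Finset.mem_range.2 hin, hsJ⟩⟩
    simp only [e', dif_pos hh]
    exact hh.choose_spec
  have hAB : ∀ i ∈ A, e i ∈ B := fun i hi => (he i hi).2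
  have hBA : ∀ j ∈ B, e' j ∈ A := fun j hj => (he' j hj).2
  have h1 : ∀ i ∈ A, e' (e i) = i := by
    intro i hi
    obtain ⟨hcon, hBm⟩ := he i hi
    obtain ⟨hcon', _⟩ := he' (e i) hBm
    apply genD_injective
    rw [← hcon', ← hcon]
    group
  have h2 : ∀ j ∈ B, e (e' j) = j := by
    intro j hj
    obtain ⟨hcon, hAm⟩ := he' j hj
    obtain ⟨hcon', _⟩ := he (e' j) hAm
    apply genD_injective
    rw [← hcon', ← hcon]
    group
  have hS : ∀ i ∈ A, SDs (e i) = ⇑σ ⁻¹' SDs i := fun i hi => conj_SDs (he i hi).1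
  have hffT : ∀ i ∈ A, ∀ i' ∈ A, (ff i = ff i' ↔ ff (e i) = ff (e i')) := by
    intro i hi i' hi'
    rw [← SDs_eq_iff, ← SDs_eq_iff, hS i hi, hS i' hi',
      Set.preimage_eq_preimage σ.surjective]
  have hadjT : ∀ i ∈ A, ∀ i' ∈ A, (adj i i' ↔ adj (e i) (e i')) := by
    intro i hi i' hi'
    have hne : i ≠ i' ↔ e i ≠ e i' := by
      constructor
      · intro h heq
        apply h
        rw [← h1 i hi, ← h1 i' hi', heq]
      · intro h heq
        exact h (by rw [heq])
    have hni : (SDs i ∩ SDs i').Nonempty ↔ (SDs (e i) ∩ SDs (e i')).Nonempty := by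
      rw [hS i hi, hS i' hi', ← Set.preimage_inter]
      constructor
      · rintro ⟨x, hx⟩
        exact ⟨σ.symm x, by simpa using hx⟩
      · rintro ⟨x, hx⟩
        exact ⟨σ x, hx⟩
    rw [SDs_inter_iff, SDs_inter_iff] at hni
    unfold adj
    rw [hne, hni]
  constructor
  · exact inv_transport hAB hBA h1 h2 hadjT hffT
  · exact Finset.card_nbij' e e' hAB hBA h1 h2

end StmtAux

/-- If `J, K ⊆ S` are conjugate subsets, then the compositions `κ` and `ν`
corresponding to `S \ J` and `S \ K` have the same components: the components
of `κ` can be reordered to give the components of `ν`. -/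
theorem stmt_2 (n : ℕ) (hn : 2 ≤ n) (J K : Set (Equiv.Perm ℤ))
    (hJ : J ⊆ genSetD n) (hK : K ⊆ genSetD n) (κ ν : CompD n)
    (hκ : corrD n κ = genSetD n \ J) (hν : corrD n ν = genSetD n \ K)
    (h : ConjugateIn n J K) :
    κ.parts.Perm ν.parts := by
  classical
  obtain ⟨σ, _, hσ⟩ := h
  obtain ⟨hinvJ, hlenJ⟩ := StmtAux.master hn J κ hκ
  obtain ⟨hinvK, hlenK⟩ := StmtAux.master hn K ν hν
  obtain ⟨hinvJK, hcardJK⟩ := StmtAux.conj_invariants hJ hK hσ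
  have hnont : StmtAux.nont κ.parts = StmtAux.nont ν.parts := by
    rw [← hinvJ, ← hinvK, ← hinvJK]
  have hlen : κ.parts.length = ν.parts.length := by omega
  have : (κ.parts : Multiset ℕ) = (ν.parts : Multiset ℕ) := by
    rw [StmtAux.reconstruct κ.parts κ.pos, StmtAux.reconstruct ν.parts ν.pos, hnont, hlen]
  exact Multiset.coe_eq_coe.mp this
end

section
/- If κ, ν ∈ C(n) satisfy κ ≈ ν, then the subsets J, K ⊆ S whose complements J^c, K^c correspond to κ, ν respectively under the natural correspondence are conjugate in D_n: there exists σ ∈ D_n with σ⁻¹Jσ = K. -/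
open Equiv Finset

namespace DnAux

/-! ### genD basics -/

lemma genD_apply_one_zero : genD 0 (1 : ℤ) = -2 := by
  simp [genD, Equiv.swap_apply_def]

lemma genD_apply_one (j : ℕ) (hj : 1 ≤ j) : 0 < genD j (1 : ℤ) := by
  have h0 : j ≠ 0 := by omega
  simp only [genD, if_neg h0, Equiv.Perm.mul_apply, Equiv.swap_apply_def]
  split_ifs <;> omega

lemma genD_apply_self (i : ℕ) (hi : 1 ≤ i) : genD i (i : ℤ) = (i : ℤ) + 1 := by
  have h0 : i ≠ 0 := by omega
  simp only [genD, if_neg h0, Equiv.Perm.mul_apply]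
  rw [Equiv.swap_apply_left]
  rw [Equiv.swap_apply_of_ne_of_ne (by omega) (by omega)]

lemma genD_apply_lt (j i : ℕ) (hi : 1 ≤ i) (hj : 1 ≤ j) (hne : j ≠ i) :
    genD j (i : ℤ) < (i : ℤ) + 1 := by
  have h0 : j ≠ 0 := by omega
  simp only [genD, if_neg h0, Equiv.Perm.mul_apply, Equiv.swap_apply_def]
  split_ifs <;> omega

lemma genD_injective : Function.Injective genD := by
  intro a b hab
  by_contra hne
  rcases Nat.eq_zero_or_pos a with ha | ha
  · subst ha
    have hb : 1 ≤ b := by omega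
    have := genD_apply_one b hb
    rw [← hab, genD_apply_one_zero] at this; omega
  rcases Nat.eq_zero_or_pos b with hb | hb
  · subst hb
    have := genD_apply_one a ha
    rw [hab, genD_apply_one_zero] at this; omega
  · have h1 := genD_apply_self a ha
    have h2 := genD_apply_lt b a ha hb (by omega)
    rw [← hab, h1] at h2; omega

/-! ### Dn membership machinery -/

lemma Perm.apply_inv_self {α : Type*} (f : Equiv.Perm α) (x : α) : f (f⁻¹ x) = x :=
  Equiv.apply_symm_apply f x

lemma Perm.inv_apply_self {α : Type*} (f : Equiv.Perm α) (x : α) : f⁻¹ (f x) = x :=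
  Equiv.symm_apply_apply f x

def OddSym (σ : Perm ℤ) : Prop := ∀ i : ℤ, σ (-i) = -σ i

lemma OddSym.zero {σ : Perm ℤ} (h : OddSym σ) : σ 0 = 0 := by
  have := h 0; simp at this; omega

lemma OddSym.inv {σ : Perm ℤ} (h : OddSym σ) : OddSym σ⁻¹ := by
  intro i
  apply σ.injective
  rw [Perm.apply_inv_self, h, Perm.apply_inv_self]

lemma OddSym.mul {σ τ : Perm ℤ} (h : OddSym σ) (h' : OddSym τ) : OddSym (σ * τ) := by
  intro i
  show σ (τ (-i)) = -σ (τ i)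
  rw [h' i, h (τ i)]

def Supp (n : ℕ) (σ : Perm ℤ) : Prop := ∀ i : ℤ, (n : ℤ) < |i| → σ i = i

lemma Supp.inv {n : ℕ} {σ : Perm ℤ} (h : Supp n σ) : Supp n σ⁻¹ := by
  intro i hi
  apply σ.injective
  rw [Perm.apply_inv_self, h i hi]

lemma Supp.mul {n : ℕ} {σ τ : Perm ℤ} (h : Supp n σ) (h' : Supp n τ) : Supp n (σ * τ) := by
  intro i hi; simp [Perm.mul_apply, h i hi, h' i hi]

noncomputable def cnt (n : ℕ) (σ : Perm ℤ) : ℕ :=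
  ((Finset.Icc (1 : ℤ) (n : ℤ)).filter fun i => σ i < 0).card

lemma isDn_iff (n : ℕ) (σ : Perm ℤ) :
    IsDn n σ ↔ OddSym σ ∧ Supp n σ ∧ Even (cnt n σ) := Iff.rfl

lemma abs_mem {n : ℕ} {σ : Perm ℤ} (ho : OddSym σ) (hs : Supp n σ) {i : ℤ}
    (hi : i ∈ Finset.Icc (1 : ℤ) (n : ℤ)) : |σ i| ∈ Finset.Icc (1 : ℤ) (n : ℤ) := by
  simp only [Finset.mem_Icc] at hi ⊢
  have hne : σ i ≠ 0 := by
    intro hz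
    have h0 := ho.zero
    have := σ.injective (hz.trans h0.symm)
    omega
  constructor
  · rcases abs_cases (σ i) with ⟨h1, _⟩ | ⟨h1, _⟩ <;> omega
  · by_contra hgt
    push_neg at hgt
    have h2 := hs (σ i) (by omega)
    have h3 := σ.injective h2
    rcases abs_cases (σ i) with ⟨h1, _⟩ | ⟨h1, _⟩ <;> omega

lemma cnt_zmod (n : ℕ) (σ : Perm ℤ) :
    ((cnt n σ : ZMod 2)) = ∑ i ∈ Finset.Icc (1 : ℤ) (n : ℤ), if σ i < 0 then (1 : ZMod 2) else 0 := by
  rw [Finset.sum_boole]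
  rfl

lemma cnt_mul_zmod {n : ℕ} {σ τ : Perm ℤ} (hoσ : OddSym σ) (hoτ : OddSym τ) (hsτ : Supp n τ) :
    ((cnt n (σ * τ) : ZMod 2)) = cnt n σ + cnt n τ := by
  rw [cnt_zmod, cnt_zmod, cnt_zmod]
  have key : ∀ i ∈ Finset.Icc (1 : ℤ) (n : ℤ),
      (if (σ * τ) i < 0 then (1 : ZMod 2) else 0)
        = (if τ i < 0 then (1 : ZMod 2) else 0) + (if σ |τ i| < 0 then (1 : ZMod 2) else 0) := by
    intro i hi
    simp only [Finset.mem_Icc] at hi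
    have hτne : τ i ≠ 0 := by
      intro hz; have := τ.injective (hz.trans hoτ.zero.symm); omega
    rcases lt_or_gt_of_ne hτne with hneg | hpos
    · have habs : |τ i| = -τ i := abs_of_neg hneg
      have hσ : σ (τ i) = -σ |τ i| := by
        have h1 := hoσ (-τ i)
        simp only [neg_neg] at h1
        rw [habs, ← h1]
      have hσne : σ |τ i| ≠ 0 := by
        intro hz; have h0 := hoσ.zero
        have := σ.injective (hz.trans h0.symm)
        omega
      have hone : (1 : ZMod 2) + 1 = 0 := by decide
      by_cases hc : σ |τ i| < 0
      · have hlt : ¬ ((σ * τ) i < 0) := by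
          simp only [Perm.mul_apply]; rw [hσ]; omega
        simp only [if_neg hlt, if_pos hneg, if_pos hc, hone]
      · have hlt : (σ * τ) i < 0 := by
          simp only [Perm.mul_apply]; rw [hσ]; omega
        simp only [if_pos hlt, if_pos hneg, if_neg hc, add_zero]
    · have habs : |τ i| = τ i := abs_of_pos hpos
      rw [habs]
      simp only [Perm.mul_apply]
      have : ¬ (τ i < 0) := by omega
      simp [this]
      congr
  rw [Finset.sum_congr rfl key, Finset.sum_add_distrib]
  rw [add_comm]
  congr 1
  apply Finset.sum_nbij' (i := fun i => |τ i|) (j := fun j => |τ⁻¹ j|)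
  · intro a ha; exact abs_mem hoτ hsτ ha
  · intro a ha; exact abs_mem hoτ.inv hsτ.inv ha
  · intro a ha
    simp only [Finset.mem_Icc] at ha
    rcases le_or_gt 0 (τ a) with hp | hn
    · rw [abs_of_nonneg hp, Perm.inv_apply_self, abs_of_nonneg (by omega)]
    · rw [abs_of_neg hn]
      have : -τ a = τ (-a) := (hoτ a).symm
      rw [this, Perm.inv_apply_self, abs_of_nonpos (by omega)]; ring
  · intro a ha
    simp only [Finset.mem_Icc] at ha
    rcases le_or_gt 0 (τ⁻¹ a) with hp | hn
    · rw [abs_of_nonneg hp, Perm.apply_inv_self, abs_of_nonneg (by omega)]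
    · rw [abs_of_neg hn]
      have : -τ⁻¹ a = τ⁻¹ (-a) := (hoτ.inv a).symm
      rw [this, Perm.apply_inv_self, abs_of_nonpos (by omega)]; ring
  · intro a ha; rfl

lemma even_iff_zmod (m : ℕ) : Even m ↔ (m : ZMod 2) = 0 := by
  rw [ZMod.natCast_eq_zero_iff]
  exact ⟨fun h => h.two_dvd, fun h => (even_iff_two_dvd).mpr h⟩

lemma isDn_one (n : ℕ) : IsDn n (1 : Perm ℤ) := by
  refine ⟨fun i => by simp, fun i _ => by simp, ?_⟩
  have : ((Finset.Icc (1 : ℤ) (n : ℤ)).filter fun i => (1 : Perm ℤ) i < 0) = ∅ := by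
    apply Finset.filter_false_of_mem
    intro i hi
    simp only [Finset.mem_Icc] at hi
    simp; omega
  rw [this]; simp

lemma isDn_mul {n : ℕ} {σ τ : Perm ℤ} (h : IsDn n σ) (h' : IsDn n τ) : IsDn n (σ * τ) := by
  obtain ⟨ho, hs, he⟩ := (isDn_iff n σ).mp h
  obtain ⟨ho', hs', he'⟩ := (isDn_iff n τ).mp h'
  rw [isDn_iff]
  refine ⟨OddSym.mul ho ho', Supp.mul hs hs', ?_⟩
  have hz := cnt_mul_zmod (n := n) ho ho' hs'
  rw [even_iff_zmod] at he he' ⊢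
  rw [hz, he, he']; simp

lemma isDn_inv {n : ℕ} {σ : Perm ℤ} (h : IsDn n σ) : IsDn n σ⁻¹ := by
  obtain ⟨ho, hs, he⟩ := (isDn_iff n σ).mp h
  rw [isDn_iff]
  refine ⟨ho.inv, hs.inv, ?_⟩
  have h1 := cnt_mul_zmod (n := n) ho ho.inv hs.inv
  rw [mul_inv_cancel] at h1
  have h0 : Even (cnt n (1 : Perm ℤ)) := ((isDn_iff n 1).mp (isDn_one n)).2.2
  rw [even_iff_zmod] at he h0 ⊢
  rw [h0, he] at h1
  linear_combination -h1

/-! ### ConjugateIn basic properties -/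

lemma ConjugateIn.refl (n : ℕ) (J : Set (Perm ℤ)) : ConjugateIn n J J := by
  refine ⟨1, isDn_one n, ?_⟩
  simp

lemma ConjugateIn.trans {n : ℕ} {J K L : Set (Perm ℤ)}
    (h1 : ConjugateIn n J K) (h2 : ConjugateIn n K L) : ConjugateIn n J L := by
  obtain ⟨σ, hσ, hJK⟩ := h1
  obtain ⟨τ, hτ, hKL⟩ := h2
  refine ⟨σ * τ, isDn_mul hσ hτ, ?_⟩
  rw [← hKL, ← hJK, ← Set.image_comp]
  apply Set.image_congr'
  intro s; simp [mul_assoc]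

lemma ConjugateIn.symm {n : ℕ} {J K : Set (Perm ℤ)}
    (h : ConjugateIn n J K) : ConjugateIn n K J := by
  obtain ⟨σ, hσ, hJK⟩ := h
  refine ⟨σ⁻¹, isDn_inv hσ, ?_⟩
  rw [← hJK, ← Set.image_comp]
  have : ((fun s => (σ⁻¹)⁻¹ * s * σ⁻¹) ∘ fun s => σ⁻¹ * s * σ) = id := by
    funext s; simp [mul_assoc]
  rw [this, Set.image_id]

end DnAux

open Equiv Finset
namespace DnAux

/-! ### Conjugation of generators -/

lemma conj_swap_pair (τ : Perm ℤ) (a b c d : ℤ) :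
    τ * (Equiv.swap a b * Equiv.swap c d) * τ⁻¹
      = Equiv.swap (τ a) (τ b) * Equiv.swap (τ c) (τ d) := by
  rw [Equiv.swap_apply_apply, Equiv.swap_apply_apply]
  group

lemma conj_genD (τ : Perm ℤ) (i : ℕ) (hi : i ≠ 0) :
    τ * genD i * τ⁻¹
      = Equiv.swap (τ (-(i:ℤ)-1)) (τ (-(i:ℤ))) * Equiv.swap (τ (i:ℤ)) (τ ((i:ℤ)+1)) := by
  simp only [genD, if_neg hi]
  exact conj_swap_pair τ _ _ _ _

lemma conj_genD0 (τ : Perm ℤ) :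
    τ * genD 0 * τ⁻¹
      = Equiv.swap (τ (-2 : ℤ)) (τ (1:ℤ)) * Equiv.swap (τ (-1:ℤ)) (τ (2:ℤ)) := by
  simp only [genD, if_pos rfl]
  exact conj_swap_pair τ _ _ _ _

lemma swap_mul_comm {a b c d : ℤ} (h1 : a ≠ c) (h2 : a ≠ d) (h3 : b ≠ c) (h4 : b ≠ d) :
    Equiv.swap a b * Equiv.swap c d = Equiv.swap c d * Equiv.swap a b := by
  ext x
  simp only [Perm.mul_apply, Equiv.swap_apply_def]
  split_ifs <;> omega

lemma oddsym_neg {τ : Perm ℤ} (ho : OddSym τ) (z w : ℤ) (h : τ z = w) : τ (-z) = -w := by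
  rw [ho z, h]

lemma conj_a {τ : Perm ℤ} (ho : OddSym τ) {i j : ℕ} (hi : 1 ≤ i) (hj : 1 ≤ j)
    (h1 : τ (i:ℤ) = (j:ℤ)) (h2 : τ ((i:ℤ)+1) = (j:ℤ)+1) : τ * genD i * τ⁻¹ = genD j := by
  rw [conj_genD τ i (by omega)]
  have e1 : τ (-(i:ℤ)-1) = -(j:ℤ)-1 := by
    have := oddsym_neg ho ((i:ℤ)+1) ((j:ℤ)+1) h2
    rw [show -(i:ℤ)-1 = -((i:ℤ)+1) by ring, this]; ring
  have e2 : τ (-(i:ℤ)) = -(j:ℤ) := oddsym_neg ho _ _ h1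
  rw [e1, e2, h1, h2, genD, if_neg (by omega : j ≠ 0)]

lemma conj_b {τ : Perm ℤ} (ho : OddSym τ) {i j : ℕ} (hi : 1 ≤ i) (hj : 1 ≤ j)
    (h1 : τ (i:ℤ) = -(j:ℤ)) (h2 : τ ((i:ℤ)+1) = -(j:ℤ)-1) : τ * genD i * τ⁻¹ = genD j := by
  rw [conj_genD τ i (by omega)]
  have e1 : τ (-(i:ℤ)-1) = (j:ℤ)+1 := by
    have := oddsym_neg ho ((i:ℤ)+1) (-(j:ℤ)-1) h2
    rw [show -(i:ℤ)-1 = -((i:ℤ)+1) by ring, this]; ring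
  have e2 : τ (-(i:ℤ)) = (j:ℤ) := by
    have := oddsym_neg ho (i:ℤ) (-(j:ℤ)) h1
    rw [this]; ring
  rw [e1, e2, h1, h2, genD, if_neg (by omega : j ≠ 0)]
  rw [show Equiv.swap ((j:ℤ)+1) (j:ℤ) = Equiv.swap (j:ℤ) ((j:ℤ)+1) from Equiv.swap_comm _ _,
    show Equiv.swap (-(j:ℤ)) (-(j:ℤ)-1) = Equiv.swap (-(j:ℤ)-1) (-(j:ℤ)) from Equiv.swap_comm _ _]
  exact swap_mul_comm (by omega) (by omega) (by omega) (by omega)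

lemma conj_c {τ : Perm ℤ} (ho : OddSym τ) {i j : ℕ} (hi : 1 ≤ i) (hj : 1 ≤ j)
    (h1 : τ (i:ℤ) = -(j:ℤ)-1) (h2 : τ ((i:ℤ)+1) = -(j:ℤ)) : τ * genD i * τ⁻¹ = genD j := by
  rw [conj_genD τ i (by omega)]
  have e1 : τ (-(i:ℤ)-1) = (j:ℤ) := by
    have := oddsym_neg ho ((i:ℤ)+1) (-(j:ℤ)) h2
    rw [show -(i:ℤ)-1 = -((i:ℤ)+1) by ring, this]; ring
  have e2 : τ (-(i:ℤ)) = (j:ℤ)+1 := by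
    have := oddsym_neg ho (i:ℤ) (-(j:ℤ)-1) h1
    rw [this]; ring
  rw [e1, e2, h1, h2, genD, if_neg (by omega : j ≠ 0)]
  exact swap_mul_comm (by omega) (by omega) (by omega) (by omega)

lemma conj_0j {τ : Perm ℤ} (ho : OddSym τ) {j : ℕ} (hj : 1 ≤ j)
    (h1 : τ (1:ℤ) = -(j:ℤ)) (h2 : τ (2:ℤ) = (j:ℤ)+1) : τ * genD 0 * τ⁻¹ = genD j := by
  rw [conj_genD0 τ]
  have e1 : τ (-2:ℤ) = -(j:ℤ)-1 := by
    have := oddsym_neg ho (2:ℤ) ((j:ℤ)+1) h2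
    rw [show (-2:ℤ) = -(2:ℤ) by ring, this]; ring
  have e2 : τ (-1:ℤ) = (j:ℤ) := by
    have := oddsym_neg ho (1:ℤ) (-(j:ℤ)) h1
    rw [show (-1:ℤ) = -(1:ℤ) by ring, this]; ring
  rw [e1, e2, h1, h2, genD, if_neg (by omega : j ≠ 0)]

lemma conj_j0 {τ : Perm ℤ} (ho : OddSym τ) {i : ℕ} (hi : 1 ≤ i)
    (h1 : τ (i:ℤ) = -1) (h2 : τ ((i:ℤ)+1) = 2) : τ * genD i * τ⁻¹ = genD 0 := by
  rw [conj_genD τ i (by omega)]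
  have e1 : τ (-(i:ℤ)-1) = -2 := by
    have := oddsym_neg ho ((i:ℤ)+1) 2 h2
    rw [show -(i:ℤ)-1 = -((i:ℤ)+1) by ring, this]
  have e2 : τ (-(i:ℤ)) = 1 := by
    have := oddsym_neg ho (i:ℤ) (-1) h1
    rw [this]; ring
  rw [e1, e2, h1, h2, genD, if_pos rfl]

lemma conj_10 {τ : Perm ℤ} (ho : OddSym τ)
    (h1 : τ (1:ℤ) = 1) (h2 : τ (2:ℤ) = -2) : τ * genD 1 * τ⁻¹ = genD 0 := by
  have h := conj_genD τ 1 (by omega)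
  norm_num at h
  rw [h]
  have e1 : τ (-2:ℤ) = 2 := by
    have := oddsym_neg ho (2:ℤ) (-2) h2
    rw [show (-2:ℤ) = -(2:ℤ) by ring, this]; ring
  have e2 : τ (-1:ℤ) = -1 := by
    have := oddsym_neg ho (1:ℤ) 1 h1
    rw [show (-1:ℤ) = -(1:ℤ) by ring, this]
  rw [e1, e2, h1, h2, genD, if_pos rfl]
  rw [show Equiv.swap (2:ℤ) (-1) = Equiv.swap (-1:ℤ) 2 from Equiv.swap_comm _ _,
    show Equiv.swap (1:ℤ) (-2) = Equiv.swap (-2:ℤ) 1 from Equiv.swap_comm _ _]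
  exact swap_mul_comm (by omega) (by omega) (by omega) (by omega)

lemma conj_00 {τ : Perm ℤ} (ho : OddSym τ)
    (h1 : τ (1:ℤ) = 1) (h2 : τ (2:ℤ) = 2) : τ * genD 0 * τ⁻¹ = genD 0 := by
  rw [conj_genD0 τ]
  have e1 : τ (-2:ℤ) = -2 := by
    have := oddsym_neg ho (2:ℤ) 2 h2
    rw [show (-2:ℤ) = -(2:ℤ) by ring, this]
  have e2 : τ (-1:ℤ) = -1 := by
    have := oddsym_neg ho (1:ℤ) 1 h1
    rw [show (-1:ℤ) = -(1:ℤ) by ring, this]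
  rw [e1, e2, h1, h2, genD, if_pos rfl]

/-! ### master lemma -/

lemma master {n : ℕ} (σ : Perm ℤ) (hσ : IsDn n σ) {A B : Set ℕ} (β : ℕ → ℕ)
    (himg : β '' A = B) (hconj : ∀ i ∈ A, σ⁻¹ * genD i * σ = genD (β i)) :
    ConjugateIn n (genD '' A) (genD '' B) := by
  refine ⟨σ, hσ, ?_⟩
  rw [← Set.image_comp, ← himg]
  have h2 : genD '' (β '' A) = (genD ∘ β) '' A := by rw [Set.image_comp]
  rw [h2]
  apply Set.image_congr
  intro a ha
  exact hconj a ha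

lemma image_eq_of_inv {A B : Set ℕ} (β β' : ℕ → ℕ) (h1 : ∀ i ∈ A, β i ∈ B)
    (h2 : ∀ i ∈ B, β' i ∈ A) (h3 : ∀ i ∈ B, β (β' i) = i) : β '' A = B := by
  apply Set.Subset.antisymm
  · rintro _ ⟨a, ha, rfl⟩; exact h1 a ha
  · intro b hb; exact ⟨β' b, h2 b hb, h3 b hb⟩

/-! ### explicit permutations -/

def mkPerm (f g : ℤ → ℤ) (h1 : ∀ x, g (f x) = x) (h2 : ∀ x, f (g x) = x) : Perm ℤ :=
  ⟨f, g, h1, h2⟩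

def bsFun (s x y : ℕ) (z : ℤ) : ℤ :=
  if (s:ℤ) < z ∧ z ≤ (s:ℤ)+x then z + y
  else if (s:ℤ)+x < z ∧ z ≤ (s:ℤ)+x+y then z - x
  else if (s:ℤ) < -z ∧ -z ≤ (s:ℤ)+x then z - y
  else if (s:ℤ)+x < -z ∧ -z ≤ (s:ℤ)+x+y then z + x
  else z

lemma bs_spec (s x y : ℕ) (z : ℤ) :
    (((s:ℤ) < z ∧ z ≤ (s:ℤ)+x) ∧ bsFun s x y z = z + y) ∨
    (((s:ℤ)+x < z ∧ z ≤ (s:ℤ)+x+y) ∧ bsFun s x y z = z - x) ∨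
    (((s:ℤ) < -z ∧ -z ≤ (s:ℤ)+x) ∧ bsFun s x y z = z - y) ∨
    (((s:ℤ)+x < -z ∧ -z ≤ (s:ℤ)+x+y) ∧ bsFun s x y z = z + x) ∨
    ((¬((s:ℤ) < z ∧ z ≤ (s:ℤ)+x+y) ∧ ¬((s:ℤ) < -z ∧ -z ≤ (s:ℤ)+x+y)) ∧ bsFun s x y z = z) := by
  unfold bsFun; split_ifs <;> omega

lemma bsFun_inv (s x y : ℕ) : ∀ z, bsFun s y x (bsFun s x y z) = z := by
  intro z
  have h1 := bs_spec s x y z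
  have h2 := bs_spec s y x (bsFun s x y z)
  omega

def blockSwapP (s x y : ℕ) : Perm ℤ :=
  mkPerm (bsFun s x y) (bsFun s y x) (bsFun_inv s x y) (bsFun_inv s y x)

lemma blockSwapP_apply (s x y : ℕ) (z : ℤ) : blockSwapP s x y z = bsFun s x y z := rfl

lemma blockSwapP_oddsym (s x y : ℕ) : OddSym (blockSwapP s x y) := by
  intro z
  show bsFun s x y (-z) = - bsFun s x y z
  have h1 := bs_spec s x y z
  have h2 := bs_spec s x y (-z)
  omega

lemma blockSwapP_isDn {n s x y : ℕ} (h : s + x + y ≤ n) : IsDn n (blockSwapP s x y) := by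
  refine ⟨blockSwapP_oddsym s x y, ?_, ?_⟩
  · intro z hz
    show bsFun s x y z = z
    have h1 := bs_spec s x y z
    rcases abs_cases z with ⟨he, _⟩ | ⟨he, _⟩ <;> omega
  · have hfil : ((Finset.Icc (1 : ℤ) (n : ℤ)).filter fun i => blockSwapP s x y i < 0) = ∅ := by
      apply Finset.filter_false_of_mem
      intro i hi
      simp only [Finset.mem_Icc] at hi
      show ¬ bsFun s x y i < 0
      have h1 := bs_spec s x y i
      omega
    rw [hfil]; simp

def m3Fun (a b : ℕ) (z : ℤ) : ℤ :=
  if z = 1 then -(b:ℤ)-1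
  else if 2 ≤ z ∧ z ≤ (a:ℤ) then z + b
  else if z = (a:ℤ)+1 then -1
  else if (a:ℤ)+2 ≤ z ∧ z ≤ (a:ℤ)+b then z - a
  else if z = -1 then (b:ℤ)+1
  else if 2 ≤ -z ∧ -z ≤ (a:ℤ) then z - b
  else if z = -(a:ℤ)-1 then 1
  else if (a:ℤ)+2 ≤ -z ∧ -z ≤ (a:ℤ)+b then z + a
  else z

set_option maxHeartbeats 1600000 in
lemma m3_spec (a b : ℕ) (ha : 2 ≤ a) (z : ℤ) :
    (z = 1 ∧ m3Fun a b z = -(b:ℤ)-1) ∨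
    ((2 ≤ z ∧ z ≤ (a:ℤ)) ∧ m3Fun a b z = z + b) ∨
    (z = (a:ℤ)+1 ∧ m3Fun a b z = -1) ∨
    (((a:ℤ)+2 ≤ z ∧ z ≤ (a:ℤ)+b) ∧ m3Fun a b z = z - a) ∨
    (z = -1 ∧ m3Fun a b z = (b:ℤ)+1) ∨
    ((2 ≤ -z ∧ -z ≤ (a:ℤ)) ∧ m3Fun a b z = z - b) ∨
    (z = -(a:ℤ)-1 ∧ m3Fun a b z = 1) ∨
    (((a:ℤ)+2 ≤ -z ∧ -z ≤ (a:ℤ)+b) ∧ m3Fun a b z = z + a) ∨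
    ((¬(1 ≤ z ∧ z ≤ (a:ℤ)+b) ∧ ¬(1 ≤ -z ∧ -z ≤ (a:ℤ)+b)) ∧ m3Fun a b z = z) := by
  unfold m3Fun; split_ifs <;> omega

lemma m3Fun_inv {a b : ℕ} (ha : 2 ≤ a) (hb : 2 ≤ b) : ∀ z, m3Fun b a (m3Fun a b z) = z := by
  intro z
  have h1 := m3_spec a b ha z
  have h2 := m3_spec b a hb (m3Fun a b z)
  omega

def m3Perm (a b : ℕ) (ha : 2 ≤ a) (hb : 2 ≤ b) : Perm ℤ :=
  mkPerm (m3Fun a b) (m3Fun b a) (m3Fun_inv ha hb) (m3Fun_inv hb ha)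

lemma m3Perm_apply (a b : ℕ) (ha : 2 ≤ a) (hb : 2 ≤ b) (z : ℤ) :
    m3Perm a b ha hb z = m3Fun a b z := rfl

lemma m3Perm_oddsym (a b : ℕ) (ha : 2 ≤ a) (hb : 2 ≤ b) : OddSym (m3Perm a b ha hb) := by
  intro z
  show m3Fun a b (-z) = - m3Fun a b z
  have h1 := m3_spec a b ha z
  have h2 := m3_spec a b ha (-z)
  omega

lemma m3Perm_isDn {n a b : ℕ} (ha : 2 ≤ a) (hb : 2 ≤ b) (h : a + b ≤ n) :
    IsDn n (m3Perm a b ha hb) := by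
  refine ⟨m3Perm_oddsym a b ha hb, ?_, ?_⟩
  · intro z hz
    show m3Fun a b z = z
    have h1 := m3_spec a b ha z
    rcases abs_cases z with ⟨he, _⟩ | ⟨he, _⟩ <;> omega
  · have hfil : ((Finset.Icc (1 : ℤ) (n : ℤ)).filter fun i => m3Perm a b ha hb i < 0)
        = {1, (a:ℤ)+1} := by
      ext i
      simp only [Finset.mem_filter, Finset.mem_Icc, Finset.mem_insert, Finset.mem_singleton]
      have h1 := m3_spec a b ha i
      constructor
      · rintro ⟨⟨hi1, hi2⟩, hlt⟩
        replace hlt : m3Fun a b i < 0 := hlt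
        omega
      · intro hi
        refine ⟨⟨by omega, by omega⟩, ?_⟩
        show m3Fun a b i < 0
        omega
    rw [hfil]
    rw [Finset.card_insert_of_notMem (by simp; omega), Finset.card_singleton]
    exact ⟨1, rfl⟩

def m4Fun (a : ℕ) (z : ℤ) : ℤ :=
  if (2 ≤ z ∧ z ≤ (a:ℤ)) ∨ (2 ≤ -z ∧ -z ≤ (a:ℤ)) then -z else z

lemma m4_spec (a : ℕ) (z : ℤ) :
    (((2 ≤ z ∧ z ≤ (a:ℤ)) ∨ (2 ≤ -z ∧ -z ≤ (a:ℤ))) ∧ m4Fun a z = -z) ∨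
    ((¬(2 ≤ z ∧ z ≤ (a:ℤ)) ∧ ¬(2 ≤ -z ∧ -z ≤ (a:ℤ))) ∧ m4Fun a z = z) := by
  unfold m4Fun; split_ifs <;> omega

lemma m4Fun_inv (a : ℕ) : ∀ z, m4Fun a (m4Fun a z) = z := by
  intro z
  have h1 := m4_spec a z
  have h2 := m4_spec a (m4Fun a z)
  omega

def m4Perm (a : ℕ) : Perm ℤ := mkPerm (m4Fun a) (m4Fun a) (m4Fun_inv a) (m4Fun_inv a)

lemma m4Perm_apply (a : ℕ) (z : ℤ) : m4Perm a z = m4Fun a z := rfl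

lemma m4Perm_oddsym (a : ℕ) : OddSym (m4Perm a) := by
  intro z
  show m4Fun a (-z) = - m4Fun a z
  have h1 := m4_spec a z
  have h2 := m4_spec a (-z)
  omega

lemma m4Perm_isDn {n a : ℕ} (ha : 2 ≤ a) (h : a ≤ n) (hodd : Odd a) : IsDn n (m4Perm a) := by
  refine ⟨m4Perm_oddsym a, ?_, ?_⟩
  · intro z hz
    show m4Fun a z = z
    have h1 := m4_spec a z
    rcases abs_cases z with ⟨he, _⟩ | ⟨he, _⟩ <;> omega
  · have hfil : ((Finset.Icc (1 : ℤ) (n : ℤ)).filter fun i => m4Perm a i < 0)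
        = Finset.Icc (2:ℤ) (a:ℤ) := by
      ext i
      simp only [Finset.mem_filter, Finset.mem_Icc]
      have h1 := m4_spec a i
      constructor
      · rintro ⟨⟨hi1, hi2⟩, hlt⟩
        replace hlt : m4Fun a i < 0 := hlt
        omega
      · rintro ⟨hh1, hh2⟩
        refine ⟨⟨by omega, by omega⟩, ?_⟩
        show m4Fun a i < 0
        omega
    rw [hfil, Int.card_Icc]
    rw [Nat.even_iff]
    rw [Nat.odd_iff] at hodd
    omega

def m4'Fun (a u e : ℕ) (z : ℤ) : ℤ :=
  if (2 ≤ z ∧ z ≤ (a:ℤ)) ∨ (2 ≤ -z ∧ -z ≤ (a:ℤ)) then -z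
  else if (u:ℤ) < z ∧ z ≤ (u:ℤ)+e then z - (2*(u:ℤ)+e+1)
  else if (u:ℤ) < -z ∧ -z ≤ (u:ℤ)+e then z + (2*(u:ℤ)+e+1)
  else z

lemma m4'_spec (a u e : ℕ) (hau : a ≤ u) (z : ℤ) :
    (((2 ≤ z ∧ z ≤ (a:ℤ)) ∨ (2 ≤ -z ∧ -z ≤ (a:ℤ))) ∧ m4'Fun a u e z = -z) ∨
    (((u:ℤ) < z ∧ z ≤ (u:ℤ)+e) ∧ m4'Fun a u e z = z - (2*(u:ℤ)+e+1)) ∨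
    (((u:ℤ) < -z ∧ -z ≤ (u:ℤ)+e) ∧ m4'Fun a u e z = z + (2*(u:ℤ)+e+1)) ∨
    ((¬(2 ≤ z ∧ z ≤ (a:ℤ)) ∧ ¬(2 ≤ -z ∧ -z ≤ (a:ℤ)) ∧ ¬((u:ℤ) < z ∧ z ≤ (u:ℤ)+e) ∧
      ¬((u:ℤ) < -z ∧ -z ≤ (u:ℤ)+e)) ∧ m4'Fun a u e z = z) := by
  unfold m4'Fun; split_ifs <;> omega

lemma m4'Fun_inv {a u e : ℕ} (hau : a ≤ u) : ∀ z, m4'Fun a u e (m4'Fun a u e z) = z := by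
  intro z
  have h1 := m4'_spec a u e hau z
  have h2 := m4'_spec a u e hau (m4'Fun a u e z)
  omega

def m4'Perm (a u e : ℕ) (hau : a ≤ u) : Perm ℤ :=
  mkPerm (m4'Fun a u e) (m4'Fun a u e) (m4'Fun_inv hau) (m4'Fun_inv hau)

lemma m4'Perm_apply (a u e : ℕ) (hau : a ≤ u) (z : ℤ) : m4'Perm a u e hau z = m4'Fun a u e z := rfl

lemma m4'Perm_oddsym (a u e : ℕ) (hau : a ≤ u) : OddSym (m4'Perm a u e hau) := by
  intro z
  show m4'Fun a u e (-z) = - m4'Fun a u e z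
  have h1 := m4'_spec a u e hau z
  have h2 := m4'_spec a u e hau (-z)
  omega

lemma m4'Perm_isDn {n a u e : ℕ} (ha : 2 ≤ a) (hau : a ≤ u) (h : u + e ≤ n)
    (haeven : Even a) (heodd : Odd e) : IsDn n (m4'Perm a u e hau) := by
  refine ⟨m4'Perm_oddsym a u e hau, ?_, ?_⟩
  · intro z hz
    show m4'Fun a u e z = z
    have h1 := m4'_spec a u e hau z
    rcases abs_cases z with ⟨he, _⟩ | ⟨he, _⟩ <;> omega
  · have hfil : ((Finset.Icc (1 : ℤ) (n : ℤ)).filter fun i => m4'Perm a u e hau i < 0)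
        = Finset.Icc (2:ℤ) (a:ℤ) ∪ Finset.Icc ((u:ℤ)+1) ((u:ℤ)+e) := by
      ext i
      simp only [Finset.mem_filter, Finset.mem_Icc, Finset.mem_union]
      have h1 := m4'_spec a u e hau i
      constructor
      · rintro ⟨⟨hi1, hi2⟩, hlt⟩
        replace hlt : m4'Fun a u e i < 0 := hlt
        omega
      · intro hi
        refine ⟨⟨by omega, by omega⟩, ?_⟩
        show m4'Fun a u e i < 0
        omega
    rw [hfil, Finset.card_union_of_disjoint, Int.card_Icc, Int.card_Icc]
    · rw [Nat.even_iff]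
      rw [Nat.even_iff] at haeven
      rw [Nat.odd_iff] at heodd
      omega
    · rw [Finset.disjoint_left]
      intro i hi hi'
      simp only [Finset.mem_Icc] at hi hi'
      omega

end DnAux

namespace DnAux
open Equiv

/-! ### cuts and index sets -/

def cutsP (p : List ℕ) (i : ℕ) : Prop :=
  ∃ j, 1 ≤ j ∧ j < p.length ∧ i = (p.take j).sum

inductive Flav | A | A' | D
  deriving DecidableEq

def lbF : Flav → ℕ
  | Flav.A => 1
  | Flav.A' => 2
  | Flav.D => 1

def Idx (f : Flav) (p : List ℕ) : Set ℕ :=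
  {i | (f ≠ Flav.A ∧ i = 0) ∨ (lbF f ≤ i ∧ i < p.sum ∧ ¬ cutsP p i)}

lemma sum_take_le (l : List ℕ) (j : ℕ) : (l.take j).sum ≤ l.sum := by
  conv_rhs => rw [← List.take_append_drop j l]
  rw [List.sum_append]
  omega

lemma sum_cons_cons (r : List ℕ) (x y : ℕ) (t : List ℕ) :
    (r ++ x :: y :: t).sum = r.sum + x + y + t.sum := by
  simp [List.sum_append]
  omega

lemma cutsP_append (r : List ℕ) (x y : ℕ) (t : List ℕ) (i : ℕ) :
    cutsP (r ++ x :: y :: t) i ↔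
      (∃ j, 1 ≤ j ∧ j ≤ r.length ∧ i = (r.take j).sum) ∨
      (i = r.sum + x) ∨
      (t ≠ [] ∧ ∃ j, j < t.length ∧ i = r.sum + x + y + (t.take j).sum) := by
  unfold cutsP
  have hlen : (r ++ x :: y :: t).length = r.length + (2 + t.length) := by simp; omega
  constructor
  · rintro ⟨j, hj1, hj2, hje⟩
    rw [hlen] at hj2
    rcases Nat.lt_or_ge j (r.length + 1) with hc | hc
    · left
      refine ⟨j, hj1, by omega, ?_⟩
      rwa [List.take_append_of_le_length (by omega)] at hje
    rcases Nat.eq_or_lt_of_le hc with hc2 | hc2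
    · right; left
      have : j = r.length + 1 := by omega
      subst this
      rw [show r.length + 1 = r.length + 1 from rfl, List.take_length_add_append] at hje
      simp at hje
      omega
    · right; right
      have hj3 : j = r.length + ((j - r.length - 2) + 2) := by omega
      rw [hj3, List.take_length_add_append] at hje
      have htk : (x :: y :: t).take ((j - r.length - 2) + 2) = x :: y :: t.take (j - r.length - 2) := by
        rw [show (j - r.length - 2) + 2 = ((j - r.length - 2) + 1) + 1 from rfl,
          List.take_succ_cons, List.take_succ_cons]
      rw [htk] at hje
      simp [List.sum_append] at hje
      refine ⟨?_, j - r.length - 2, by omega, by omega⟩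
      intro ht
      subst ht
      simp at hj2
      omega
  · rintro (⟨j, hj1, hj2, hje⟩ | he | ⟨ht, j, hj, hje⟩)
    · refine ⟨j, hj1, by omega, ?_⟩
      rwa [List.take_append_of_le_length (by omega)]
    · refine ⟨r.length + 1, by omega, by omega, ?_⟩
      rw [List.take_length_add_append]
      simp
      omega
    · refine ⟨r.length + (j + 2), by omega, ?_, ?_⟩
      · rw [hlen]
        have : 0 < t.length := List.length_pos_iff.mpr ht
        omega
      · rw [List.take_length_add_append]
        have htk : (x :: y :: t).take (j + 2) = x :: y :: t.take j := by
          rw [show j + 2 = (j + 1) + 1 from rfl, List.take_succ_cons, List.take_succ_cons]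
        rw [htk]
        simp [List.sum_append]
        omega

lemma cuts_pos {p : List ℕ} (hpos : ∀ z ∈ p, 0 < z) (i : ℕ) (hc : cutsP p i) : 1 ≤ i := by
  obtain ⟨j, hj1, hj2, hje⟩ := hc
  have : 0 < (p.take j).sum := by
    have hne : p.take j ≠ [] := by
      intro h
      rcases List.take_eq_nil_iff.mp h with h0 | h0
      · omega
      · rw [h0] at hj2; simp at hj2
    obtain ⟨z, hz⟩ := List.exists_mem_of_ne_nil _ hne
    have hz' : z ∈ p := List.mem_of_mem_take hz
    have := hpos z hz'
    have hle := List.single_le_sum (fun a _ => Nat.zero_le a) z hz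
    omega
  omega

end DnAux

namespace DnAux
open Equiv

def bsβ (s x y i : ℕ) : ℕ :=
  if s < i ∧ i < s + x then i + y
  else if s + x < i ∧ i < s + x + y then i - x
  else i

lemma bsβ_spec (s x y i : ℕ) :
    ((s < i ∧ i < s + x) ∧ bsβ s x y i = i + y) ∨
    ((s + x < i ∧ i < s + x + y) ∧ bsβ s x y i = i - x) ∨
    ((¬(s < i ∧ i < s + x) ∧ ¬(s + x < i ∧ i < s + x + y)) ∧ bsβ s x y i = i) := by
  unfold bsβ; split_ifs <;> omega

lemma bsβ_mem (f : Flav) (r : List ℕ) (x y : ℕ) (t : List ℕ) (hx : 1 ≤ x) (hy : 1 ≤ y)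
    (hs2 : f ≠ Flav.A → 2 ≤ r.sum) :
    ∀ i ∈ Idx f (r ++ x :: y :: t), bsβ r.sum x y i ∈ Idx f (r ++ y :: x :: t) := by
  have hlb1 : 1 ≤ lbF f := by cases f <;> simp [lbF]
  have hlb2' : lbF f ≤ 2 := by cases f <;> simp [lbF]
  have hlb2 : lbF f = 1 ∨ 2 ≤ r.sum := by
    cases hf : f
    · left; rfl
    · right; exact hs2 (by simp [hf])
    · left; rfl
  intro i hi
  rcases hi with ⟨hf, rfl⟩ | ⟨hlb, hlt, hnc⟩
  · left
    refine ⟨hf, ?_⟩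
    have := bsβ_spec r.sum x y 0
    omega
  · right
    have hsum := sum_cons_cons r x y t
    have hsum' := sum_cons_cons r y x t
    have hsp := bsβ_spec r.sum x y i
    have hn1 : ∀ j, 1 ≤ j → j ≤ r.length → i ≠ (r.take j).sum := fun j h1 h2 he =>
      hnc ((cutsP_append r x y t i).mpr (Or.inl ⟨j, h1, h2, he⟩))
    have hn2 : i ≠ r.sum + x := fun he =>
      hnc ((cutsP_append r x y t i).mpr (Or.inr (Or.inl he)))
    have hn3 : ∀ j, t ≠ [] → j < t.length → i ≠ r.sum + x + y + (t.take j).sum :=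
      fun j ht hj he => hnc ((cutsP_append r x y t i).mpr (Or.inr (Or.inr ⟨ht, j, hj, he⟩)))
    refine ⟨by omega, by omega, ?_⟩
    intro hcq
    rw [cutsP_append] at hcq
    rcases hsp with ⟨⟨hp1, hp2⟩, hv⟩ | ⟨⟨hp1, hp2⟩, hv⟩ | ⟨⟨hp1, hp2⟩, hv⟩ <;>
      rcases hcq with ⟨j, hj1, hj2, hje⟩ | he | ⟨ht, j, hj, hje⟩
    · have hle := sum_take_le r j; omega
    · omega
    · omega
    · have hle := sum_take_le r j; omega
    · omega
    · omega
    · exact hn1 j hj1 hj2 (by omega)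
    · exact hn2 (by omega)
    · exact hn3 j ht hj (by omega)

lemma bsβ_inv_on (f : Flav) (r : List ℕ) (x y : ℕ) (t : List ℕ) (hx : 1 ≤ x) (hy : 1 ≤ y) :
    ∀ i ∈ Idx f (r ++ y :: x :: t), bsβ r.sum x y (bsβ r.sum y x i) = i := by
  intro i hi
  have h1 := bsβ_spec r.sum y x i
  have h2 := bsβ_spec r.sum x y (bsβ r.sum y x i)
  rcases hi with ⟨hf, rfl⟩ | ⟨hlb, hlt, hnc⟩
  · omega
  · have hn2 : i ≠ r.sum + y := fun he =>
      hnc ((cutsP_append r y x t i).mpr (Or.inr (Or.inl he)))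
    omega

lemma blockSwapP_inv (s x y : ℕ) : (blockSwapP s x y)⁻¹ = blockSwapP s y x :=
  Equiv.ext fun _ => rfl

lemma bs_conj (f : Flav) (r : List ℕ) (x y : ℕ) (t : List ℕ) (hx : 1 ≤ x) (hy : 1 ≤ y)
    (hs2 : f ≠ Flav.A → 2 ≤ r.sum) :
    ∀ i ∈ Idx f (r ++ x :: y :: t),
      (blockSwapP r.sum y x)⁻¹ * genD i * (blockSwapP r.sum y x) = genD (bsβ r.sum x y i) := by
  intro i hi
  rw [blockSwapP_inv r.sum y x, ← blockSwapP_inv r.sum x y]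
  set s := r.sum with hs
  have ho := blockSwapP_oddsym s x y
  rcases hi with ⟨hf, rfl⟩ | ⟨hlb, hlt, hnc⟩
  · have hβ : bsβ s x y 0 = 0 := by have := bsβ_spec s x y 0; omega
    rw [hβ]
    have hs2' := hs2 hf
    apply conj_00 ho
    · show bsFun s x y 1 = 1
      have := bs_spec s x y 1; omega
    · show bsFun s x y 2 = 2
      have := bs_spec s x y 2; omega
  · have hsum := sum_cons_cons r x y t
    have hns : i ≠ s ∨ s = 0 := by
      by_cases hr : r = []
      · right; rw [hs, hr]; rfl
      · left
        intro he
        apply hnc ((cutsP_append r x y t i).mpr (Or.inl ⟨r.length, ?_, le_refl _, ?_⟩))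
        · exact List.length_pos_iff.mpr hr
        · rw [List.take_length]; exact he
    have hn2 : i ≠ s + x := fun he =>
      hnc ((cutsP_append r x y t i).mpr (Or.inr (Or.inl he)))
    have hn3 : i ≠ s + x + y := by
      by_cases ht : t = []
      · subst ht
        have h0 : ([] : List ℕ).sum = 0 := rfl
        omega
      · intro he
        apply hnc ((cutsP_append r x y t i).mpr (Or.inr (Or.inr ⟨ht, 0, ?_, ?_⟩)))
        · exact List.length_pos_iff.mpr ht
        · simpa using he
    have hlb1 : 1 ≤ lbF f := by cases f <;> simp [lbF]
    have hsp := bsβ_spec s x y i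
    have hbs1 := bs_spec s x y (i:ℤ)
    have hbs2 := bs_spec s x y ((i:ℤ)+1)
    -- case split on the region of i
    rcases (show (1 ≤ i ∧ i + 1 ≤ s) ∨ (s < i ∧ i < s + x) ∨ (s + x < i ∧ i < s + x + y)
        ∨ (s + x + y < i) ∨ i = s ∨ i = s + x ∨ i = s + x + y from by omega) with
      ⟨h1, h2⟩ | ⟨h1, h2⟩ | ⟨h1, h2⟩ | h1 | h1 | h1 | h1
    · have hβ : bsβ s x y i = i := by omega
      rw [hβ]
      apply conj_a ho (by omega) (by omega)
      · show bsFun s x y (i:ℤ) = (i:ℤ); omega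
      · show bsFun s x y ((i:ℤ)+1) = (i:ℤ)+1; omega
    · have hβ : bsβ s x y i = i + y := by omega
      rw [hβ]
      apply conj_a ho (by omega) (by omega)
      · show bsFun s x y (i:ℤ) = ((i + y : ℕ) : ℤ); push_cast; omega
      · show bsFun s x y ((i:ℤ)+1) = ((i + y : ℕ) : ℤ) + 1; push_cast; omega
    · have hβ : bsβ s x y i = i - x := by omega
      rw [hβ]
      apply conj_a ho (by omega) (by omega)
      · show bsFun s x y (i:ℤ) = ((i - x : ℕ) : ℤ); push_cast [Nat.le_of_lt (by omega : x < i)]; omega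
      · show bsFun s x y ((i:ℤ)+1) = ((i - x : ℕ) : ℤ) + 1; push_cast [Nat.le_of_lt (by omega : x < i)]; omega
    · have hβ : bsβ s x y i = i := by omega
      rw [hβ]
      apply conj_a ho (by omega) (by omega)
      · show bsFun s x y (i:ℤ) = (i:ℤ); omega
      · show bsFun s x y ((i:ℤ)+1) = (i:ℤ)+1; omega
    · omega
    · omega
    · omega

lemma conj_swap_move {n : ℕ} (f : Flav) (r : List ℕ) (x y : ℕ) (t : List ℕ)
    (hx : 1 ≤ x) (hy : 1 ≤ y) (hs2 : f ≠ Flav.A → 2 ≤ r.sum)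
    (hn : (r ++ x :: y :: t).sum = n) :
    ConjugateIn n (genD '' Idx f (r ++ x :: y :: t)) (genD '' Idx f (r ++ y :: x :: t)) := by
  apply master (blockSwapP r.sum y x) ?_ (bsβ r.sum x y) ?_
    (bs_conj f r x y t hx hy hs2)
  · apply blockSwapP_isDn
    have := sum_cons_cons r x y t
    omega
  · exact image_eq_of_inv _ (bsβ r.sum y x) (bsβ_mem f r x y t hx hy hs2)
      (bsβ_mem f r y x t hy hx hs2) (bsβ_inv_on f r x y t hx hy)

end DnAux

namespace DnAux
open Equiv

lemma cutsP_cons (a : ℕ) (t : List ℕ) (i : ℕ) :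
    cutsP (a :: t) i ↔ (t ≠ [] ∧ i = a) ∨ (∃ j, 1 ≤ j ∧ j < t.length ∧ i = a + (t.take j).sum) := by
  unfold cutsP
  constructor
  · rintro ⟨j, hj1, hj2, hje⟩
    simp only [List.length_cons] at hj2
    rcases Nat.eq_or_lt_of_le hj1 with h1 | h1
    · left
      constructor
      · intro ht; subst ht; simp at hj2; omega
      · rw [← h1] at hje; simpa using hje
    · right
      refine ⟨j - 1, by omega, by omega, ?_⟩
      have hj3 : j = (j - 1) + 1 := by omega
      rw [hj3, List.take_succ_cons] at hje
      simpa using hje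
  · rintro (⟨ht, he⟩ | ⟨j, hj1, hj2, hje⟩)
    · refine ⟨1, le_refl _, ?_, by simpa using he⟩
      simp only [List.length_cons]
      have := List.length_pos_iff.mpr ht
      omega
    · refine ⟨j + 1, by omega, by simp; omega, ?_⟩
      rw [List.take_succ_cons]
      simpa using hje

lemma ConjugateIn.of_eq {n : ℕ} {J K : Set (Perm ℤ)} (h : J = K) : ConjugateIn n J K := by
  rw [h]; exact ConjugateIn.refl n K

lemma conj_perm_suffix {n : ℕ} (f : Flav) {p q : List ℕ} (hpq : p.Perm q) :
    ∀ r : List ℕ, (∀ z ∈ p, 0 < z) → (f ≠ Flav.A → 2 ≤ r.sum) → (r ++ p).sum = n →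
    ConjugateIn n (genD '' Idx f (r ++ p)) (genD '' Idx f (r ++ q)) := by
  induction hpq with
  | nil => intro r _ _ _; exact ConjugateIn.refl n _
  | cons z hperm ih =>
    intro r hpos hs2 hn
    rename_i l₁ l₂
    have e1 : r ++ z :: l₁ = (r ++ [z]) ++ l₁ := by simp
    have e2 : r ++ z :: l₂ = (r ++ [z]) ++ l₂ := by simp
    rw [e1, e2]
    apply ih (r ++ [z])
    · intro w hw; exact hpos w (List.mem_cons_of_mem z hw)
    · intro hf
      have := hs2 hf
      simp [List.sum_append]
      omega
    · rw [← e1]; exact hn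
  | swap x y l =>
    intro r hpos hs2 hn
    exact conj_swap_move f r y x l (hpos y (by simp)) (hpos x (by simp)) hs2 hn
  | trans h1 h2 ih1 ih2 =>
    intro r hpos hs2 hn
    refine ConjugateIn.trans (ih1 r hpos hs2 hn) (ih2 r ?_ hs2 ?_)
    · intro w hw; exact hpos w (h1.mem_iff.mpr hw)
    · rw [List.sum_append] at hn ⊢
      rw [← h1.sum_eq]
      exact hn

/-! ### the A' head swap move -/

def m3β (a b i : ℕ) : ℕ :=
  if i = 0 then b + 1
  else if 2 ≤ i ∧ i ≤ a - 1 then i + b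
  else if i = a + 1 then 0
  else if a + 2 ≤ i ∧ i ≤ a + b - 1 then i - a
  else i

lemma m3β_spec (a b i : ℕ) (ha : 2 ≤ a) :
    (i = 0 ∧ m3β a b i = b + 1) ∨
    ((2 ≤ i ∧ i ≤ a - 1) ∧ m3β a b i = i + b) ∨
    (i = a + 1 ∧ m3β a b i = 0) ∨
    ((a + 2 ≤ i ∧ i ≤ a + b - 1) ∧ m3β a b i = i - a) ∨
    ((i = 1 ∨ i = a ∨ (a + b ≤ i)) ∧ m3β a b i = i) := by
  unfold m3β; split_ifs <;> omega

-- cut structure for (a :: b :: t), extracted in omega-friendly form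
lemma cuts_cc_out {a b : ℕ} {t : List ℕ} {i : ℕ} (hnc : ¬ cutsP (a :: b :: t) i) :
    i ≠ a ∧ (∀ j, t ≠ [] → j < t.length → i ≠ a + b + (t.take j).sum) := by
  constructor
  · intro he
    exact hnc ((cutsP_append [] a b t i).mpr (Or.inr (Or.inl (by simpa using he))))
  · intro j h1 h2 he
    exact hnc ((cutsP_append [] a b t i).mpr (Or.inr (Or.inr ⟨h1, j, h2, by simpa using he⟩)))

lemma cuts_cc_in {a b : ℕ} {t : List ℕ} {i : ℕ} (hc : cutsP (a :: b :: t) i) :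
    i = a ∨ (t ≠ [] ∧ ∃ j, j < t.length ∧ i = a + b + (t.take j).sum) := by
  rcases (cutsP_append [] a b t i).mp hc with ⟨j, hj1, hj2, _⟩ | he | ⟨ht, j, hj, hje⟩
  · simp at hj2; omega
  · left; simpa using he
  · right; exact ⟨ht, j, hj, by simpa using hje⟩

lemma sum_cc (a b : ℕ) (t : List ℕ) : (a :: b :: t).sum = a + b + t.sum := by
  simp; omega

lemma m3β_mem {a b : ℕ} (t : List ℕ) (ha : 2 ≤ a) (hb : 2 ≤ b) :
    ∀ i ∈ Idx Flav.A' (a :: b :: t), m3β a b i ∈ Idx Flav.A' (b :: a :: t) := by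
  intro i hi
  have hlbv : lbF Flav.A' = 2 := rfl
  have hsum := sum_cc a b t
  have hsum' := sum_cc b a t
  have hsp := m3β_spec a b i ha
  rcases hi with ⟨hf, rfl⟩ | ⟨hlb, hlt, hnc⟩
  · right
    refine ⟨by omega, by omega, ?_⟩
    intro hc
    rcases cuts_cc_in hc with he | ⟨ht, j, hj, hje⟩ <;> omega
  · obtain ⟨hna, hnab⟩ := cuts_cc_out hnc
    clear hnc
    simp only [lbF] at hlb
    rcases (show 2 ≤ i from hlb) with _
    by_cases hia1 : i = a + 1
    · left
      refine ⟨by simp, by omega⟩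
    right
    refine ⟨by omega, by omega, ?_⟩
    intro hc
    rcases cuts_cc_in hc with he | ⟨ht, j, hj, hje⟩
    · omega
    · exact hnab j ht hj (by omega)

lemma m3β_inv_on {a b : ℕ} (t : List ℕ) (ha : 2 ≤ a) (hb : 2 ≤ b) :
    ∀ i ∈ Idx Flav.A' (b :: a :: t), m3β a b (m3β b a i) = i := by
  intro i hi
  have h1 := m3β_spec b a i hb
  have h2 := m3β_spec a b (m3β b a i) ha
  rcases hi with ⟨hf, rfl⟩ | ⟨hlb, hlt, hnc⟩
  · omega
  · obtain ⟨hnb, _⟩ := cuts_cc_out hnc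
    clear hnc
    simp only [lbF] at hlb
    have hsum := sum_cc b a t
    omega

lemma m3Perm_inv (a b : ℕ) (ha : 2 ≤ a) (hb : 2 ≤ b) :
    (m3Perm b a hb ha)⁻¹ = m3Perm a b ha hb :=
  Equiv.ext fun _ => rfl

lemma m3_conj {a b : ℕ} (t : List ℕ) (ha : 2 ≤ a) (hb : 2 ≤ b) :
    ∀ i ∈ Idx Flav.A' (a :: b :: t),
      (m3Perm b a hb ha)⁻¹ * genD i * (m3Perm b a hb ha) = genD (m3β a b i) := by
  intro i hi
  rw [m3Perm_inv a b ha hb, ← m3Perm_inv b a hb ha]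
  have ho := m3Perm_oddsym a b ha hb
  have hsp := m3β_spec a b i ha
  rcases hi with ⟨hf, rfl⟩ | ⟨hlb, hlt, hnc⟩
  · have hβ : m3β a b 0 = b + 1 := by omega
    rw [hβ]
    apply conj_0j ho (by omega)
    · show m3Fun a b 1 = -((b+1 : ℕ) : ℤ)
      have := m3_spec a b ha (1:ℤ); push_cast; omega
    · show m3Fun a b 2 = ((b+1 : ℕ) : ℤ) + 1
      have := m3_spec a b ha (2:ℤ); push_cast; omega
  · have hsum := sum_cc a b t
    obtain ⟨hna, hnab⟩ := cuts_cc_out hnc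
    have hnab' : i ≠ a + b := by
      by_cases ht : t = []
      · subst ht
        have h0 : ([] : List ℕ).sum = 0 := rfl
        omega
      · intro he
        exact hnab 0 ht (List.length_pos_iff.mpr ht) (by simpa using he)
    clear hnc hnab
    simp only [lbF] at hlb
    have hm1 := m3_spec a b ha (i:ℤ)
    have hm2 := m3_spec a b ha ((i:ℤ)+1)
    rcases (show (2 ≤ i ∧ i ≤ a - 1) ∨ i = a + 1 ∨ (a + 2 ≤ i ∧ i ≤ a + b - 1)
        ∨ (a + b < i) from by omega) with ⟨h1, h2⟩ | h1 | ⟨h1, h2⟩ | h1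
    · have hβ : m3β a b i = i + b := by omega
      rw [hβ]
      apply conj_a ho (by omega) (by omega)
      · show m3Fun a b (i:ℤ) = ((i + b : ℕ) : ℤ); push_cast; omega
      · show m3Fun a b ((i:ℤ)+1) = ((i + b : ℕ) : ℤ) + 1; push_cast; omega
    · have hβ : m3β a b i = 0 := by omega
      rw [hβ]
      apply conj_j0 ho (by omega)
      · show m3Fun a b (i:ℤ) = -1; push_cast; omega
      · show m3Fun a b ((i:ℤ)+1) = 2; push_cast; omega
    · have hβ : m3β a b i = i - a := by omega
      rw [hβ]
      apply conj_a ho (by omega) (by omega)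
      · show m3Fun a b (i:ℤ) = ((i - a : ℕ) : ℤ); push_cast [show a ≤ i by omega]; omega
      · show m3Fun a b ((i:ℤ)+1) = ((i - a : ℕ) : ℤ) + 1; push_cast [show a ≤ i by omega]; omega
    · have hβ : m3β a b i = i := by omega
      rw [hβ]
      apply conj_a ho (by omega) (by omega)
      · show m3Fun a b (i:ℤ) = (i:ℤ); omega
      · show m3Fun a b ((i:ℤ)+1) = (i:ℤ)+1; omega

lemma conj_m3_move {n a b : ℕ} (t : List ℕ) (ha : 2 ≤ a) (hb : 2 ≤ b)
    (hn : (a :: b :: t).sum = n) :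
    ConjugateIn n (genD '' Idx Flav.A' (a :: b :: t)) (genD '' Idx Flav.A' (b :: a :: t)) := by
  apply master (m3Perm b a hb ha) ?_ (m3β a b) ?_ (m3_conj t ha hb)
  · apply m3Perm_isDn hb ha
    have := sum_cc a b t
    omega
  · exact image_eq_of_inv _ (m3β b a) (m3β_mem t ha hb) (m3β_mem t hb ha) (m3β_inv_on t ha hb)

end DnAux

namespace DnAux
open Equiv

def m4β (u e i : ℕ) : ℕ :=
  if i = 1 then 0 else if u < i ∧ i < u + e then 2*u + e - i else i

def m4β' (u e i : ℕ) : ℕ :=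
  if i = 0 then 1 else if u < i ∧ i < u + e then 2*u + e - i else i

lemma m4β_spec (u e i : ℕ) :
    (i = 1 ∧ m4β u e i = 0) ∨
    ((i ≠ 1 ∧ u < i ∧ i < u + e) ∧ m4β u e i = 2*u + e - i) ∨
    ((i ≠ 1 ∧ ¬(u < i ∧ i < u + e)) ∧ m4β u e i = i) := by
  unfold m4β; split_ifs <;> omega

lemma m4β'_spec (u e i : ℕ) :
    (i = 0 ∧ m4β' u e i = 1) ∨
    ((i ≠ 0 ∧ u < i ∧ i < u + e) ∧ m4β' u e i = 2*u + e - i) ∨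
    ((i ≠ 0 ∧ ¬(u < i ∧ i < u + e)) ∧ m4β' u e i = i) := by
  unfold m4β'; split_ifs <;> omega

lemma m4'Perm_inv (a u e : ℕ) (hau : a ≤ u) : (m4'Perm a u e hau)⁻¹ = m4'Perm a u e hau :=
  Equiv.ext fun _ => rfl

lemma cuts_c_out {a : ℕ} {t : List ℕ} {i : ℕ} (hnc : ¬ cutsP (a :: t) i) :
    (t ≠ [] → i ≠ a) ∧ (∀ j, 1 ≤ j → j < t.length → i ≠ a + (t.take j).sum) := by
  constructor
  · intro ht he
    exact hnc ((cutsP_cons a t i).mpr (Or.inl ⟨ht, he⟩))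
  · intro j h1 h2 he
    exact hnc ((cutsP_cons a t i).mpr (Or.inr ⟨j, h1, h2, he⟩))

lemma cross_core {n a u e : ℕ} (t : List ℕ) (ha : 2 ≤ a) (hau : a ≤ u)
    (hn : (a :: t).sum = n)
    (hue : u + e ≤ n)
    (hgapcut : ∀ i, u < i → i < u + e → ¬ cutsP (a :: t) i)
    (huc : u = a ∨ cutsP (a :: t) u)
    (huec : u + e = n ∨ cutsP (a :: t) (u + e))
    (hIsDn : IsDn n (m4'Perm a u e hau)) :
    ConjugateIn n (genD '' Idx Flav.A (a :: t)) (genD '' Idx Flav.A' (a :: t)) := by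
  have hlbA : lbF Flav.A = 1 := rfl
  have hlbA' : lbF Flav.A' = 2 := rfl
  have hcut2 : ∀ i, cutsP (a :: t) i → 2 ≤ i := by
    intro i hc
    rcases (cutsP_cons a t i).mp hc with ⟨ht, he⟩ | ⟨j, hj1, hj2, hje⟩
    · omega
    · omega
  -- i = a is never in either index set
  have hna : ∀ i, i < n → ¬ cutsP (a :: t) i → i ≠ a := by
    intro i hlt hnc he
    by_cases ht : t = []
    · subst ht
      simp at hn
      omega
    · exact (cuts_c_out hnc).1 ht he
  have hnu : ∀ i, i < n → ¬ cutsP (a :: t) i → i ≠ u := by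
    intro i hlt hnc he
    rcases huc with h | h
    · exact hna i hlt hnc (by omega)
    · exact hnc (he ▸ h)
  have hnue : ∀ i, i < n → ¬ cutsP (a :: t) i → i ≠ u + e := by
    intro i hlt hnc he
    rcases huec with h | h
    · omega
    · exact hnc (he ▸ h)
  apply master (m4'Perm a u e hau) hIsDn (m4β u e) ?_ ?_
  · -- image equality
    apply image_eq_of_inv _ (m4β' u e)
    · -- forward membership
      intro i hi
      rcases hi with ⟨hf, _⟩ | ⟨hlb, hlt, hnc⟩
      · simp at hf
      have hsp := m4β_spec u e i
      have hia := hna i (by omega) hnc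
      by_cases hi1 : i = 1
      · left
        refine ⟨by simp, by omega⟩
      · right
        rw [hlbA] at hlb
        refine ⟨?_, by omega, ?_⟩
        · -- 2 ≤ m4β u e i
          omega
        · intro hc
          rcases (show (i ≠ 1 ∧ u < i ∧ i < u + e) ∧ m4β u e i = 2*u + e - i from by
              rcases hsp with h | h | h
              · omega
              · exact h
              · exfalso; rw [h.2] at hc; exact hnc hc) with ⟨⟨_, hu1, hu2⟩, hv⟩
          exact hgapcut (m4β u e i) (by omega) (by omega) hc
    · -- backward membership
      intro i hi
      rcases hi with ⟨hf, rfl⟩ | ⟨hlb, hlt, hnc⟩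
      · right
        have hβ : m4β' u e 0 = 1 := by have := m4β'_spec u e 0; omega
        rw [hβ, hlbA]
        refine ⟨by omega, by omega, ?_⟩
        intro hc
        have := hcut2 1 hc
        omega
      · have hsp := m4β'_spec u e i
        have hia := hna i (by omega) hnc
        rw [hlbA'] at hlb
        right
        rw [hlbA]
        refine ⟨by omega, by omega, ?_⟩
        intro hc
        rcases (show (i ≠ 0 ∧ u < i ∧ i < u + e) ∧ m4β' u e i = 2*u + e - i from by
            rcases hsp with h | h | h
            · omega
            · exact h
            · exfalso; rw [h.2] at hc; exact hnc hc) with ⟨⟨_, hu1, hu2⟩, hv⟩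
        exact hgapcut (m4β' u e i) (by omega) (by omega) hc
    · -- inverse identity on the A' side
      intro i hi
      rcases hi with ⟨hf, rfl⟩ | ⟨hlb, hlt, hnc⟩
      · have h1 := m4β'_spec u e 0
        have h2 := m4β_spec u e (m4β' u e 0)
        omega
      · have h1 := m4β'_spec u e i
        have h2 := m4β_spec u e (m4β' u e i)
        rw [hlbA'] at hlb
        omega
  · -- conjugation facts
    intro i hi
    suffices h : m4'Perm a u e hau * genD i * (m4'Perm a u e hau)⁻¹ = genD (m4β u e i) by
      rw [m4'Perm_inv a u e hau] at h
      rw [m4'Perm_inv a u e hau]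
      exact h
    have ho := m4'Perm_oddsym a u e hau
    have hm1 := m4'_spec a u e hau (i:ℤ)
    have hm2 := m4'_spec a u e hau ((i:ℤ)+1)
    have hsp := m4β_spec u e i
    rcases hi with ⟨hf, _⟩ | ⟨hlb, hlt, hnc⟩
    · simp at hf
    rw [hlbA] at hlb
    have hia := hna i (by omega) hnc
    have hiu := hnu i (by omega) hnc
    have hiue := hnue i (by omega) hnc
    rcases (show i = 1 ∨ (2 ≤ i ∧ i ≤ a - 1) ∨ (a < i ∧ i < u) ∨ (u < i ∧ i < u + e)
        ∨ (u + e < i) from by omega) with h1 | ⟨h1, h2⟩ | ⟨h1, h2⟩ | ⟨h1, h2⟩ | h1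
    · subst h1
      have hβ : m4β u e 1 = 0 := by omega
      rw [hβ]
      apply conj_10 ho
      · show m4'Fun a u e 1 = 1
        have := m4'_spec a u e hau (1:ℤ); omega
      · show m4'Fun a u e 2 = -2
        have := m4'_spec a u e hau (2:ℤ); omega
    · have hβ : m4β u e i = i := by omega
      rw [hβ]
      apply conj_b ho (by omega) (by omega)
      · show m4'Fun a u e (i:ℤ) = -(i:ℤ); omega
      · show m4'Fun a u e ((i:ℤ)+1) = -(i:ℤ)-1; omega
    · have hβ : m4β u e i = i := by omega
      rw [hβ]
      apply conj_a ho (by omega) (by omega)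
      · show m4'Fun a u e (i:ℤ) = (i:ℤ); omega
      · show m4'Fun a u e ((i:ℤ)+1) = (i:ℤ)+1; omega
    · have hβ : m4β u e i = 2*u + e - i := by omega
      rw [hβ]
      apply conj_c ho (by omega) (by omega)
      · show m4'Fun a u e (i:ℤ) = -((2*u + e - i : ℕ) : ℤ) - 1
        push_cast [show i ≤ 2*u + e by omega]; omega
      · show m4'Fun a u e ((i:ℤ)+1) = -((2*u + e - i : ℕ) : ℤ)
        push_cast [show i ≤ 2*u + e by omega]; omega
    · have hβ : m4β u e i = i := by omega
      rw [hβ]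
      apply conj_a ho (by omega) (by omega)
      · show m4'Fun a u e (i:ℤ) = (i:ℤ); omega
      · show m4'Fun a u e ((i:ℤ)+1) = (i:ℤ)+1; omega

end DnAux

namespace DnAux
open Equiv

lemma m4'Perm_isDn_oddhead {n a : ℕ} (ha : 2 ≤ a) (h : a ≤ n) (hodd : Odd a) :
    IsDn n (m4'Perm a a 0 (le_refl a)) := by
  refine ⟨m4'Perm_oddsym a a 0 (le_refl a), ?_, ?_⟩
  · intro z hz
    show m4'Fun a a 0 z = z
    have h1 := m4'_spec a a 0 (le_refl a) z
    rcases abs_cases z with ⟨he, _⟩ | ⟨he, _⟩ <;> omega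
  · have hfil : ((Finset.Icc (1 : ℤ) (n : ℤ)).filter fun i => m4'Perm a a 0 (le_refl a) i < 0)
        = Finset.Icc (2:ℤ) (a:ℤ) := by
      ext i
      simp only [Finset.mem_filter, Finset.mem_Icc]
      have h1 := m4'_spec a a 0 (le_refl a) i
      constructor
      · rintro ⟨⟨hi1, hi2⟩, hlt⟩
        replace hlt : m4'Fun a a 0 i < 0 := hlt
        omega
      · rintro ⟨hh1, hh2⟩
        refine ⟨⟨by omega, by omega⟩, ?_⟩
        show m4'Fun a a 0 i < 0
        omega
    rw [hfil, Int.card_Icc]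
    rw [Nat.even_iff]
    rw [Nat.odd_iff] at hodd
    omega

lemma conj_cross {n a : ℕ} {t : List ℕ} (ha : 2 ≤ a)
    (hodd : ∃ z ∈ a :: t, Odd z) (hn : (a :: t).sum = n) :
    ConjugateIn n (genD '' Idx Flav.A (a :: t)) (genD '' Idx Flav.A' (a :: t)) := by
  have hsum : a + t.sum = n := by simpa using hn
  by_cases hao : Odd a
  · apply cross_core (u := a) (e := 0) t ha (le_refl a) hn (by omega) ?_ ?_ ?_ ?_
    · intro i h1 h2; omega
    · left; rfl
    · by_cases ht : t = []
      · left
        subst ht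
        have h0 : ([] : List ℕ).sum = 0 := rfl
        omega
      · right
        have : a + 0 = a := by omega
        rw [this]
        exact (cutsP_cons a t a).mpr (Or.inl ⟨ht, rfl⟩)
    · exact m4'Perm_isDn_oddhead ha (by omega) hao
  · have hea : Even a := Nat.not_odd_iff_even.mp hao
    obtain ⟨z, hz, hzo⟩ := hodd
    have hzt : z ∈ t := by
      rcases List.mem_cons.mp hz with he | ht
      · exfalso; rw [he] at hzo; exact hao hzo
      · exact ht
    obtain ⟨l1, l2, rfl⟩ := List.append_of_mem hzt
    have h0 : ∀ l : List ℕ, (l ++ z :: l2).sum = l.sum + z + l2.sum := by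
      intro l; simp [List.sum_append]; omega
    have hts := h0 l1
    have hz1 : 1 ≤ z := by
      rcases hzo with ⟨k, hk⟩; omega
    have hgap : ∀ j, ((l1 ++ z :: l2).take j).sum ≤ l1.sum ∨
        l1.sum + z ≤ ((l1 ++ z :: l2).take j).sum := by
      intro j
      rcases le_or_gt j l1.length with hle | hlt
      · left
        rw [List.take_append_of_le_length hle]
        exact sum_take_le l1 j
      · right
        have hj3 : j = l1.length + ((j - l1.length - 1) + 1) := by omega
        rw [hj3, List.take_length_add_append, List.take_succ_cons]
        simp [List.sum_append]
    apply cross_core (u := a + l1.sum) (e := z) _ ha (by omega) hn (by omega) ?_ ?_ ?_ ?_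
    · intro i h1 h2 hc
      rcases (cutsP_cons a (l1 ++ z :: l2) i).mp hc with ⟨ht, he⟩ | ⟨j, hj1, hj2, hje⟩
      · omega
      · have := hgap j
        omega
    · by_cases hl1 : l1 = []
      · left
        subst hl1
        have h00 : ([] : List ℕ).sum = 0 := rfl
        omega
      · right
        apply (cutsP_cons a (l1 ++ z :: l2) (a + l1.sum)).mpr
        right
        refine ⟨l1.length, List.length_pos_iff.mpr hl1, ?_, ?_⟩
        · simp
        · rw [List.take_left]
    · by_cases hl2 : l2 = []
      · left
        subst hl2
        have h00 : ([] : List ℕ).sum = 0 := rfl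
        omega
      · right
        apply (cutsP_cons a (l1 ++ z :: l2) (a + l1.sum + z)).mpr
        right
        refine ⟨l1.length + 1, by omega, ?_, ?_⟩
        · simp
          have := List.length_pos_iff.mpr hl2
          omega
        · rw [List.take_length_add_append, show (1:ℕ) = 0 + 1 from rfl, List.take_succ_cons]
          simp [List.sum_append]
          omega
    · exact m4'Perm_isDn ha (by omega) (by omega) hea hzo

end DnAux

namespace DnAux
open Equiv

lemma conj_perm_A {n : ℕ} {p q : List ℕ} (hpq : p.Perm q) (hpos : ∀ z ∈ p, 0 < z)
    (hn : p.sum = n) :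
    ConjugateIn n (genD '' Idx Flav.A p) (genD '' Idx Flav.A q) :=
  conj_perm_suffix Flav.A hpq [] hpos (fun hf => absurd rfl hf) hn

lemma conj_perm_A' {n : ℕ} {p q : List ℕ} (hpq : p.Perm q) (hpos : ∀ z ∈ p, 0 < z)
    (hp2 : 2 ≤ p.headI) (hq2 : 2 ≤ q.headI) (hn : p.sum = n) :
    ConjugateIn n (genD '' Idx Flav.A' p) (genD '' Idx Flav.A' q) := by
  obtain ⟨a, p', rfl⟩ : ∃ a p', p = a :: p' := by
    cases p with
    | nil => simp [List.headI] at hp2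
    | cons a p' => exact ⟨a, p', rfl⟩
  obtain ⟨b, q', rfl⟩ : ∃ b q', q = b :: q' := by
    cases q with
    | nil => simp [List.headI] at hq2
    | cons b q' => exact ⟨b, q', rfl⟩
  simp only [List.headI] at hp2 hq2
  have hpos' : ∀ z ∈ p', 0 < z := fun z hz => hpos z (List.mem_cons_of_mem a hz)
  by_cases hab : a = b
  · subst hab
    exact conj_perm_suffix Flav.A' hpq.cons_inv [a] hpos'
      (fun _ => by simpa using hp2) hn
  · have hbp : b ∈ p' := by
      have hb : b ∈ a :: p' := hpq.symm.subset (by simp)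
      rcases List.mem_cons.mp hb with h | h
      · exact absurd h.symm hab
      · exact h
    have hper1 : p'.Perm (b :: p'.erase b) := List.perm_cons_erase hbp
    have hpose : ∀ z ∈ b :: p'.erase b, 0 < z := fun z hz =>
      hpos' z (hper1.symm.subset hz)
    have c1 := conj_perm_suffix Flav.A' hper1 [a] hpos' (fun _ => by simpa using hp2) hn
    have hsum2 : (a :: b :: p'.erase b).sum = n := by
      have h1 := hper1.sum_eq
      simp only [List.sum_cons] at h1 hn ⊢
      omega
    have c2 := conj_m3_move (n := n) (p'.erase b) hp2 hq2 hsum2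
    have hper2 : (a :: p'.erase b).Perm q' := by
      have h3 : (b :: a :: p'.erase b).Perm (b :: q') := by
        refine ((List.Perm.swap a b _).trans ?_)
        exact ((hper1.symm.cons a).trans hpq)
      exact h3.cons_inv
    have hsum3 : ([b] ++ a :: p'.erase b).sum = n := by
      simp only [List.singleton_append, List.sum_cons] at hsum2 ⊢
      omega
    have c3 := conj_perm_suffix Flav.A' hper2 [b]
      (fun z hz => by
        rcases List.mem_cons.mp hz with h | h
        · subst h; omega
        · exact hpos' z (List.erase_subset h))
      (fun _ => by simpa using hq2) hsum3
    exact ConjugateIn.trans c1 (ConjugateIn.trans c2 c3)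

lemma conj_cross_chain {n : ℕ} {p q : List ℕ} (hpq : p.Perm q) (hpos : ∀ z ∈ p, 0 < z)
    (hq2 : 2 ≤ q.headI) (hodd : ∃ z ∈ p, Odd z) (hn : p.sum = n) :
    ConjugateIn n (genD '' Idx Flav.A p) (genD '' Idx Flav.A' q) := by
  obtain ⟨b, q', rfl⟩ : ∃ b q', q = b :: q' := by
    cases q with
    | nil => simp [List.headI] at hq2
    | cons b q' => exact ⟨b, q', rfl⟩
  simp only [List.headI] at hq2
  have c1 := conj_perm_A hpq hpos hn
  have hoddq : ∃ z ∈ b :: q', Odd z := by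
    obtain ⟨z, hz, hzo⟩ := hodd
    exact ⟨z, hpq.subset hz, hzo⟩
  have hnq : (b :: q').sum = n := by rw [← hpq.sum_eq]; exact hn
  exact ConjugateIn.trans c1 (conj_cross hq2 hoddq hnq)

/-! ### complement computations -/

lemma compl_full (n : ℕ) (hn : 2 ≤ n) (parts : List ℕ) (hpos : ∀ z ∈ parts, 0 < z)
    (hsum : parts.sum = n) :
    genSetD n \ ({genD 0} ∪ {g | ∃ j, 1 ≤ j ∧ j < parts.length ∧ g = genD ((parts.take j).sum)})
      = genD '' Idx Flav.A parts := by
  ext g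
  constructor
  · rintro ⟨⟨i, hin, rfl⟩, hnc⟩
    simp only [Set.mem_union, Set.mem_singleton_iff, Set.mem_setOf_eq, not_or, not_exists] at hnc
    obtain ⟨hnc0, hncj⟩ := hnc
    refine ⟨i, Or.inr ⟨?_, by omega, ?_⟩, rfl⟩
    · show lbF Flav.A ≤ i
      rcases Nat.eq_zero_or_pos i with h0 | h0
      · subst h0; exact absurd rfl hnc0
      · show 1 ≤ i; omega
    · intro hc
      obtain ⟨j, hj1, hj2, hje⟩ := hc
      have := hncj j
      simp only [not_and] at this
      exact this hj1 hj2 (congrArg genD hje)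
  · rintro ⟨i, hi, rfl⟩
    rcases hi with ⟨hf, _⟩ | ⟨hlb, hlt, hnc⟩
    · simp at hf
    have hlb1 : 1 ≤ i := hlb
    refine ⟨⟨i, by omega, rfl⟩, ?_⟩
    simp only [Set.mem_union, Set.mem_singleton_iff, Set.mem_setOf_eq, not_or, not_exists]
    constructor
    · intro he
      have := genD_injective he
      omega
    · intro j
      simp only [not_and]
      intro hj1 hj2 he
      exact hnc ⟨j, hj1, hj2, genD_injective he⟩

lemma compl_cn' (n : ℕ) (hn : 2 ≤ n) (parts : List ℕ) (hpos : ∀ z ∈ parts, 0 < z)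
    (hsum : parts.sum = n) :
    genSetD n \ ({genD 1} ∪ {g | ∃ j, 1 ≤ j ∧ j < parts.length ∧ g = genD ((parts.take j).sum)})
      = genD '' Idx Flav.A' parts := by
  ext g
  constructor
  · rintro ⟨⟨i, hin, rfl⟩, hnc⟩
    simp only [Set.mem_union, Set.mem_singleton_iff, Set.mem_setOf_eq, not_or, not_exists] at hnc
    obtain ⟨hnc1, hncj⟩ := hnc
    have hi1 : i ≠ 1 := fun he => hnc1 (by rw [he])
    rcases Nat.eq_zero_or_pos i with h0 | h0
    · exact ⟨0, Or.inl ⟨by simp, rfl⟩, by rw [h0]⟩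
    refine ⟨i, Or.inr ⟨?_, by omega, ?_⟩, rfl⟩
    · show lbF Flav.A' ≤ i
      show 2 ≤ i; omega
    · intro hc
      obtain ⟨j, hj1, hj2, hje⟩ := hc
      have := hncj j
      simp only [not_and] at this
      exact this hj1 hj2 (congrArg genD hje)
  · rintro ⟨i, hi, rfl⟩
    rcases hi with ⟨hf, rfl⟩ | ⟨hlb, hlt, hnc⟩
    · refine ⟨⟨0, by omega, rfl⟩, ?_⟩
      simp only [Set.mem_union, Set.mem_singleton_iff, Set.mem_setOf_eq, not_or, not_exists]
      constructor
      · intro he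
        have := genD_injective he
        omega
      · intro j
        simp only [not_and]
        intro hj1 hj2 he
        have h0 := genD_injective he
        have := cuts_pos hpos ((parts.take j).sum) ⟨j, hj1, hj2, rfl⟩
        omega
    · have hlb2 : 2 ≤ i := hlb
      refine ⟨⟨i, by omega, rfl⟩, ?_⟩
      simp only [Set.mem_union, Set.mem_singleton_iff, Set.mem_setOf_eq, not_or, not_exists]
      constructor
      · intro he
        have := genD_injective he
        omega
      · intro j
        simp only [not_and]
        intro hj1 hj2 he
        exact hnc ⟨j, hj1, hj2, genD_injective he⟩

lemma compl_lt (n : ℕ) (hn : 2 ≤ n) (parts : List ℕ) (hpos : ∀ z ∈ parts, 0 < z)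
    (hv : parts.sum + 2 ≤ n) :
    genSetD n \ {g | ∃ j < parts.length, g = genD (n - parts.sum + (parts.take j).sum)}
      = genD '' Idx Flav.D ((n - parts.sum) :: parts) := by
  have hcut : ∀ i, cutsP ((n - parts.sum) :: parts) i ↔
      ∃ j < parts.length, i = n - parts.sum + (parts.take j).sum := by
    intro i
    rw [cutsP_cons]
    constructor
    · rintro (⟨ht, he⟩ | ⟨j, hj1, hj2, hje⟩)
      · exact ⟨0, List.length_pos_iff.mpr ht, by simpa using he⟩
      · exact ⟨j, hj2, hje⟩
    · rintro ⟨j, hj, hje⟩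
      rcases Nat.eq_zero_or_pos j with h0 | h0
      · subst h0
        left
        refine ⟨?_, by simpa using hje⟩
        intro ht; rw [ht] at hj; simp at hj
      · exact Or.inr ⟨j, h0, hj, hje⟩
  have hsum : ((n - parts.sum) :: parts).sum = n := by
    simp only [List.sum_cons]; omega
  ext g
  constructor
  · rintro ⟨⟨i, hin, rfl⟩, hnc⟩
    simp only [Set.mem_setOf_eq, not_exists] at hnc
    refine ⟨i, ?_, rfl⟩
    rcases Nat.eq_zero_or_pos i with h0 | h0
    · exact Or.inl ⟨by simp, h0⟩
    refine Or.inr ⟨h0, by omega, ?_⟩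
    intro hc
    obtain ⟨j, hj, hje⟩ := (hcut i).mp hc
    have := hnc j
    simp only [not_and] at this
    exact this hj (congrArg genD hje)
  · rintro ⟨i, hi, rfl⟩
    have hin : i < n := by
      rcases hi with ⟨_, rfl⟩ | ⟨_, hlt, _⟩
      · omega
      · omega
    refine ⟨⟨i, hin, rfl⟩, ?_⟩
    simp only [Set.mem_setOf_eq, not_exists]
    intro j
    simp only [not_and]
    intro hj he
    have hij := genD_injective he
    rcases hi with ⟨_, rfl⟩ | ⟨hlb, hlt, hnc⟩
    · omega
    · exact hnc ((hcut i).mpr ⟨j, hj, hij⟩)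

end DnAux

open DnAux

/-- If `κ, ν ∈ C(n)` satisfy `κ ≈ ν`, then the subsets `J, K ⊆ S` whose
complements correspond to `κ, ν` under the natural correspondence are conjugate
in `D_n`. -/
theorem stmt_4 (n : ℕ) (hn : 2 ≤ n) (κ ν : CompD n) (h : approxD κ ν)
    (J K : Set (Equiv.Perm ℤ)) (hJ : J ⊆ genSetD n) (hK : K ⊆ genSetD n)
    (hκ : corrD n κ = genSetD n \ J) (hν : corrD n ν = genSetD n \ K) :
    ConjugateIn n J K := by
  obtain ⟨hperm, hexc⟩ := h
  obtain ⟨tκ, pκ, posκ, valκ⟩ := κ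
  obtain ⟨tν, pν, posν, valν⟩ := ν
  have hJ' : J = genSetD n \ corrD n ⟨tκ, pκ, posκ, valκ⟩ := by
    rw [hκ, Set.diff_diff_cancel_left hJ]
  have hK' : K = genSetD n \ corrD n ⟨tν, pν, posν, valν⟩ := by
    rw [hν, Set.diff_diff_cancel_left hK]
  rw [hJ', hK']
  have hperm' : pκ.Perm pν := hperm
  have hsum_eq : pκ.sum = pν.sum := hperm'.sum_eq
  have hheadmem : ∀ p : List ℕ, p.sum = n → p.headI ∈ p := by
    intro p hp
    cases p with
    | nil => simp at hp; omega
    | cons a t => simp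
  cases tκ <;> cases tν
  -- (lt, lt)
  · have hvκ : pκ.sum + 2 ≤ n := valκ
    have hvν : pν.sum + 2 ≤ n := valν
    have e1 : genSetD n \ corrD n ⟨CTag.lt, pκ, posκ, valκ⟩
        = genD '' Idx Flav.D ((n - pκ.sum) :: pκ) := compl_lt n hn pκ posκ hvκ
    have e2 : genSetD n \ corrD n ⟨CTag.lt, pν, posν, valν⟩
        = genD '' Idx Flav.D ((n - pν.sum) :: pν) := compl_lt n hn pν posν hvν
    rw [e1, e2, show n - pν.sum = n - pκ.sum by omega]
    exact conj_perm_suffix Flav.D hperm' [n - pκ.sum] posκ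
      (fun _ => by simp; omega) (by simp; omega)
  -- (lt, one)
  · exfalso; have hvκ : pκ.sum + 2 ≤ n := valκ
    have hvν : pν.sum = n ∧ pν.headI = 1 := valν
    omega
  -- (lt, cn)
  · exfalso; have hvκ : pκ.sum + 2 ≤ n := valκ
    have hvν : pν.sum = n ∧ 2 ≤ pν.headI := valν
    omega
  -- (lt, cn')
  · exfalso; have hvκ : pκ.sum + 2 ≤ n := valκ
    have hvν : pν.sum = n ∧ 2 ≤ pν.headI := valν
    omega
  -- (one, lt)
  · exfalso; have hvκ : pκ.sum = n ∧ pκ.headI = 1 := valκ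
    have hvν : pν.sum + 2 ≤ n := valν
    omega
  -- (one, one)
  · have hvκ : pκ.sum = n ∧ pκ.headI = 1 := valκ
    have hvν : pν.sum = n ∧ pν.headI = 1 := valν
    rw [show genSetD n \ corrD n ⟨CTag.one, pκ, posκ, valκ⟩ = genD '' Idx Flav.A pκ from
        compl_full n hn pκ posκ hvκ.1,
      show genSetD n \ corrD n ⟨CTag.one, pν, posν, valν⟩ = genD '' Idx Flav.A pν from
        compl_full n hn pν posν hvν.1]
    exact conj_perm_A hperm' posκ hvκ.1
  -- (one, cn)
  · have hvκ : pκ.sum = n ∧ pκ.headI = 1 := valκ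
    have hvν : pν.sum = n ∧ 2 ≤ pν.headI := valν
    rw [show genSetD n \ corrD n ⟨CTag.one, pκ, posκ, valκ⟩ = genD '' Idx Flav.A pκ from
        compl_full n hn pκ posκ hvκ.1,
      show genSetD n \ corrD n ⟨CTag.cn, pν, posν, valν⟩ = genD '' Idx Flav.A pν from
        compl_full n hn pν posν hvν.1]
    exact conj_perm_A hperm' posκ hvκ.1
  -- (one, cn')
  · have hvκ : pκ.sum = n ∧ pκ.headI = 1 := valκ
    have hvν : pν.sum = n ∧ 2 ≤ pν.headI := valν
    rw [show genSetD n \ corrD n ⟨CTag.one, pκ, posκ, valκ⟩ = genD '' Idx Flav.A pκ from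
        compl_full n hn pκ posκ hvκ.1,
      show genSetD n \ corrD n ⟨CTag.cn', pν, posν, valν⟩ = genD '' Idx Flav.A' pν from
        compl_cn' n hn pν posν hvν.1]
    refine conj_cross_chain hperm' posκ hvν.2 ⟨1, ?_, odd_one⟩ hvκ.1
    have := hheadmem pκ hvκ.1
    rwa [hvκ.2] at this
  -- (cn, lt)
  · exfalso; have hvκ : pκ.sum = n ∧ 2 ≤ pκ.headI := valκ
    have hvν : pν.sum + 2 ≤ n := valν
    omega
  -- (cn, one)
  · have hvκ : pκ.sum = n ∧ 2 ≤ pκ.headI := valκ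
    have hvν : pν.sum = n ∧ pν.headI = 1 := valν
    rw [show genSetD n \ corrD n ⟨CTag.cn, pκ, posκ, valκ⟩ = genD '' Idx Flav.A pκ from
        compl_full n hn pκ posκ hvκ.1,
      show genSetD n \ corrD n ⟨CTag.one, pν, posν, valν⟩ = genD '' Idx Flav.A pν from
        compl_full n hn pν posν hvν.1]
    exact conj_perm_A hperm' posκ hvκ.1
  -- (cn, cn)
  · have hvκ : pκ.sum = n ∧ 2 ≤ pκ.headI := valκ
    have hvν : pν.sum = n ∧ 2 ≤ pν.headI := valν
    rw [show genSetD n \ corrD n ⟨CTag.cn, pκ, posκ, valκ⟩ = genD '' Idx Flav.A pκ from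
        compl_full n hn pκ posκ hvκ.1,
      show genSetD n \ corrD n ⟨CTag.cn, pν, posν, valν⟩ = genD '' Idx Flav.A pν from
        compl_full n hn pν posν hvν.1]
    exact conj_perm_A hperm' posκ hvκ.1
  -- (cn, cn')
  · have hvκ : pκ.sum = n ∧ 2 ≤ pκ.headI := valκ
    have hvν : pν.sum = n ∧ 2 ≤ pν.headI := valν
    have hodd : ∃ z ∈ pκ, Odd z := by
      by_contra hno
      push_neg at hno
      exact hexc ⟨fun x hx => Nat.not_odd_iff_even.mp (hno x hx), Or.inl ⟨rfl, rfl⟩⟩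
    rw [show genSetD n \ corrD n ⟨CTag.cn, pκ, posκ, valκ⟩ = genD '' Idx Flav.A pκ from
        compl_full n hn pκ posκ hvκ.1,
      show genSetD n \ corrD n ⟨CTag.cn', pν, posν, valν⟩ = genD '' Idx Flav.A' pν from
        compl_cn' n hn pν posν hvν.1]
    exact conj_cross_chain hperm' posκ hvν.2 hodd hvκ.1
  -- (cn', lt)
  · exfalso; have hvκ : pκ.sum = n ∧ 2 ≤ pκ.headI := valκ
    have hvν : pν.sum + 2 ≤ n := valν
    omega
  -- (cn', one)
  · have hvκ : pκ.sum = n ∧ 2 ≤ pκ.headI := valκ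
    have hvν : pν.sum = n ∧ pν.headI = 1 := valν
    rw [show genSetD n \ corrD n ⟨CTag.cn', pκ, posκ, valκ⟩ = genD '' Idx Flav.A' pκ from
        compl_cn' n hn pκ posκ hvκ.1,
      show genSetD n \ corrD n ⟨CTag.one, pν, posν, valν⟩ = genD '' Idx Flav.A pν from
        compl_full n hn pν posν hvν.1]
    apply ConjugateIn.symm
    refine conj_cross_chain hperm'.symm posν hvκ.2 ⟨1, ?_, odd_one⟩ hvν.1
    have := hheadmem pν hvν.1
    rwa [hvν.2] at this
  -- (cn', cn)
  · have hvκ : pκ.sum = n ∧ 2 ≤ pκ.headI := valκ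
    have hvν : pν.sum = n ∧ 2 ≤ pν.headI := valν
    have hodd : ∃ z ∈ pν, Odd z := by
      by_contra hno
      push_neg at hno
      refine hexc ⟨fun x hx => ?_, Or.inr ⟨rfl, rfl⟩⟩
      exact Nat.not_odd_iff_even.mp (hno x (hperm'.subset hx))
    rw [show genSetD n \ corrD n ⟨CTag.cn', pκ, posκ, valκ⟩ = genD '' Idx Flav.A' pκ from
        compl_cn' n hn pκ posκ hvκ.1,
      show genSetD n \ corrD n ⟨CTag.cn, pν, posν, valν⟩ = genD '' Idx Flav.A pν from
        compl_full n hn pν posν hvν.1]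
    apply ConjugateIn.symm
    exact conj_cross_chain hperm'.symm posν hvκ.2 hodd hvν.1
  -- (cn', cn')
  · have hvκ : pκ.sum = n ∧ 2 ≤ pκ.headI := valκ
    have hvν : pν.sum = n ∧ 2 ≤ pν.headI := valν
    rw [show genSetD n \ corrD n ⟨CTag.cn', pκ, posκ, valκ⟩ = genD '' Idx Flav.A' pκ from
        compl_cn' n hn pκ posκ hvκ.1,
      show genSetD n \ corrD n ⟨CTag.cn', pν, posν, valν⟩ = genD '' Idx Flav.A' pν from
        compl_cn' n hn pν posν hvν.1]
    exact conj_perm_A' hperm' posκ hvκ.2 hvν.2 hvκ.1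
end

section
/- For compositions κ = [κ_1,…,κ_k] and ν = [ν_1,…,ν_l] of n, the product in the descent algebra of the symmetric group satisfies B_κ B_ν = Σ_z B_{r(z)}, where the sum is over all l × k matrices z = (z_{ij}) with non-negative integer entries satisfying (1) Σ_i z_{ij} = κ_j for each column j and (2) Σ_j z_{ij} = ν_i for each row i, and r(z) is the composition of n obtained by reading the non-zero entries of z row by row, left to right within each row. -/
/-- The right action of a permutation `σ ∈ S_n` on a word of length `n` in the free
monoid: `(a_1 ⋯ a_n) · σ = a_{σ(1)} ⋯ a_{σ(n)}` (words of other lengths are fixed). -/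
def wordAct {A : Type*} (n : ℕ) (w : FreeMonoid A) (σ : Equiv.Perm (Fin n)) :
    FreeMonoid A :=
  if h : (FreeMonoid.toList w).length = n then
    FreeMonoid.ofList (List.ofFn fun j : Fin n => (FreeMonoid.toList w).get (Fin.cast h.symm (σ j)))
  else w

/-- The bilinear extension of the word action: the right action of the group algebra
`ℚ[S_n]` on the free associative algebra `F = ℚ⟨A⟩` (realized as the monoid algebra of
the free monoid on `A`), correct on the homogeneous component of degree `n`. -/
noncomputable def permAct {A : Type*} (n : ℕ) (P : MonoidAlgebra ℚ (FreeMonoid A))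
    (q : MonoidAlgebra ℚ (Equiv.Perm (Fin n))) : MonoidAlgebra ℚ (FreeMonoid A) :=
  Finsupp.sum P.coeff fun w c => Finsupp.sum q.coeff fun σ d =>
    MonoidAlgebra.single (wordAct n w σ) (c * d)

attribute [local instance 100] LieRing.ofAssociativeRing

/-- The free Lie algebra `L(A)`: the Lie subalgebra of the free associative algebra
(with bracket `[P,Q] = PQ - QP`) generated by the letters of `A`. -/
noncomputable def freeLieD (A : Type*) :
    LieSubalgebra ℚ (MonoidAlgebra ℚ (FreeMonoid A)) :=
  LieSubalgebra.lieSpan ℚ _ {x | ∃ a : A, x = MonoidAlgebra.single (FreeMonoid.of a) 1}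

/-- The descent set of `σ ∈ S_n` (1-indexed): the set of `i ∈ {1,…,n-1}` with
`σ(i) > σ(i+1)`. -/
def descentSetS {n : ℕ} (σ : Equiv.Perm (Fin n)) : Set ℕ :=
  {i | ∃ (_ : 1 ≤ i) (h2 : i < n),
    ((σ ⟨i, h2⟩ : Fin n) : ℕ) < ((σ ⟨i - 1, Nat.lt_of_le_of_lt (Nat.sub_le i 1) h2⟩ : Fin n) : ℕ)}

/-- The set of proper partial sums `{ν_1, ν_1+ν_2, …, ν_1+⋯+ν_{l-1}}` of a
composition `ν = [ν_1,…,ν_l]`. -/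
def partialSumsS (ν : List ℕ) : Set ℕ :=
  {s | ∃ j, 1 ≤ j ∧ j < ν.length ∧ s = (ν.take j).sum}

/-- `B_ν ∈ ℚ[S_n]`: the sum of all permutations whose descent set is contained in
the set of proper partial sums of `ν`. -/
noncomputable def BS (n : ℕ) (ν : List ℕ) : MonoidAlgebra ℚ (Equiv.Perm (Fin n)) :=
  ∑ᶠ σ ∈ {σ : Equiv.Perm (Fin n) | descentSetS σ ⊆ partialSumsS ν},
    MonoidAlgebra.single σ (1 : ℚ)

/-- The composition `r(z)` obtained by reading the non-zero entries of the matrix `z`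
row by row, left to right within each row. -/
def readM {l k : ℕ} (z : Fin l → Fin k → ℕ) : List ℕ :=
  (List.ofFn fun i : Fin l => (List.ofFn fun j : Fin k => z i j).filter fun x => x ≠ 0).flatten


namespace Stmt12

/-- partial sum -/
def psum (c : List ℕ) (j : ℕ) : ℕ := ∑ m ∈ Finset.range j, c.getD m 0

lemma psum_zero (c : List ℕ) : psum c 0 = 0 := by simp [psum]

lemma psum_succ (c : List ℕ) (j : ℕ) : psum c (j + 1) = psum c j + c.getD j 0 :=
  Finset.sum_range_succ _ _

lemma psum_cons (a : ℕ) (t : List ℕ) (j : ℕ) : psum (a :: t) (j + 1) = a + psum t j := by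
  simp only [psum, Finset.sum_range_succ']
  simp [Nat.add_comm]

lemma psum_mono (c : List ℕ) {j j' : ℕ} (h : j ≤ j') : psum c j ≤ psum c j' :=
  Finset.sum_le_sum_of_subset (Finset.range_subset_range.2 h)

lemma psum_length (c : List ℕ) : psum c c.length = c.sum := by
  induction c with
  | nil => simp [psum]
  | cons a t ih => simpa [psum_cons] using ih

lemma psum_of_le (c : List ℕ) {j : ℕ} (h : c.length ≤ j) : psum c j = c.sum := by
  rw [← psum_length]
  unfold psum
  rw [← Finset.sum_subset (Finset.range_subset_range.2 h)]
  intro x _ hx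
  simp only [Finset.mem_range, not_lt] at hx
  exact List.getD_eq_default _ _ hx

lemma psum_le_sum (c : List ℕ) (j : ℕ) : psum c j ≤ c.sum := by
  rw [← psum_of_le c (le_max_right j c.length)]
  exact psum_mono c (le_max_left _ _)

lemma take_sum (c : List ℕ) (j : ℕ) : (c.take j).sum = psum c j := by
  induction c generalizing j with
  | nil => simp [psum]
  | cons a t ih =>
    cases j with
    | zero => simp [psum]
    | succ j => simp [psum_cons, ih]

/-- block index of position `p` w.r.t. composition `c` -/
def blk (c : List ℕ) (p : ℕ) : ℕ :=
  ((Finset.range c.length).filter fun j => psum c (j + 1) ≤ p).card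

lemma blk_mono (c : List ℕ) {p q : ℕ} (h : p ≤ q) : blk c p ≤ blk c q := by
  apply Finset.card_le_card
  intro j hj
  simp only [Finset.mem_filter] at hj ⊢
  exact ⟨hj.1, le_trans hj.2 h⟩

lemma blk_eq {c : List ℕ} {s p : ℕ} (h1 : psum c s ≤ p) (h2 : p < psum c (s + 1)) :
    blk c p = s := by
  have hs : s ≤ c.length := by
    by_contra hs
    push_neg at hs
    have : psum c s = c.sum := psum_of_le c (le_of_lt hs)
    exact absurd (lt_of_le_of_lt h1 (lt_of_lt_of_le h2 (psum_le_sum c _))) (by omega)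
  have : ((Finset.range c.length).filter fun j => psum c (j + 1) ≤ p) = Finset.range s := by
    ext j
    simp only [Finset.mem_filter, Finset.mem_range]
    constructor
    · rintro ⟨hj, hle⟩
      by_contra hjs
      push_neg at hjs
      exact absurd (le_trans (psum_mono c (by omega)) hle) (not_le.2 h2)
    · intro hj
      exact ⟨lt_of_lt_of_le hj hs, le_trans (psum_mono c (by omega)) h1⟩
  rw [blk, this, Finset.card_range]

lemma blk_spec {n : ℕ} {c : List ℕ} (hc : c.sum = n) {p : ℕ} (hp : p < n) :
    psum c (blk c p) ≤ p ∧ p < psum c (blk c p + 1) := by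
  have h0 : psum c 0 ≤ p := by simp [psum_zero]
  have hlen : p < psum c (c.length + 1) := by
    rw [psum_of_le c (by omega)]; omega
  set s := Nat.findGreatest (fun s => psum c s ≤ p) c.length with hsdef
  have hspec : psum c s ≤ p := Nat.findGreatest_spec (P := fun s => psum c s ≤ p) (Nat.zero_le _) h0
  have hup : p < psum c (s + 1) := by
    rcases eq_or_lt_of_le (Nat.findGreatest_le (P := fun s => psum c s ≤ p) c.length) with h | h
    · rw [← hsdef] at *; rw [h]; exact hlen
    · have := Nat.findGreatest_is_greatest (lt_of_eq_of_lt rfl (by omega : s < s + 1))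
        (by omega : s + 1 ≤ c.length)
      simpa using this
  have := blk_eq hspec hup
  rw [this]; exact ⟨hspec, hup⟩

lemma blk_lt_length {n : ℕ} {c : List ℕ} (hc : c.sum = n) {p : ℕ} (hp : p < n) :
    blk c p < c.length := by
  obtain ⟨h1, h2⟩ := blk_spec hc hp
  by_contra h
  push_neg at h
  rw [psum_of_le c h, hc] at h1
  omega

end Stmt12

namespace Stmt12

lemma descent_char {n : ℕ} {c : List ℕ} (hc : c.sum = n) (σ : Equiv.Perm (Fin n)) :
    descentSetS σ ⊆ partialSumsS c ↔
      ∀ p q : Fin n, (p : ℕ) < q → blk c p = blk c q → (σ p : ℕ) < σ q := by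
  constructor
  · intro h
    have conv : ∀ (a : Fin n) (m : ℕ) (hm : m < n), m = (a : ℕ) → (⟨m, hm⟩ : Fin n) = a :=
      fun a m hm he => Fin.ext he
    have step : ∀ p q : Fin n, (q : ℕ) = (p : ℕ) + 1 → blk c (p : ℕ) = blk c (q : ℕ) →
        (σ p : ℕ) < σ q := by
      intro p q hq1 hb
      rcases lt_or_ge ((σ p : ℕ)) ((σ q : ℕ)) with h' | h'
      · exact h'
      exfalso
      have hne : (σ q : ℕ) ≠ (σ p : ℕ) := by
        intro he
        have h2 : q = p := σ.injective (Fin.ext he)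
        rw [h2] at hq1
        omega
      have hdes : (q : ℕ) ∈ descentSetS σ := by
        refine ⟨by omega, q.isLt, ?_⟩
        rw [conv q (q : ℕ) q.isLt rfl, conv p ((q : ℕ) - 1) _ (by omega)]
        omega
      obtain ⟨j, hj1, hj2, hj3⟩ := h hdes
      rw [take_sum] at hj3
      have hlt2 : blk c (p : ℕ) < blk c (q : ℕ) := by
        apply Finset.card_lt_card
        constructor
        · intro x hx
          simp only [Finset.mem_filter] at hx ⊢
          exact ⟨hx.1, by omega⟩
        · intro hsub
          have hmem : (j - 1) ∈ (Finset.range c.length).filter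
              fun m => psum c (m + 1) ≤ (q : ℕ) := by
            simp only [Finset.mem_filter, Finset.mem_range]
            refine ⟨by omega, ?_⟩
            rw [(by omega : j - 1 + 1 = j), ← hj3]
          have hm2 := hsub hmem
          simp only [Finset.mem_filter] at hm2
          have hm3 : psum c (j - 1 + 1) ≤ (p : ℕ) := hm2.2
          rw [(by omega : j - 1 + 1 = j), ← hj3] at hm3
          omega
      omega
    intro p q hpq hb
    obtain ⟨d, hd⟩ : ∃ d : ℕ, (q : ℕ) = (p : ℕ) + d + 1 := ⟨(q : ℕ) - p - 1, by omega⟩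
    clear hpq
    induction d generalizing q with
    | zero => exact step p q (by omega) hb
    | succ d ih =>
      have hq' : (p : ℕ) + d + 1 < n := by omega
      set q' : Fin n := ⟨(p : ℕ) + d + 1, hq'⟩ with hq'def
      have hvq' : (q' : ℕ) = (p : ℕ) + d + 1 := rfl
      have h1 : blk c (p : ℕ) ≤ blk c (q' : ℕ) := blk_mono c (by omega)
      have h2 : blk c (q' : ℕ) ≤ blk c (q : ℕ) := blk_mono c (by omega)
      have hbq' : blk c (p : ℕ) = blk c (q' : ℕ) := by omega
      have hbq2 : blk c (q' : ℕ) = blk c (q : ℕ) := by omega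
      have ha := ih q' hbq' rfl
      have hs := step q' q (by omega) hbq2
      omega
  · intro h i hi
    obtain ⟨h1, h2, hlt⟩ := hi
    have hpq : ((⟨i - 1, by omega⟩ : Fin n) : ℕ) < ((⟨i, h2⟩ : Fin n) : ℕ) := by simp; omega
    have hne : blk c (i - 1) ≠ blk c i := by
      intro hb
      have := h ⟨i - 1, by omega⟩ ⟨i, h2⟩ hpq (by simpa using hb)
      omega
    have hmono : blk c (i - 1) ≤ blk c i := blk_mono c (by omega)
    have hss : ¬ ((Finset.range c.length).filter (fun m => psum c (m + 1) ≤ i) ⊆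
        (Finset.range c.length).filter fun m => psum c (m + 1) ≤ i - 1) := by
      intro hsub
      have hcard := Finset.card_le_card hsub
      have : blk c i ≤ blk c (i - 1) := hcard
      omega
    obtain ⟨j, hjmem, hjnot⟩ := Finset.not_subset.1 hss
    simp only [Finset.mem_filter, Finset.mem_range, not_and, not_le] at hjmem hjnot
    have hji : psum c (j + 1) = i := by
      have := hjnot hjmem.1
      omega
    refine ⟨j + 1, by omega, ?_, ?_⟩
    · by_contra hlen
      push_neg at hlen
      have : psum c (j + 1) = c.sum := psum_of_le c (by omega)
      omega
    · rw [take_sum, hji]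

lemma card_filter_Ico {n a b : ℕ} (hb : b ≤ n) :
    (Finset.filter (fun p : Fin n => a ≤ (p : ℕ) ∧ (p : ℕ) < b) Finset.univ).card = b - a := by
  rw [← Nat.card_Ico a b, ← Finset.card_image_of_injective _ Fin.val_injective]
  congr 1
  ext x
  simp only [Finset.mem_image, Finset.mem_filter, Finset.mem_univ, true_and, Finset.mem_Ico]
  constructor
  · rintro ⟨p, hp, rfl⟩; exact hp
  · intro hx; exact ⟨⟨x, by omega⟩, hx, rfl⟩

lemma card_blk_fiber {n : ℕ} {c : List ℕ} (hc : c.sum = n) {s : ℕ} (hs : s < c.length) :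
    (Finset.filter (fun p : Fin n => blk c (p : ℕ) = s) Finset.univ).card = c.getD s 0 := by
  have he : Finset.filter (fun p : Fin n => blk c (p : ℕ) = s) Finset.univ =
      Finset.filter (fun p : Fin n => psum c s ≤ (p : ℕ) ∧ (p : ℕ) < psum c (s + 1)) Finset.univ := by
    ext p
    simp only [Finset.mem_filter, Finset.mem_univ, true_and]
    constructor
    · intro hb
      obtain ⟨h1, h2⟩ := blk_spec hc p.isLt
      rw [hb] at h1 h2
      exact ⟨h1, h2⟩
    · intro ⟨h1, h2⟩
      exact blk_eq h1 h2
  rw [he, card_filter_Ico (le_trans (psum_le_sum c _) (le_of_eq hc)), psum_succ]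
  omega

end Stmt12

namespace Stmt12

lemma getD_ofFn {m : ℕ} (f : Fin m → ℕ) {i : ℕ} (hi : i < m) :
    (List.ofFn f).getD i 0 = f ⟨i, hi⟩ := by
  rw [List.getD_eq_getElem _ _ (by simpa using hi), List.getElem_ofFn]

lemma psum_ofFn_sum {m : ℕ} (f : Fin m → ℕ) : psum (List.ofFn f) m = ∑ i, f i := by
  rw [psum_of_le _ (by simp), List.sum_ofFn]

lemma psum_append_left {x y : List ℕ} {j : ℕ} (h : j ≤ x.length) :
    psum (x ++ y) j = psum x j := by
  rw [← take_sum, ← take_sum, List.take_append_of_le_length h]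

lemma psum_append_add (x y : List ℕ) (m : ℕ) :
    psum (x ++ y) (x.length + m) = x.sum + psum y m := by
  rw [← take_sum, List.take_append, List.sum_append, take_sum, Nat.add_sub_cancel_left, take_sum,
    psum_of_le x (Nat.le_add_right _ _)]

lemma psum_flatten (kk : ℕ) : ∀ (L : List (List ℕ)), (∀ r ∈ L, r.length = kk) →
    ∀ (i j : ℕ), i < L.length → j ≤ kk →
    psum L.flatten (kk * i + j) = psum (L.map List.sum) i + psum (L.getD i []) j := by
  intro L
  induction L with
  | nil => intro _ i j hi; simp at hi
  | cons a t ih =>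
    intro hL i j hi hj
    cases i with
    | zero =>
      simp only [Nat.mul_zero, Nat.zero_add, List.getD_cons_zero, List.map_cons, psum_zero]
      rw [List.flatten_cons, psum_append_left (by rw [hL a (by simp)]; exact hj)]
    | succ i =>
      have ha : a.length = kk := hL a (by simp)
      have : kk * (i + 1) + j = a.length + (kk * i + j) := by rw [ha]; ring
      rw [this, List.flatten_cons, psum_append_add, List.map_cons, List.getD_cons_succ,
        psum_cons]
      rw [ih (fun r hr => hL r (List.mem_cons_of_mem a hr)) i j (by simpa using hi) hj]
      ring

/-- matrix rows flattened, with zeros kept -/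
def rlist {l k : ℕ} (z : Fin l → Fin k → ℕ) : List ℕ :=
  (List.ofFn fun i : Fin l => List.ofFn fun j : Fin k => z i j).flatten

lemma rlist_length {l k : ℕ} (z : Fin l → Fin k → ℕ) : (rlist z).length = l * k := by
  rw [rlist, List.length_flatten, List.map_ofFn]
  simp [List.sum_ofFn, Function.comp_def, Finset.sum_const, Nat.mul_comm]

lemma psum_rlist {l k : ℕ} (z : Fin l → Fin k → ℕ) (i : Fin l) {j : ℕ} (hj : j ≤ k) :
    psum (rlist z) (k * (i : ℕ) + j) =
      psum (List.ofFn fun i' : Fin l => ∑ j', z i' j') (i : ℕ) + psum (List.ofFn (z i)) j := by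
  have hlen : ∀ r ∈ (List.ofFn fun i : Fin l => List.ofFn fun j : Fin k => z i j), r.length = k := by
    intro r hr
    simp only [List.mem_ofFn, Set.mem_range] at hr
    obtain ⟨i', rfl⟩ := hr
    simp
  rw [rlist, psum_flatten k _ hlen (i : ℕ) j (by simpa using i.isLt) hj]
  congr 1
  · congr 1
    rw [List.map_ofFn]
    congr 1
    funext i'
    simp [Function.comp_def, List.sum_ofFn]
  · congr 1
    rw [List.getD_eq_getElem _ _ (by simpa using i.isLt), List.getElem_ofFn]

lemma rlist_sum {l k : ℕ} (z : Fin l → Fin k → ℕ) :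
    (rlist z).sum = ∑ i, ∑ j, z i j := by
  rw [rlist, List.sum_flatten, List.map_ofFn, List.sum_ofFn]
  congr 1
  funext i
  simp [Function.comp_def, List.sum_ofFn]

lemma rlist_getD {l k : ℕ} (z : Fin l → Fin k → ℕ) (i : Fin l) (j : Fin k) :
    (rlist z).getD (k * (i : ℕ) + (j : ℕ)) 0 = z i j := by
  have h1 := psum_rlist z i (le_of_lt j.isLt)
  have h2 := psum_rlist z i (Nat.succ_le_of_lt j.isLt)
  rw [show k * (i : ℕ) + ((j : ℕ) + 1) = (k * (i : ℕ) + (j : ℕ)) + 1 by ring] at h2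
  rw [psum_succ, h1, psum_succ, getD_ofFn (z i) j.isLt, Fin.eta] at h2
  omega

end Stmt12

namespace Stmt12

lemma filter_flatten {α : Type*} (p : α → Bool) :
    ∀ (L : List (List α)), L.flatten.filter p = (L.map fun r => r.filter p).flatten := by
  intro L
  induction L with
  | nil => simp
  | cons a t ih => simp [List.filter_append, ih]

lemma readM_eq {l k : ℕ} (z : Fin l → Fin k → ℕ) :
    readM z = (rlist z).filter fun x => x ≠ 0 := by
  rw [rlist, filter_flatten, List.map_ofFn, readM]
  rfl

lemma filter_sum (c : List ℕ) : (c.filter fun x => x ≠ 0).sum = c.sum := by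
  induction c with
  | nil => simp
  | cons a t ih =>
    by_cases ha : a = 0
    · have hfc : (a :: t).filter (fun x => x ≠ 0) = t.filter fun x => x ≠ 0 := by
        simp [List.filter_cons, ha]
      rw [hfc, ih, List.sum_cons, ha, Nat.zero_add]
    · have hfc : (a :: t).filter (fun x => x ≠ 0) = a :: t.filter fun x => x ≠ 0 := by
        simp [List.filter_cons, ha]
      rw [hfc, List.sum_cons, List.sum_cons, ih]

lemma filter_psum_sub (c : List ℕ) :
    ∀ j, 1 ≤ j → j < (c.filter fun x => x ≠ 0).length →
      ∃ m, 1 ≤ m ∧ m < c.length ∧ psum c m = psum (c.filter fun x => x ≠ 0) j := by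
  induction c with
  | nil => intro j h1 h2; simp at h2
  | cons a t ih =>
    intro j h1 h2
    by_cases ha : a = 0
    · have hfc : (a :: t).filter (fun x => x ≠ 0) = t.filter fun x => x ≠ 0 := by
        simp [List.filter_cons, ha]
      rw [hfc] at h2 ⊢
      obtain ⟨m, hm1, hm2, hm3⟩ := ih j h1 h2
      refine ⟨m + 1, by omega, by simp; omega, ?_⟩
      rw [psum_cons, ha, Nat.zero_add, hm3]
    · have hfc : (a :: t).filter (fun x => x ≠ 0) = a :: t.filter fun x => x ≠ 0 := by
        simp [List.filter_cons, ha]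
      rw [hfc] at h2
      simp only [List.length_cons] at h2
      obtain ⟨j', rfl⟩ : ∃ j', j = j' + 1 := ⟨j - 1, by omega⟩
      by_cases hj' : j' = 0
      · subst hj'
        refine ⟨1, le_refl 1, ?_, ?_⟩
        · have : t.filter (fun x => x ≠ 0) ≠ [] := by
            intro he
            rw [he] at h2; simp at h2
          have : t ≠ [] := by
            intro he; rw [he] at this; simp at this
          simp [List.length_pos_iff_ne_nil, this]
        · rw [hfc, psum_cons, psum_cons, psum_zero, psum_zero]
      · obtain ⟨m, hm1, hm2, hm3⟩ := ih j' (by omega) (by omega)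
        exact ⟨m + 1, by omega, by simp; omega,
          by rw [hfc, psum_cons, psum_cons, hm3]⟩

lemma filter_psum_mem (c : List ℕ) :
    ∀ m s, psum c m = s → 0 < s → s < c.sum →
      ∃ j, 1 ≤ j ∧ j < (c.filter fun x => x ≠ 0).length ∧
        psum (c.filter fun x => x ≠ 0) j = s := by
  induction c with
  | nil => intro m s h1 h2 h3; simp at h3
  | cons a t ih =>
    intro m s h1 h2 h3
    obtain ⟨m', rfl⟩ : ∃ m', m = m' + 1 := by
      refine ⟨m - 1, ?_⟩
      rcases Nat.eq_zero_or_pos m with h | h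
      · rw [h, psum_zero] at h1; omega
      · omega
    rw [psum_cons] at h1
    by_cases ha : a = 0
    · rw [ha] at h1 h3 ⊢
      simp only [Nat.zero_add] at h1
      simp only [List.sum_cons, Nat.zero_add] at h3
      obtain ⟨j, hj1, hj2, hj3⟩ := ih m' s h1 h2 h3
      have hfc : ((0:ℕ) :: t).filter (fun x => x ≠ 0) = t.filter fun x => x ≠ 0 := by
        simp [List.filter_cons]
      rw [hfc]
      exact ⟨j, hj1, hj2, hj3⟩
    · have hfc : (a :: t).filter (fun x => x ≠ 0) = a :: t.filter fun x => x ≠ 0 := by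
        simp [List.filter_cons, ha]
      by_cases hs : psum t m' = 0
      · -- s = a
        rw [hs] at h1
        refine ⟨1, le_refl 1, ?_, ?_⟩
        · rw [hfc]
          simp only [List.length_cons]
          have htpos : 0 < t.sum := by
            simp only [List.sum_cons] at h3; omega
          have : ∃ x ∈ t, x ≠ 0 := by
            by_contra hall
            push_neg at hall
            have : t.sum = 0 := by
              apply List.sum_eq_zero
              intro x hx
              exact hall x hx
            omega
          obtain ⟨x, hx, hxne⟩ := this
          have : x ∈ t.filter fun x => x ≠ 0 := by
            simp [List.mem_filter, hx, hxne]
          have := List.length_pos_of_mem this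
          omega
        · rw [hfc, psum_cons, psum_zero]; omega
      · obtain ⟨j, hj1, hj2, hj3⟩ := ih m' (psum t m') rfl (by omega)
          (by simp only [List.sum_cons] at h3; omega)
        refine ⟨j + 1, by omega, ?_, ?_⟩
        · rw [hfc]; simp only [List.length_cons]; omega
        · rw [hfc, psum_cons, hj3]; omega

end Stmt12

namespace Stmt12

variable {n : ℕ} {κ ν : List ℕ}

/-- matrix of a pair: `z i j = #{p : p in ν-block i, τ(p) in κ-block j}` -/
def Zmap (n : ℕ) (κ ν : List ℕ) (τ : Equiv.Perm (Fin n)) : Fin ν.length → Fin κ.length → ℕ :=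
  fun i j => (Finset.filter
    (fun p : Fin n => blk ν (p : ℕ) = (i : ℕ) ∧ blk κ ((τ p : Fin n) : ℕ) = (j : ℕ))
    Finset.univ).card

lemma getD_get (c : List ℕ) (j : Fin c.length) : c.getD (j : ℕ) 0 = c.get j := by
  rw [List.getD_eq_getElem _ _ j.isLt, List.get_eq_getElem]

lemma Zmap_col (hκ : κ.sum = n) (hν : ν.sum = n) (τ : Equiv.Perm (Fin n)) (j : Fin κ.length) :
    ∑ i, Zmap n κ ν τ i j = κ.get j := by
  have hcard : (Finset.filter (fun p : Fin n => blk κ ((τ p : Fin n) : ℕ) = (j : ℕ))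
      Finset.univ).card = κ.get j := by
    rw [← getD_get κ j, ← card_blk_fiber hκ j.isLt]
    apply Finset.card_bij (fun p _ => τ p)
    · intro p hp
      simp only [Finset.mem_filter, Finset.mem_univ, true_and] at hp ⊢
      exact hp
    · intro p _ q _ h
      exact τ.injective h
    · intro q hq
      simp only [Finset.mem_filter, Finset.mem_univ, true_and] at hq
      exact ⟨τ.symm q, by simp [hq], by simp⟩
  have hpart := Finset.card_eq_sum_card_fiberwise
    (s := Finset.filter (fun p : Fin n => blk κ ((τ p : Fin n) : ℕ) = (j : ℕ)) Finset.univ)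
    (t := Finset.range ν.length) (f := fun p : Fin n => blk ν (p : ℕ))
    (fun p _ => Finset.mem_range.2 (blk_lt_length hν p.isLt))
  rw [← hcard, hpart]
  simp only [Zmap]
  rw [Fin.sum_univ_eq_sum_range (fun b => (Finset.filter
    (fun p : Fin n => blk ν (p : ℕ) = b ∧ blk κ ((τ p : Fin n) : ℕ) = (j : ℕ))
    Finset.univ).card) ν.length]
  apply Finset.sum_congr rfl
  intro b _
  rw [Finset.filter_filter]
  congr 1
  apply Finset.filter_congr
  intro p _
  simp [and_comm]

lemma Zmap_row (hκ : κ.sum = n) (hν : ν.sum = n) (τ : Equiv.Perm (Fin n)) (i : Fin ν.length) :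
    ∑ j, Zmap n κ ν τ i j = ν.get i := by
  have hcard : (Finset.filter (fun p : Fin n => blk ν ((p : Fin n) : ℕ) = (i : ℕ))
      Finset.univ).card = ν.get i := by
    rw [← getD_get ν i]
    exact card_blk_fiber hν i.isLt
  have hpart := Finset.card_eq_sum_card_fiberwise
    (s := Finset.filter (fun p : Fin n => blk ν ((p : Fin n) : ℕ) = (i : ℕ)) Finset.univ)
    (t := Finset.range κ.length) (f := fun p : Fin n => blk κ ((τ p : Fin n) : ℕ))
    (fun p _ => Finset.mem_range.2 (blk_lt_length hκ (τ p).isLt))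
  rw [← hcard, hpart]
  simp only [Zmap]
  rw [Fin.sum_univ_eq_sum_range (fun b => (Finset.filter
    (fun p : Fin n => blk ν ((p : Fin n) : ℕ) = (i : ℕ) ∧ blk κ ((τ p : Fin n) : ℕ) = b)
    Finset.univ).card) κ.length]
  apply Finset.sum_congr rfl
  intro b _
  rw [Finset.filter_filter]

end Stmt12

namespace Stmt12

variable {n : ℕ} {κ ν : List ℕ}

lemma psum_row_card (τ : Equiv.Perm (Fin n)) (i : Fin ν.length) {j : ℕ} (hj : j ≤ κ.length) :
    psum (List.ofFn (Zmap n κ ν τ i)) j =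
      (Finset.filter (fun p : Fin n => blk ν (p : ℕ) = (i : ℕ) ∧ blk κ ((τ p : Fin n) : ℕ) < j)
        Finset.univ).card := by
  have hpart := Finset.card_eq_sum_card_fiberwise
    (s := Finset.filter
      (fun p : Fin n => blk ν (p : ℕ) = (i : ℕ) ∧ blk κ ((τ p : Fin n) : ℕ) < j) Finset.univ)
    (t := Finset.range j) (f := fun p : Fin n => blk κ ((τ p : Fin n) : ℕ))
    (fun p hp => by
      simp only [Finset.mem_coe, Finset.mem_filter] at hp
      exact Finset.mem_range.2 hp.2.2)
  rw [hpart]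
  unfold psum
  apply Finset.sum_congr rfl
  intro b hb
  rw [Finset.mem_range] at hb
  rw [getD_ofFn _ (lt_of_lt_of_le hb hj)]
  show Zmap n κ ν τ i ⟨b, _⟩ = _
  unfold Zmap
  rw [Finset.filter_filter]
  congr 1
  apply Finset.filter_congr
  intro p _
  simp only [eq_iff_iff]
  constructor
  · rintro ⟨h1, h2⟩
    exact ⟨⟨h1, by omega⟩, h2⟩
  · rintro ⟨⟨h1, _⟩, h2⟩
    exact ⟨h1, h2⟩

lemma rowsums_eq (hκ : κ.sum = n) (hν : ν.sum = n) (τ : Equiv.Perm (Fin n)) :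
    (List.ofFn fun i' : Fin ν.length => ∑ j', Zmap n κ ν τ i' j') = ν := by
  have : (fun i' : Fin ν.length => ∑ j', Zmap n κ ν τ i' j') = fun i' => ν.get i' :=
    funext (Zmap_row hκ hν τ)
  rw [this, List.ofFn_get]

lemma psum_rlist' {l k : ℕ} (z : Fin l → Fin k → ℕ) {i : ℕ} (hi : i < l) {j : ℕ}
    (hj : j ≤ k) :
    psum (rlist z) (k * i + j) =
      psum (List.ofFn fun i' : Fin l => ∑ j', z i' j') i + psum (List.ofFn (z ⟨i, hi⟩)) j :=
  psum_rlist z ⟨i, hi⟩ hj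

lemma psum_row_card' (τ : Equiv.Perm (Fin n)) {i : ℕ} (hi : i < ν.length) {j : ℕ}
    (hj : j ≤ κ.length) :
    psum (List.ofFn (Zmap n κ ν τ ⟨i, hi⟩)) j =
      (Finset.filter (fun p : Fin n => blk ν (p : ℕ) = i ∧ blk κ ((τ p : Fin n) : ℕ) < j)
        Finset.univ).card :=
  psum_row_card τ ⟨i, hi⟩ hj

lemma blk_rlist_pair (hκ : κ.sum = n) (hν : ν.sum = n) (τ : Equiv.Perm (Fin n))
    (hτ : ∀ p q : Fin n, (p : ℕ) < q → blk ν (p : ℕ) = blk ν (q : ℕ) →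
      ((τ p : Fin n) : ℕ) < ((τ q : Fin n) : ℕ))
    (p : Fin n) :
    blk (rlist (Zmap n κ ν τ)) (p : ℕ) =
      κ.length * blk ν (p : ℕ) + blk κ ((τ p : Fin n) : ℕ) := by
  have hi : blk ν (p : ℕ) < ν.length := blk_lt_length hν p.isLt
  have hjlt : blk κ ((τ p : Fin n) : ℕ) < κ.length := blk_lt_length hκ (τ p).isLt
  have hspecp := blk_spec hν p.isLt
  have hup : (p : ℕ) < psum ν (blk ν (p : ℕ) + 1) := hspecp.2
  have hlow : psum ν (blk ν (p : ℕ)) ≤ (p : ℕ) := hspecp.1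
  apply blk_eq
  · -- (A)
    rw [psum_rlist' (Zmap n κ ν τ) hi (le_of_lt hjlt), rowsums_eq hκ hν τ,
      psum_row_card' τ hi (le_of_lt hjlt)]
    have hsub : (Finset.filter
        (fun p' : Fin n => blk ν (p' : ℕ) = blk ν (p : ℕ) ∧
          blk κ ((τ p' : Fin n) : ℕ) < blk κ ((τ p : Fin n) : ℕ))
        Finset.univ) ⊆ Finset.filter
        (fun p' : Fin n => psum ν (blk ν (p : ℕ)) ≤ (p' : ℕ) ∧ (p' : ℕ) < (p : ℕ))
        Finset.univ := by
      intro p' hp'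
      simp only [Finset.mem_filter, Finset.mem_univ, true_and] at hp' ⊢
      obtain ⟨h1, h2⟩ := hp'
      constructor
      · have := (blk_spec hν p'.isLt).1
        rw [h1] at this
        exact this
      · have hτlt : ((τ p' : Fin n) : ℕ) < ((τ p : Fin n) : ℕ) := by
          by_contra hle
          push_neg at hle
          have := blk_mono κ hle
          omega
        by_contra hle
        push_neg at hle
        rcases eq_or_lt_of_le hle with he | hlt
        · have : p = p' := Fin.ext he
          rw [this] at hjlt h2
          omega
        · have := hτ p p' hlt (by omega)
          omega
    have hcle := Finset.card_le_card hsub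
    rw [card_filter_Ico (le_of_lt p.isLt)] at hcle
    omega
  · -- (B)
    rw [show κ.length * blk ν (p : ℕ) + blk κ ((τ p : Fin n) : ℕ) + 1 =
        κ.length * blk ν (p : ℕ) + (blk κ ((τ p : Fin n) : ℕ) + 1) by ring]
    rw [psum_rlist' (Zmap n κ ν τ) hi (by omega), rowsums_eq hκ hν τ,
      psum_row_card' τ hi (by omega)]
    have hsub : Finset.filter
        (fun p' : Fin n => psum ν (blk ν (p : ℕ)) ≤ (p' : ℕ) ∧ (p' : ℕ) < (p : ℕ) + 1)
        Finset.univ ⊆ Finset.filter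
        (fun p' : Fin n => blk ν (p' : ℕ) = blk ν (p : ℕ) ∧
          blk κ ((τ p' : Fin n) : ℕ) < blk κ ((τ p : Fin n) : ℕ) + 1)
        Finset.univ := by
      intro p' hp'
      simp only [Finset.mem_filter, Finset.mem_univ, true_and] at hp' ⊢
      obtain ⟨h1, h2⟩ := hp'
      have hb1 : blk ν (p' : ℕ) = blk ν (p : ℕ) := blk_eq h1 (by omega)
      refine ⟨hb1, ?_⟩
      rcases eq_or_lt_of_le (by omega : (p' : ℕ) ≤ (p : ℕ)) with he | hlt
      · have : p' = p := Fin.ext he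
        rw [this]
        omega
      · have h3 := hτ p' p hlt hb1
        have := blk_mono κ (le_of_lt h3)
        omega
    have hcle := Finset.card_le_card hsub
    rw [card_filter_Ico (by omega : (p : ℕ) + 1 ≤ n)] at hcle
    omega

end Stmt12

namespace Stmt12

variable {n : ℕ} {κ ν : List ℕ}

lemma rowlist_eq {z : Fin ν.length → Fin κ.length → ℕ}
    (hrow : ∀ i, ∑ j, z i j = ν.get i) :
    (List.ofFn fun i' : Fin ν.length => ∑ j', z i' j') = ν := by
  rw [funext hrow, List.ofFn_get]

lemma rlist_sum_n (hν : ν.sum = n) {z : Fin ν.length → Fin κ.length → ℕ}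
    (hrow : ∀ i, ∑ j, z i j = ν.get i) : (rlist z).sum = n := by
  rw [rlist_sum]
  calc ∑ i, ∑ j, z i j = ∑ i : Fin ν.length, ν.get i :=
        Finset.sum_congr rfl fun i _ => hrow i
    _ = (List.ofFn ν.get).sum := by rw [List.sum_ofFn]
    _ = ν.sum := by rw [List.ofFn_get]
    _ = n := hν

lemma blk_rlist_div (hν : ν.sum = n) {z : Fin ν.length → Fin κ.length → ℕ}
    (hrow : ∀ i, ∑ j, z i j = ν.get i) (p : Fin n) :
    blk (rlist z) (p : ℕ) / κ.length = blk ν (p : ℕ) ∧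
      blk (rlist z) (p : ℕ) =
        κ.length * blk ν (p : ℕ) + blk (rlist z) (p : ℕ) % κ.length ∧
      blk (rlist z) (p : ℕ) % κ.length < κ.length := by
  have hsum : (rlist z).sum = n := rlist_sum_n hν hrow
  have hs : blk (rlist z) (p : ℕ) < ν.length * κ.length := by
    rw [← rlist_length z]
    exact blk_lt_length hsum p.isLt
  have hk : 0 < κ.length := by
    rcases Nat.eq_zero_or_pos κ.length with h | h
    · have h0 : ν.length * κ.length = 0 := by rw [h, Nat.mul_zero]
      omega
    · exact h
  have hspec := blk_spec hsum p.isLt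
  have hdm := Nat.div_add_mod (blk (rlist z) (p : ℕ)) κ.length
  have hi : blk (rlist z) (p : ℕ) / κ.length < ν.length :=
    (Nat.div_lt_iff_lt_mul hk).2 hs
  have hmod : blk (rlist z) (p : ℕ) % κ.length < κ.length := Nat.mod_lt _ hk
  have h1 := psum_rlist' z hi (Nat.zero_le κ.length)
  rw [rowlist_eq hrow, Nat.add_zero, psum_zero, Nat.add_zero] at h1
  have h2 := psum_rlist' z hi (le_refl κ.length)
  rw [rowlist_eq hrow, psum_ofFn_sum, hrow] at h2
  have hgd : ν.get ⟨blk (rlist z) (p : ℕ) / κ.length, hi⟩ =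
      ν.getD (blk (rlist z) (p : ℕ) / κ.length) 0 := (getD_get ν ⟨_, hi⟩).symm
  rw [hgd] at h2
  have hgoal : blk ν (p : ℕ) = blk (rlist z) (p : ℕ) / κ.length := by
    apply blk_eq
    · calc psum ν (blk (rlist z) (p : ℕ) / κ.length) =
            psum (rlist z) (κ.length * (blk (rlist z) (p : ℕ) / κ.length)) := h1.symm
        _ ≤ psum (rlist z) (blk (rlist z) (p : ℕ)) := psum_mono _ (by omega)
        _ ≤ (p : ℕ) := hspec.1
    · have hle : blk (rlist z) (p : ℕ) + 1 ≤
          κ.length * (blk (rlist z) (p : ℕ) / κ.length) + κ.length := by omega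
      calc (p : ℕ) < psum (rlist z) (blk (rlist z) (p : ℕ) + 1) := hspec.2
        _ ≤ psum (rlist z) (κ.length * (blk (rlist z) (p : ℕ) / κ.length) + κ.length) :=
            psum_mono _ hle
        _ = psum ν (blk (rlist z) (p : ℕ) / κ.length) +
              ν.getD (blk (rlist z) (p : ℕ) / κ.length) 0 := h2
        _ = psum ν (blk (rlist z) (p : ℕ) / κ.length + 1) := (psum_succ _ _).symm
  refine ⟨hgoal.symm, ?_, hmod⟩
  rw [hgoal]
  omega

end Stmt12

namespace Stmt12

variable {n : ℕ} {κ ν : List ℕ}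

/-- refined column index of a position -/
def gfun (κ : List ℕ) {l k : ℕ} (z : Fin l → Fin k → ℕ) (p : ℕ) : ℕ :=
  blk (rlist z) p % κ.length

/-- the sort key -/
def Fkey (κ : List ℕ) {l k : ℕ} (z : Fin l → Fin k → ℕ) (π : Equiv.Perm (Fin n))
    (p : Fin n) : ℕ ×ₗ ℕ :=
  toLex (gfun κ z (p : ℕ), ((π p : Fin n) : ℕ))

lemma kpos (hκ : κ.sum = n) (hn : 0 < n) : 0 < κ.length := by
  rcases κ with _ | ⟨a, t⟩
  · simp at hκ; omega
  · simp

lemma col_sum_getD {z : Fin ν.length → Fin κ.length → ℕ}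
    (hcol : ∀ j, ∑ i, z i j = κ.get j) {b : ℕ} (hb : b < κ.length) :
    ∑ a ∈ Finset.range ν.length, (rlist z).getD (κ.length * a + b) 0 = κ.getD b 0 := by
  rw [← Fin.sum_univ_eq_sum_range (fun a => (rlist z).getD (κ.length * a + b) 0) ν.length]
  rw [Finset.sum_congr rfl fun a _ => rlist_getD z a ⟨b, hb⟩]
  rw [hcol ⟨b, hb⟩, ← getD_get κ ⟨b, hb⟩]

lemma gfun_count (hκ : κ.sum = n) (hν : ν.sum = n)
    {z : Fin ν.length → Fin κ.length → ℕ}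
    (hcol : ∀ j, ∑ i, z i j = κ.get j) (hrow : ∀ i, ∑ j, z i j = ν.get i)
    {j : ℕ} (hj : j ≤ κ.length) :
    (Finset.filter (fun p : Fin n => gfun κ z (p : ℕ) < j) Finset.univ).card = psum κ j := by
  have hsum : (rlist z).sum = n := rlist_sum_n hν hrow
  have hlen := rlist_length z
  have hpart := Finset.card_eq_sum_card_fiberwise
    (s := Finset.filter (fun p : Fin n => gfun κ z (p : ℕ) < j) Finset.univ)
    (t := Finset.filter (fun s => s % κ.length < j) (Finset.range (ν.length * κ.length)))
    (f := fun p : Fin n => blk (rlist z) (p : ℕ))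
    (fun p hp => by
      simp only [Finset.mem_coe, Finset.mem_filter, Finset.mem_univ, true_and] at hp ⊢
      refine ⟨Finset.mem_range.2 ?_, hp⟩
      rw [← hlen]
      exact blk_lt_length hsum p.isLt)
  rw [hpart]
  have hfib : ∀ s ∈ Finset.filter (fun s => s % κ.length < j)
      (Finset.range (ν.length * κ.length)),
      ((Finset.filter (fun p : Fin n => gfun κ z (p : ℕ) < j) Finset.univ).filter
        fun p : Fin n => blk (rlist z) (p : ℕ) = s).card = (rlist z).getD s 0 := by
    intro s hs
    simp only [Finset.mem_filter, Finset.mem_range] at hs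
    rw [Finset.filter_filter]
    have heqf : Finset.filter (fun a : Fin n => gfun κ z (a : ℕ) < j ∧ blk (rlist z) (a : ℕ) = s)
        Finset.univ = Finset.filter (fun a : Fin n => blk (rlist z) (a : ℕ) = s) Finset.univ := by
      apply Finset.filter_congr
      intro p _
      constructor
      · exact fun h => h.2
      · intro h
        refine ⟨?_, h⟩
        unfold gfun
        rw [h]
        exact hs.2
    rw [heqf]
    exact card_blk_fiber hsum (by omega)
  rw [Finset.sum_congr rfl hfib]
  -- reindex the sum over refined block indices
  have hreindex : ∑ s ∈ Finset.filter (fun s => s % κ.length < j)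
      (Finset.range (ν.length * κ.length)), (rlist z).getD s 0 =
      ∑ bp ∈ (Finset.range j) ×ˢ (Finset.range ν.length),
        (rlist z).getD (κ.length * bp.2 + bp.1) 0 := by
    apply Finset.sum_nbij' (i := fun s => (s % κ.length, s / κ.length))
      (j := fun bp => κ.length * bp.2 + bp.1)
    · intro s hs
      simp only [Finset.mem_filter, Finset.mem_range] at hs
      have hk : 0 < κ.length := by
        rcases Nat.eq_zero_or_pos κ.length with h | h
        · have h0 : ν.length * κ.length = 0 := by rw [h, Nat.mul_zero]
          omega
        · exact h
      simp only [Finset.mem_product, Finset.mem_range]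
      exact ⟨hs.2, (Nat.div_lt_iff_lt_mul hk).2 (by omega)⟩
    · intro bp hbp
      simp only [Finset.mem_product, Finset.mem_range] at hbp
      simp only [Finset.mem_filter, Finset.mem_range]
      have h1 : bp.1 < κ.length := lt_of_lt_of_le hbp.1 hj
      constructor
      · calc κ.length * bp.2 + bp.1 < κ.length * bp.2 + κ.length := by omega
          _ = κ.length * (bp.2 + 1) := by ring
          _ ≤ κ.length * ν.length := Nat.mul_le_mul_left _ hbp.2
          _ = ν.length * κ.length := Nat.mul_comm _ _
      · rw [Nat.mul_add_mod, Nat.mod_eq_of_lt h1]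
        exact hbp.1
    · intro s hs
      simp only [Finset.mem_filter, Finset.mem_range] at hs
      rw [Nat.add_comm, Nat.mod_add_div]
    · intro bp hbp
      simp only [Finset.mem_product, Finset.mem_range] at hbp
      have h1 : bp.1 < κ.length := lt_of_lt_of_le hbp.1 hj
      have : (κ.length * bp.2 + bp.1) % κ.length = bp.1 := by
        rw [Nat.mul_add_mod, Nat.mod_eq_of_lt h1]
      have hdiv : (κ.length * bp.2 + bp.1) / κ.length = bp.2 := by
        rw [Nat.mul_add_div (by omega), Nat.div_eq_of_lt h1, Nat.add_zero]
      rw [this, hdiv]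
    · intro s hs
      show (rlist z).getD s 0 = (rlist z).getD (κ.length * (s / κ.length) + s % κ.length) 0
      rw [Nat.div_add_mod]
  rw [hreindex, Finset.sum_product]
  unfold psum
  apply Finset.sum_congr rfl
  intro b hb
  rw [Finset.mem_range] at hb
  exact col_sum_getD hcol (lt_of_lt_of_le hb hj)

end Stmt12

namespace Stmt12

variable {n : ℕ} {κ ν : List ℕ}

lemma blk_sorted (hκ : κ.sum = n) (hν : ν.sum = n)
    {z : Fin ν.length → Fin κ.length → ℕ}
    (hcol : ∀ j, ∑ i, z i j = κ.get j) (hrow : ∀ i, ∑ j, z i j = ν.get i)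
    (π : Equiv.Perm (Fin n)) (r : Fin n) :
    gfun κ z ((Tuple.sort (Fkey κ z π) r : Fin n) : ℕ) = blk κ (r : ℕ) := by
  set σ' := Tuple.sort (Fkey κ z π) with hσ'
  have hmono : Monotone (Fkey κ z π ∘ σ') := Tuple.monotone_sort _
  have hgm : Monotone fun r : Fin n => gfun κ z ((σ' r : Fin n) : ℕ) := by
    intro a b hab
    have h := hmono hab
    simp only [Function.comp_apply, Fkey] at h
    rcases Prod.Lex.toLex_le_toLex.1 h with h' | h'
    · exact le_of_lt h'
    · exact le_of_eq h'.1
  have hcount : ∀ j ≤ κ.length,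
      (Finset.filter (fun r' : Fin n => gfun κ z ((σ' r' : Fin n) : ℕ) < j)
        Finset.univ).card = psum κ j := by
    intro j hj
    rw [← gfun_count hκ hν hcol hrow hj]
    apply Finset.card_bij (fun r' _ => σ' r')
    · intro a ha
      simp only [Finset.mem_filter, Finset.mem_univ, true_and] at ha ⊢
      exact ha
    · intro a _ b _ h
      exact σ'.injective h
    · intro p hp
      simp only [Finset.mem_filter, Finset.mem_univ, true_and] at hp
      exact ⟨σ'.symm p, by simp [hp], by simp⟩
  have hn : 0 < n := r.pos
  have hk : 0 < κ.length := kpos hκ hn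
  have hj₀ : gfun κ z ((σ' r : Fin n) : ℕ) < κ.length := Nat.mod_lt _ hk
  have hiff : ∀ j ≤ κ.length,
      (gfun κ z ((σ' r : Fin n) : ℕ) < j ↔ (r : ℕ) < psum κ j) := by
    intro j hj
    constructor
    · intro h
      have hsub : Finset.filter (fun r' : Fin n => 0 ≤ (r' : ℕ) ∧ (r' : ℕ) < (r : ℕ) + 1)
          Finset.univ ⊆ Finset.filter
          (fun r' : Fin n => gfun κ z ((σ' r' : Fin n) : ℕ) < j) Finset.univ := by
        intro r' hr'
        simp only [Finset.mem_filter, Finset.mem_univ, true_and] at hr' ⊢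
        have : r' ≤ r := by
          rw [Fin.le_def]; omega
        exact lt_of_le_of_lt (hgm this) h
      have hcle := Finset.card_le_card hsub
      rw [card_filter_Ico (by omega : (r : ℕ) + 1 ≤ n), hcount j hj] at hcle
      omega
    · intro h
      by_contra hge
      push_neg at hge
      have hsub : Finset.filter
          (fun r' : Fin n => gfun κ z ((σ' r' : Fin n) : ℕ) < j) Finset.univ ⊆
          Finset.filter (fun r' : Fin n => 0 ≤ (r' : ℕ) ∧ (r' : ℕ) < (r : ℕ))
          Finset.univ := by
        intro r' hr'
        simp only [Finset.mem_filter, Finset.mem_univ, true_and] at hr' ⊢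
        refine ⟨Nat.zero_le _, ?_⟩
        by_contra hle
        push_neg at hle
        have hrr : r ≤ r' := by rw [Fin.le_def]; omega
        have hx : gfun κ z ((σ' r : Fin n) : ℕ) ≤ gfun κ z ((σ' r' : Fin n) : ℕ) := hgm hrr
        omega
      have hcle := Finset.card_le_card hsub
      rw [card_filter_Ico (le_of_lt r.isLt), hcount j hj] at hcle
      omega
  have h1 : psum κ (gfun κ z ((σ' r : Fin n) : ℕ)) ≤ (r : ℕ) := by
    have := (hiff _ (le_of_lt hj₀)).2
    by_contra hc
    push_neg at hc
    exact absurd (this hc) (by omega)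
  have h2 : (r : ℕ) < psum κ (gfun κ z ((σ' r : Fin n) : ℕ) + 1) :=
    (hiff _ hj₀).1 (by omega)
  exact (blk_eq h1 h2).symm

end Stmt12

namespace Stmt12

variable {n : ℕ} {κ ν : List ℕ}

lemma Fkey_injective {z : Fin ν.length → Fin κ.length → ℕ} (π : Equiv.Perm (Fin n)) :
    Function.Injective (Fkey κ z π) := by
  intro a b h
  simp only [Fkey, toLex_inj, Prod.mk.injEq] at h
  exact π.injective (Fin.ext h.2)

lemma inv_sigma_char (hκ : κ.sum = n) (hν : ν.sum = n)
    {z : Fin ν.length → Fin κ.length → ℕ}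
    (hcol : ∀ j, ∑ i, z i j = κ.get j) (hrow : ∀ i, ∑ j, z i j = ν.get i)
    (π : Equiv.Perm (Fin n)) :
    ∀ r r' : Fin n, (r : ℕ) < r' → blk κ (r : ℕ) = blk κ (r' : ℕ) →
      (((π * Tuple.sort (Fkey κ z π)) r : Fin n) : ℕ) <
        ((π * Tuple.sort (Fkey κ z π)) r' : Fin n) := by
  intro r r' hrr hbb
  set σ' := Tuple.sort (Fkey κ z π) with hσ'
  have hstrict : StrictMono (Fkey κ z π ∘ σ') :=
    (Tuple.monotone_sort _).strictMono_of_injective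
      ((Fkey_injective π).comp σ'.injective)
  have hlt : Fkey κ z π (σ' r) < Fkey κ z π (σ' r') := hstrict (by rw [Fin.lt_def]; exact hrr)
  have hg1 := blk_sorted hκ hν hcol hrow π r
  have hg2 := blk_sorted hκ hν hcol hrow π r'
  rw [← hσ'] at hg1 hg2
  simp only [Fkey] at hlt
  rcases Prod.Lex.toLex_lt_toLex.1 hlt with h' | h'
  · exfalso
    rw [hg1, hg2, hbb] at h'
    omega
  · simp only [Equiv.Perm.mul_apply]
    exact h'.2

lemma inv_tau_char (hκ : κ.sum = n) (hν : ν.sum = n)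
    {z : Fin ν.length → Fin κ.length → ℕ}
    (hcol : ∀ j, ∑ i, z i j = κ.get j) (hrow : ∀ i, ∑ j, z i j = ν.get i)
    (π : Equiv.Perm (Fin n))
    (hchar : ∀ p q : Fin n, (p : ℕ) < q → blk (rlist z) (p : ℕ) = blk (rlist z) (q : ℕ) →
      ((π p : Fin n) : ℕ) < ((π q : Fin n) : ℕ)) :
    ∀ p q : Fin n, (p : ℕ) < q → blk ν (p : ℕ) = blk ν (q : ℕ) →
      (((Tuple.sort (Fkey κ z π))⁻¹ p : Fin n) : ℕ) <
        ((Tuple.sort (Fkey κ z π))⁻¹ q : Fin n) := by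
  intro p q hpq hbn
  set σ' := Tuple.sort (Fkey κ z π) with hσ'
  have hstrict : StrictMono (Fkey κ z π ∘ σ') :=
    (Tuple.monotone_sort _).strictMono_of_injective
      ((Fkey_injective π).comp σ'.injective)
  obtain ⟨hd1, he1, hm1⟩ := blk_rlist_div (z := z) hν hrow p
  obtain ⟨hd2, he2, hm2⟩ := blk_rlist_div (z := z) hν hrow q
  rw [← hbn] at he2
  have hmono : blk (rlist z) (p : ℕ) ≤ blk (rlist z) (q : ℕ) := blk_mono _ (le_of_lt hpq)
  have hglee : gfun κ z (p : ℕ) ≤ gfun κ z (q : ℕ) := by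
    unfold gfun
    omega
  have hFlt : Fkey κ z π p < Fkey κ z π q := by
    rcases eq_or_lt_of_le hglee with he | hlt
    · have hbr : blk (rlist z) (p : ℕ) = blk (rlist z) (q : ℕ) := by
        unfold gfun at he
        omega
      exact Prod.Lex.toLex_lt_toLex.2 (Or.inr ⟨he, hchar p q hpq hbr⟩)
    · exact Prod.Lex.toLex_lt_toLex.2 (Or.inl hlt)
  have hap : σ' (σ'⁻¹ p) = p := Equiv.apply_symm_apply σ' p
  have haq : σ' (σ'⁻¹ q) = q := Equiv.apply_symm_apply σ' q
  have : (Fkey κ z π ∘ σ') (σ'⁻¹ p) < (Fkey κ z π ∘ σ') (σ'⁻¹ q) := by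
    simp only [Function.comp_apply, hap, haq]
    exact hFlt
  have := hstrict.lt_iff_lt.1 this
  rw [Fin.lt_def] at this
  exact this

lemma inv_Zmap (hκ : κ.sum = n) (hν : ν.sum = n)
    {z : Fin ν.length → Fin κ.length → ℕ}
    (hcol : ∀ j, ∑ i, z i j = κ.get j) (hrow : ∀ i, ∑ j, z i j = ν.get i)
    (π : Equiv.Perm (Fin n)) :
    Zmap n κ ν (Tuple.sort (Fkey κ z π))⁻¹ = z := by
  set σ' := Tuple.sort (Fkey κ z π) with hσ'
  have hsum : (rlist z).sum = n := rlist_sum_n hν hrow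
  funext i j
  unfold Zmap
  have hk : 0 < κ.length := lt_of_le_of_lt (Nat.zero_le _) j.isLt
  have hpred : ∀ p : Fin n,
      (blk ν (p : ℕ) = (i : ℕ) ∧ blk κ ((σ'⁻¹ p : Fin n) : ℕ) = (j : ℕ)) ↔
      blk (rlist z) (p : ℕ) = κ.length * (i : ℕ) + (j : ℕ) := by
    intro p
    obtain ⟨hd, he, hm⟩ := blk_rlist_div (z := z) hν hrow p
    have hgb : gfun κ z (p : ℕ) = blk κ ((σ'⁻¹ p : Fin n) : ℕ) := by
      have := blk_sorted hκ hν hcol hrow π (σ'⁻¹ p)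
      rw [← hσ'] at this
      rw [← this, Equiv.Perm.coe_inv, Equiv.apply_symm_apply]
    unfold gfun at hgb
    constructor
    · rintro ⟨h1, h2⟩
      rw [← h2, ← hgb, ← h1, ← hd]
      exact (Nat.div_add_mod _ _).symm
    · intro h
      have hdiv : blk (rlist z) (p : ℕ) / κ.length = (i : ℕ) := by
        rw [h, Nat.mul_add_div hk, Nat.div_eq_of_lt j.isLt, Nat.add_zero]
      have hmod : blk (rlist z) (p : ℕ) % κ.length = (j : ℕ) := by
        rw [h, Nat.mul_add_mod, Nat.mod_eq_of_lt j.isLt]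
      exact ⟨by rw [← hd, hdiv], by rw [← hgb, hmod]⟩
  rw [Finset.filter_congr (fun p _ => hpred p)]
  have hlt : κ.length * (i : ℕ) + (j : ℕ) < (rlist z).length := by
    rw [rlist_length]
    calc κ.length * (i : ℕ) + (j : ℕ) < κ.length * (i : ℕ) + κ.length := by omega
      _ = κ.length * ((i : ℕ) + 1) := by ring
      _ ≤ κ.length * ν.length := Nat.mul_le_mul_left _ i.isLt
      _ = ν.length * κ.length := Nat.mul_comm _ _
  rw [card_blk_fiber hsum hlt, rlist_getD]

lemma sort_eq_inv (hκ : κ.sum = n) (hν : ν.sum = n)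
    (σ τ : Equiv.Perm (Fin n))
    (hσ : ∀ r r' : Fin n, (r : ℕ) < r' → blk κ (r : ℕ) = blk κ (r' : ℕ) →
      ((σ r : Fin n) : ℕ) < σ r')
    (hτ : ∀ p q : Fin n, (p : ℕ) < q → blk ν (p : ℕ) = blk ν (q : ℕ) →
      ((τ p : Fin n) : ℕ) < τ q) :
    Tuple.sort (Fkey κ (Zmap n κ ν τ) (σ * τ)) = τ⁻¹ := by
  symm
  rw [Tuple.eq_sort_iff]
  have hkey : ∀ r : Fin n, Fkey κ (Zmap n κ ν τ) (σ * τ) (τ⁻¹ r) =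
      toLex (blk κ (r : ℕ), ((σ r : Fin n) : ℕ)) := by
    intro r
    unfold Fkey
    congr 1
    have hg : gfun κ (Zmap n κ ν τ) ((τ⁻¹ r : Fin n) : ℕ) = blk κ (r : ℕ) := by
      unfold gfun
      rw [blk_rlist_pair hκ hν τ hτ (τ⁻¹ r), Equiv.Perm.coe_inv, Equiv.apply_symm_apply]
      rw [Nat.mul_add_mod, Nat.mod_eq_of_lt (blk_lt_length hκ r.isLt)]
    have hπ : ((σ * τ) (τ⁻¹ r) : Fin n) = σ r := by
      simp [Equiv.Perm.mul_apply]
    rw [hg, hπ]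
  constructor
  · intro a b hab
    rcases eq_or_lt_of_le hab with he | hlt
    · rw [he]
    · have hk1 := hkey a
      have hk2 := hkey b
      simp only [Function.comp_apply]
      rw [hk1, hk2]
      have hbm : blk κ (a : ℕ) ≤ blk κ (b : ℕ) := blk_mono κ (le_of_lt hlt)
      rcases eq_or_lt_of_le hbm with hbe | hblt
      · exact le_of_lt (Prod.Lex.toLex_lt_toLex.2 (Or.inr ⟨hbe, hσ a b hlt hbe⟩))
      · exact le_of_lt (Prod.Lex.toLex_lt_toLex.2 (Or.inl hblt))
  · intro a b hab he
    exfalso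
    rw [hkey a, hkey b] at he
    simp only [toLex_inj, Prod.mk.injEq] at he
    have : a = b := σ.injective (Fin.ext he.2)
    rw [this] at hab
    exact lt_irrefl _ hab

end Stmt12

namespace Stmt12

variable {n : ℕ} {κ ν : List ℕ}

lemma descent_readM_iff (hν : ν.sum = n) {z : Fin ν.length → Fin κ.length → ℕ}
    (hrow : ∀ i, ∑ j, z i j = ν.get i) (π : Equiv.Perm (Fin n)) :
    descentSetS π ⊆ partialSumsS (readM z) ↔
      descentSetS π ⊆ partialSumsS (rlist z) := by
  have hsum : (rlist z).sum = n := rlist_sum_n hν hrow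
  have hre : readM z = (rlist z).filter fun x => x ≠ 0 := readM_eq z
  constructor
  · intro h i hi
    obtain ⟨j, hj1, hj2, hj3⟩ := h hi
    rw [hre] at hj2 hj3
    rw [take_sum] at hj3
    obtain ⟨m, hm1, hm2, hm3⟩ := filter_psum_sub (rlist z) j hj1 hj2
    exact ⟨m, hm1, hm2, by rw [take_sum, hm3, ← hj3]⟩
  · intro h i hi
    obtain ⟨m, hm1, hm2, hm3⟩ := h hi
    obtain ⟨hi1, hi2, _⟩ := hi
    rw [take_sum] at hm3
    obtain ⟨j, hj1, hj2, hj3⟩ := filter_psum_mem (rlist z) m i hm3.symm (by omega)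
      (by rw [hsum]; omega)
    refine ⟨j, hj1, by rw [hre]; exact hj2, ?_⟩
    rw [hre, take_sum, hj3]

end Stmt12

/-- Multiplication in the descent algebra of the symmetric group:
`B_κ B_ν = Σ_z B_{r(z)}`, summed over all `l × k` matrices `z` of non-negative
integers with column sums `κ_j` and row sums `ν_i`. -/
theorem stmt_12 (n : ℕ) (κ ν : List ℕ)
    (hκpos : ∀ x ∈ κ, 0 < x) (hκ : κ.sum = n)
    (hνpos : ∀ x ∈ ν, 0 < x) (hν : ν.sum = n) :
    BS n κ * BS n ν =
      ∑ᶠ z ∈ {z : Fin ν.length → Fin κ.length → ℕ |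
          (∀ j, ∑ i, z i j = κ.get j) ∧ (∀ i, ∑ j, z i j = ν.get i)},
        BS n (readM z) := by
  classical
  open Stmt12 in
  have hAfin : ∀ c : List ℕ,
      ({σ : Equiv.Perm (Fin n) | descentSetS σ ⊆ partialSumsS c}).Finite := fun c =>
    Set.toFinite _
  have hBS : ∀ c : List ℕ, BS n c =
      ∑ σ ∈ (hAfin c).toFinset, MonoidAlgebra.single σ (1 : ℚ) := fun c =>
    finsum_mem_eq_finite_toFinset_sum _ (hAfin c)
  have hZfin : ({z : Fin ν.length → Fin κ.length → ℕ |
      (∀ j, ∑ i, z i j = κ.get j) ∧ (∀ i, ∑ j, z i j = ν.get i)}).Finite := by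
    apply Set.Finite.subset (Set.finite_range
      (fun f : Fin ν.length → Fin κ.length → Fin (n + 1) => fun i j => (f i j : ℕ)))
    intro z hz
    have hb : ∀ i j, z i j < n + 1 := by
      intro i j
      have h1 : z i j ≤ ∑ i', z i' j :=
        Finset.single_le_sum (f := fun i' => z i' j) (fun _ _ => Nat.zero_le _)
          (Finset.mem_univ i)
      have h2 := hz.1 j
      have h3 : κ.get j ≤ κ.sum := List.le_sum_of_mem (List.get_mem κ j)
      omega
    exact ⟨fun i j => ⟨z i j, hb i j⟩, by funext i j; rfl⟩
  rw [finsum_mem_eq_finite_toFinset_sum _ hZfin, hBS κ, hBS ν]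
  rw [Finset.sum_mul_sum]
  rw [← Finset.sum_product' (s := (hAfin κ).toFinset) (t := (hAfin ν).toFinset)
    (f := fun σ τ => MonoidAlgebra.single σ (1 : ℚ) * MonoidAlgebra.single τ (1 : ℚ))]
  rw [Finset.sum_congr rfl fun z _ => hBS (readM z)]
  rw [← Finset.sum_sigma (hZfin.toFinset) (fun z => (hAfin (readM z)).toFinset)
    (fun x => MonoidAlgebra.single x.2 (1 : ℚ))]
  -- helper characterizations
  have charA : ∀ (c : List ℕ) (hc : c.sum = n) (σ : Equiv.Perm (Fin n)),
      σ ∈ (hAfin c).toFinset ↔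
      ∀ p q : Fin n, (p : ℕ) < q → Stmt12.blk c p = Stmt12.blk c q → (σ p : ℕ) < σ q := by
    intro c hc σ
    rw [Set.Finite.mem_toFinset, Set.mem_setOf_eq]
    exact Stmt12.descent_char hc σ
  have charP : ∀ (z : Fin ν.length → Fin κ.length → ℕ)
      (hrow : ∀ i, ∑ j, z i j = ν.get i) (π : Equiv.Perm (Fin n)),
      π ∈ (hAfin (readM z)).toFinset ↔
      ∀ p q : Fin n, (p : ℕ) < q → Stmt12.blk (Stmt12.rlist z) p = Stmt12.blk (Stmt12.rlist z) q →
        (π p : ℕ) < π q := by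
    intro z hrow π
    rw [Set.Finite.mem_toFinset, Set.mem_setOf_eq]
    rw [Stmt12.descent_readM_iff hν hrow π]
    exact Stmt12.descent_char (Stmt12.rlist_sum_n hν hrow) π
  apply Finset.sum_nbij'
    (i := fun x : Equiv.Perm (Fin n) × Equiv.Perm (Fin n) =>
      (⟨Stmt12.Zmap n κ ν x.2, x.1 * x.2⟩ :
        Σ _ : Fin ν.length → Fin κ.length → ℕ, Equiv.Perm (Fin n)))
    (j := fun y : Σ _ : Fin ν.length → Fin κ.length → ℕ, Equiv.Perm (Fin n) =>
      (y.2 * Tuple.sort (Stmt12.Fkey κ y.1 y.2), (Tuple.sort (Stmt12.Fkey κ y.1 y.2))⁻¹))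
  · -- hi
    intro x hx
    rw [Finset.mem_product] at hx
    have hσ := (charA κ hκ x.1).1 hx.1
    have hτ := (charA ν hν x.2).1 hx.2
    rw [Finset.mem_sigma]
    constructor
    · rw [Set.Finite.mem_toFinset, Set.mem_setOf_eq]
      exact ⟨fun j => Stmt12.Zmap_col hκ hν x.2 j, fun i => Stmt12.Zmap_row hκ hν x.2 i⟩
    · rw [charP (Stmt12.Zmap n κ ν x.2) (fun i => Stmt12.Zmap_row hκ hν x.2 i)]
      intro p q hpq hbeq
      have e1 := Stmt12.blk_rlist_pair hκ hν x.2 hτ p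
      have e2 := Stmt12.blk_rlist_pair hκ hν x.2 hτ q
      have hb1 : Stmt12.blk κ ((x.2 p : Fin n) : ℕ) < κ.length :=
        Stmt12.blk_lt_length hκ (x.2 p).isLt
      have hb2 : Stmt12.blk κ ((x.2 q : Fin n) : ℕ) < κ.length :=
        Stmt12.blk_lt_length hκ (x.2 q).isLt
      have hmono : Stmt12.blk ν (p : ℕ) ≤ Stmt12.blk ν (q : ℕ) :=
        Stmt12.blk_mono ν (le_of_lt hpq)
      have haa : Stmt12.blk ν (p : ℕ) = Stmt12.blk ν (q : ℕ) := by
        rcases eq_or_lt_of_le hmono with h | h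
        · exact h
        · exfalso
          have hmul : κ.length * (Stmt12.blk ν (p : ℕ) + 1) ≤
              κ.length * Stmt12.blk ν (q : ℕ) := Nat.mul_le_mul_left _ (by omega)
          have hring : κ.length * (Stmt12.blk ν (p : ℕ) + 1) =
              κ.length * Stmt12.blk ν (p : ℕ) + κ.length := by ring
          omega
      have hbb : Stmt12.blk κ ((x.2 p : Fin n) : ℕ) = Stmt12.blk κ ((x.2 q : Fin n) : ℕ) := by
        rw [haa] at e1
        omega
      have hτlt := hτ p q hpq haa
      have := hσ (x.2 p) (x.2 q) hτlt hbb
      simpa [Equiv.Perm.mul_apply] using this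
  · -- hj
    intro y hy
    rw [Finset.mem_sigma] at hy
    obtain ⟨hz, hπ⟩ := hy
    rw [Set.Finite.mem_toFinset, Set.mem_setOf_eq] at hz
    obtain ⟨hcol, hrow⟩ := hz
    have hchar := (charP y.1 hrow y.2).1 hπ
    rw [Finset.mem_product]
    constructor
    · rw [charA κ hκ]
      exact Stmt12.inv_sigma_char hκ hν hcol hrow y.2
    · rw [charA ν hν]
      exact Stmt12.inv_tau_char hκ hν hcol hrow y.2 hchar
  · -- left inverse
    intro x hx
    rw [Finset.mem_product] at hx
    have hσ := (charA κ hκ x.1).1 hx.1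
    have hτ := (charA ν hν x.2).1 hx.2
    have hseq := Stmt12.sort_eq_inv hκ hν x.1 x.2 hσ hτ
    have h1 : x.1 * x.2 * Tuple.sort (Stmt12.Fkey κ (Stmt12.Zmap n κ ν x.2) (x.1 * x.2)) = x.1 := by
      rw [hseq, mul_inv_cancel_right]
    have h2 : (Tuple.sort (Stmt12.Fkey κ (Stmt12.Zmap n κ ν x.2) (x.1 * x.2)))⁻¹ = x.2 := by
      rw [hseq, inv_inv]
    exact Prod.ext h1 h2
  · -- right inverse
    intro y hy
    rw [Finset.mem_sigma] at hy
    obtain ⟨hz, hπ⟩ := hy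
    rw [Set.Finite.mem_toFinset, Set.mem_setOf_eq] at hz
    obtain ⟨hcol, hrow⟩ := hz
    have h1 : Stmt12.Zmap n κ ν (Tuple.sort (Stmt12.Fkey κ y.1 y.2))⁻¹ = y.1 :=
      Stmt12.inv_Zmap hκ hν hcol hrow y.2
    have h2 : y.2 * Tuple.sort (Stmt12.Fkey κ y.1 y.2) *
        (Tuple.sort (Stmt12.Fkey κ y.1 y.2))⁻¹ = y.2 := mul_inv_cancel_right _ _
    exact Sigma.ext h1 (heq_of_eq h2)
  · -- values
    intro x hx
    rw [MonoidAlgebra.single_mul_single, one_mul]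
end
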